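/- arXiv:math/0607150 — 6 statements merged into one kernel-verified Lean document; each statement's English description precedes it below -/
import Mathlib

section
/- Let 0 < c < 1, G > 0, and let γ : ℤ → ℝ be an even function with γ(τ)/(G τ^{c−1}) → 1 as τ → +∞. Let k be a kernel satisfying Assumption B which is in addition Riemann integrable on [−1,1]. Then, for any sequence of positive integers M → ∞, M^{−c} Σ_{τ=−M}^{M} k(τ/M) γ(τ) → G ∫_{−1}^{1} k(υ)|υ|^{c−1} dυ, and this limit is finite. -/
open MeasureTheory Filter Finset

/-- Assumption B: the kernel is symmetric, nonnegative, bounded, measurable,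
integrates to one over `[-1,1]`, and vanishes outside `[-1,1]`. -/
def AssumptionB (kern : ℝ → ℝ) : Prop :=
  (∀ v, kern (-v) = kern v) ∧ (∀ v, 0 ≤ kern v) ∧ (∃ B, ∀ v, kern v ≤ B) ∧
    Measurable kern ∧ (∫ v in (-1 : ℝ)..1, kern v) = 1 ∧ ∀ v : ℝ, 1 < |v| → kern v = 0

private lemma sum_Icc_int_eq_range (f : ℤ → ℝ) (m : ℕ) :
    ∑ τ ∈ Finset.Icc (1:ℤ) (m:ℤ), f τ = ∑ i ∈ Finset.range m, f ((i:ℤ)+1) := by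
  induction m with
  | zero => simp
  | succ m ih =>
      rw [Finset.sum_range_succ, ← ih]
      have h : Finset.Icc (1:ℤ) ((m+1 : ℕ):ℤ) = insert ((m:ℤ)+1) (Finset.Icc 1 (m:ℤ)) := by
        ext x; simp only [Finset.mem_Icc, Finset.mem_insert]; push_cast; omega
      rw [h, Finset.sum_insert (by simp only [Finset.mem_Icc]; omega)]
      push_cast
      ring

private lemma sym_sum (f : ℤ → ℝ) (hf : ∀ τ, f (-τ) = f τ) (m : ℕ) :
    ∑ τ ∈ Finset.Icc (-(m:ℤ)) (m:ℤ), f τ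
      = f 0 + 2 * ∑ i ∈ Finset.range m, f ((i:ℤ)+1) := by
  have h1 : Finset.Icc (-(m:ℤ)) (m:ℤ) = Finset.Icc (-(m:ℤ)) (-1) ∪ Finset.Icc 0 (m:ℤ) := by
    ext x; simp only [Finset.mem_Icc, Finset.mem_union]; omega
  have hdisj : Disjoint (Finset.Icc (-(m:ℤ)) (-1)) (Finset.Icc (0:ℤ) (m:ℤ)) := by
    rw [Finset.disjoint_left]; intro x hx hx'
    simp only [Finset.mem_Icc] at hx hx'; omega
  have himg : Finset.Icc (-(m:ℤ)) (-1) = (Finset.Icc (1:ℤ) (m:ℤ)).image (fun x => -x) := by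
    ext x
    simp only [Finset.mem_Icc, Finset.mem_image]
    constructor
    · intro hx; exact ⟨-x, ⟨by omega, by omega⟩, by omega⟩
    · rintro ⟨y, hy, rfl⟩; omega
  have h2 : ∑ τ ∈ Finset.Icc (-(m:ℤ)) (-1), f τ = ∑ τ ∈ Finset.Icc (1:ℤ) (m:ℤ), f τ := by
    rw [himg, Finset.sum_image (by intro x _ y _ h; simpa using h)]
    exact Finset.sum_congr rfl fun x _ => hf x
  have h3 : Finset.Icc (0:ℤ) (m:ℤ) = insert 0 (Finset.Icc 1 (m:ℤ)) := by
    ext x; simp only [Finset.mem_Icc, Finset.mem_insert]; omega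
  rw [h1, Finset.sum_union hdisj, h2, h3,
      Finset.sum_insert (by simp only [Finset.mem_Icc]; omega), sum_Icc_int_eq_range]
  ring

private lemma step_integral (m : ℕ) (hm : 0 < m) (h : ℤ → ℝ) :
    ∫ v in Set.Ioc (0:ℝ) 1, h ⌈(m:ℝ) * v⌉
      = (m:ℝ)⁻¹ * ∑ i ∈ Finset.range m, h ((i:ℤ)+1) := by
  have hm' : (0:ℝ) < m := by exact_mod_cast hm
  set a : ℕ → ℝ := fun i => i / m with ha
  have hd : ∀ i : ℕ, a i ≤ a (i+1) := by
    intro i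
    simp only [ha]
    have hle : (i:ℝ) ≤ ((i+1:ℕ):ℝ) := by push_cast; linarith
    exact (div_le_div_iff_of_pos_right hm').mpr hle
  have hEq : ∀ i : ℕ, Set.EqOn (fun v => h ⌈(m:ℝ)*v⌉) (fun _ => h ((i:ℤ)+1))
      (Set.Ioc (a i) (a (i+1))) := by
    intro i v hv
    have h1 : (i:ℝ) < v * m := (div_lt_iff₀ hm').mp hv.1
    have h2 : v * m ≤ (i:ℝ) + 1 := by
      have := (le_div_iff₀ hm').mp hv.2
      push_cast at this
      linarith
    have hceil : ⌈(m:ℝ)*v⌉ = (i:ℤ)+1 := by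
      rw [Int.ceil_eq_iff]
      constructor
      · push_cast; rw [mul_comm]; linarith
      · push_cast; rw [mul_comm]; linarith
    simp only [hceil]
  have hii : ∀ i : ℕ, IntervalIntegrable (fun v => h ⌈(m:ℝ)*v⌉) volume (a i) (a (i+1)) := by
    intro i
    rw [intervalIntegrable_iff_integrableOn_Ioc_of_le (hd i)]
    exact (integrableOn_const measure_Ioc_lt_top.ne).congr_fun
      (hEq i).symm measurableSet_Ioc
  have hlen : ∀ i : ℕ, a (i+1) - a i = (m:ℝ)⁻¹ := by
    intro i
    simp only [ha]
    push_cast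
    field_simp
    ring
  have hval : ∀ i ∈ Finset.range m, (∫ v in a i..a (i+1), h ⌈(m:ℝ)*v⌉)
      = (m:ℝ)⁻¹ * h ((i:ℤ)+1) := by
    intro i _
    rw [intervalIntegral.integral_of_le (hd i),
        setIntegral_congr_fun measurableSet_Ioc (hEq i), setIntegral_const,
        Real.volume_real_Ioc_of_le (hd i),
        hlen i, smul_eq_mul]
  have h0 : a 0 = 0 := by simp [ha]
  have h1 : a m = 1 := by
    simp only [ha]
    field_simp
  calc ∫ v in Set.Ioc (0:ℝ) 1, h ⌈(m:ℝ) * v⌉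
      = ∫ v in (a 0)..(a m), h ⌈(m:ℝ) * v⌉ := by
        rw [h0, h1, intervalIntegral.integral_of_le zero_le_one]
    _ = ∑ i ∈ Finset.range m, ∫ v in a i..a (i+1), h ⌈(m:ℝ)*v⌉ :=
        (intervalIntegral.sum_integral_adjacent_intervals (fun i _ => hii i)).symm
    _ = ∑ i ∈ Finset.range m, (m:ℝ)⁻¹ * h ((i:ℤ)+1) := Finset.sum_congr rfl hval
    _ = (m:ℝ)⁻¹ * ∑ i ∈ Finset.range m, h ((i:ℤ)+1) := by rw [Finset.mul_sum]

/-- the deterministic dominated-convergence step of Theorem 1: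
for an even `γ : ℤ → ℝ` with `γ(τ) ≃ G τ^{c-1}` as `τ → ∞` (`0 < c < 1`, `G > 0`)
and a Riemann-integrable kernel satisfying Assumption B (Riemann integrability of the
bounded kernel is expressed via Lebesgue's criterion: a.e. continuity on `[-1,1]`),
`M^{-c} Σ_{τ=-M}^{M} k(τ/M) γ(τ) → G ∫_{-1}^{1} k(υ)|υ|^{c-1} dυ`. -/
theorem weighted_sum_limit (c G : ℝ) (hc0 : 0 < c) (hc1 : c < 1) (hG : 0 < G)
    (γ : ℤ → ℝ) (hγeven : ∀ τ : ℤ, γ (-τ) = γ τ)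
    (hγ : Tendsto (fun τ : ℕ => γ τ / (G * (τ : ℝ) ^ (c - 1))) atTop (nhds 1))
    (kern : ℝ → ℝ) (hB : AssumptionB kern)
    (hRiemann : ∀ᵐ v ∂(volume.restrict (Set.Icc (-1 : ℝ) 1)), ContinuousAt kern v)
    (M : ℕ → ℕ) (hMpos : ∀ n, 0 < M n) (hM : Tendsto M atTop atTop) :
    Tendsto (fun n => (M n : ℝ) ^ (-c) *
        ∑ τ ∈ Finset.Icc (-(M n : ℤ)) (M n : ℤ), kern ((τ : ℝ) / (M n : ℝ)) * γ τ)
      atTop (nhds (G * ∫ v in (-1 : ℝ)..1, kern v * |v| ^ (c - 1))) := by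
  obtain ⟨hsymm, hpos, ⟨B, hBbd⟩, hmeas, -, -⟩ := hB
  have hB0 : 0 ≤ B := le_trans (hpos 0) (hBbd 0)
  have hc1' : c - 1 ≤ 0 := by linarith
  -- rpow algebra helper
  have key : ∀ m : ℝ, 0 < m → ∀ t : ℝ, 0 ≤ t → m ^ (1-c) * t ^ (c-1) = (t/m) ^ (c-1) := by
    intro m hm t ht
    rw [Real.div_rpow ht hm.le, show (1-c : ℝ) = -(c-1) by ring, Real.rpow_neg hm.le,
        div_eq_mul_inv]
    ring
  -- uniform polynomial bound on γ
  obtain ⟨C, hC0, hC⟩ : ∃ C : ℝ, 0 ≤ C ∧ ∀ τ : ℤ, 1 ≤ τ → |γ τ| ≤ C * (τ:ℝ) ^ (c-1) := by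
    obtain ⟨N, hN⟩ := Metric.tendsto_atTop.mp hγ 1 one_pos
    set K : ℝ := ∑ t ∈ Finset.range (N+1), |γ t| * (t:ℝ) ^ (1-c) with hK
    have hKnonneg : 0 ≤ K := Finset.sum_nonneg fun t _ => by positivity
    refine ⟨K + 2*G, by positivity, ?_⟩
    intro τ hτ
    have hτ0 : (0:ℝ) < (τ:ℝ) := by exact_mod_cast hτ
    have hτpow : (0:ℝ) < (τ:ℝ) ^ (c-1) := Real.rpow_pos_of_pos hτ0 _
    set t : ℕ := τ.toNat with ht
    have htτ : (t : ℤ) = τ := Int.toNat_of_nonneg (by omega)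
    have htR : ((t:ℕ) : ℝ) = (τ:ℝ) := by exact_mod_cast congrArg (Int.cast : ℤ → ℝ) htτ
    by_cases hcase : N ≤ t
    · have hd := hN t hcase
      rw [Real.dist_eq] at hd
      have hne : G * (t:ℝ) ^ (c-1) ≠ 0 := by
        rw [htR]; positivity
      have habs : |γ (t:ℤ) / (G * (t:ℝ) ^ (c-1))| ≤ 2 := by
        calc |γ (t:ℤ) / (G * (t:ℝ) ^ (c-1))|
            ≤ |γ (t:ℤ) / (G * (t:ℝ) ^ (c-1)) - 1| + 1 := by
              have := abs_sub_abs_le_abs_sub (γ (t:ℤ) / (G * (t:ℝ) ^ (c-1))) 1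
              simp only [abs_one] at this; linarith
          _ ≤ 2 := by linarith
      have : |γ (t:ℤ)| ≤ 2 * (G * (t:ℝ) ^ (c-1)) := by
        have h1 : |γ (t:ℤ)| = |γ (t:ℤ) / (G * (t:ℝ) ^ (c-1))| * (G * (t:ℝ) ^ (c-1)) := by
          rw [abs_div, abs_of_pos (by rw [htR]; positivity : (0:ℝ) < G * (t:ℝ) ^ (c-1))]
          rw [div_mul_cancel₀ _ hne]
        rw [h1]
        apply mul_le_mul_of_nonneg_right habs (by rw [htR]; positivity)
      rw [htτ, htR] at this
      calc |γ τ| ≤ 2 * (G * (τ:ℝ) ^ (c-1)) := this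
        _ ≤ (K + 2*G) * (τ:ℝ) ^ (c-1) := by nlinarith
    · push_neg at hcase
      have htmem : t ∈ Finset.range (N+1) := Finset.mem_range.mpr (by omega)
      have hsingle : |γ (t:ℤ)| * (t:ℝ) ^ (1-c) ≤ K :=
        Finset.single_le_sum (f := fun u : ℕ => |γ (u:ℤ)| * (u:ℝ) ^ (1-c))
          (fun u _ => by positivity) htmem
      have hprod : ((t:ℕ):ℝ) ^ (1-c) * ((t:ℕ):ℝ) ^ (c-1) = 1 := by
        rw [← Real.rpow_add (by rw [htR]; exact hτ0)]
        norm_num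
      have : |γ (t:ℤ)| ≤ K * ((t:ℕ):ℝ) ^ (c-1) := by
        calc |γ (t:ℤ)| = |γ (t:ℤ)| * (((t:ℕ):ℝ) ^ (1-c) * ((t:ℕ):ℝ) ^ (c-1)) := by
              rw [hprod, mul_one]
          _ = (|γ (t:ℤ)| * ((t:ℕ):ℝ) ^ (1-c)) * ((t:ℕ):ℝ) ^ (c-1) := by ring
          _ ≤ K * ((t:ℕ):ℝ) ^ (c-1) := by
              apply mul_le_mul_of_nonneg_right hsingle (by positivity)
      rw [htτ, htR] at this
      calc |γ τ| ≤ K * (τ:ℝ) ^ (c-1) := this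
        _ ≤ (K + 2*G) * (τ:ℝ) ^ (c-1) := by nlinarith
  -- the step functions
  set μ := volume.restrict (Set.Ioc (0:ℝ) 1) with hμ
  set g : ℕ → ℝ → ℝ := fun n v =>
    (M n : ℝ) ^ (1-c) * (kern ((⌈(M n : ℝ)*v⌉ : ℝ)/(M n:ℝ)) * γ ⌈(M n:ℝ)*v⌉) with hg
  have hMR : Tendsto (fun n => (M n : ℝ)) atTop atTop :=
    tendsto_natCast_atTop_atTop.comp hM
  have hMpos' : ∀ n, (0:ℝ) < (M n : ℝ) := fun n => by exact_mod_cast hMpos n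
  -- measurability
  have hgmeas : ∀ n, AEStronglyMeasurable (g n) μ := by
    intro n
    apply Measurable.aestronglyMeasurable
    apply Measurable.const_mul
    have hceil : Measurable fun v : ℝ => ⌈(M n : ℝ) * v⌉ :=
      Int.measurable_ceil.comp (measurable_id.const_mul _)
    exact ((measurable_of_countable (fun z : ℤ => kern ((z:ℝ)/(M n:ℝ)))).comp hceil).mul
      ((measurable_of_countable (fun z : ℤ => γ z)).comp hceil)
  -- dominating function
  have hrpow_int : IntegrableOn (fun v : ℝ => v ^ (c-1)) (Set.Ioc 0 1) volume :=
    (intervalIntegrable_iff_integrableOn_Ioc_of_le zero_le_one).mp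
      (intervalIntegral.intervalIntegrable_rpow' (by linarith))
  have hbound_int : Integrable (fun v : ℝ => B * C * v ^ (c-1)) μ :=
    (hrpow_int.const_mul (B*C))
  have h_bound : ∀ n, ∀ᵐ v ∂μ, ‖g n v‖ ≤ B * C * v ^ (c-1) := by
    intro n
    rw [hμ]
    filter_upwards [ae_restrict_mem measurableSet_Ioc] with v hv
    set m : ℝ := (M n : ℝ) with hmdef
    have hm' : (0:ℝ) < m := hMpos' n
    set τ : ℤ := ⌈m * v⌉ with hτdef
    have hτ1 : 1 ≤ τ := Int.ceil_pos.mpr (mul_pos hm' hv.1)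
    have hτR : (0:ℝ) < (τ:ℝ) := by exact_mod_cast hτ1
    have hvle : v ≤ (τ:ℝ)/m := by
      rw [le_div_iff₀ hm', mul_comm]
      exact Int.le_ceil _
    have hnorm : ‖g n v‖ = m ^ (1-c) * (kern ((τ:ℝ)/m) * |γ τ|) := by
      rw [hg]
      simp only [Real.norm_eq_abs, abs_mul]
      rw [abs_of_nonneg (Real.rpow_nonneg hm'.le _), abs_of_nonneg (hpos _)]
    rw [hnorm]
    calc m ^ (1-c) * (kern ((τ:ℝ)/m) * |γ τ|)
        ≤ m ^ (1-c) * (B * (C * (τ:ℝ) ^ (c-1))) := by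
          apply mul_le_mul_of_nonneg_left _ (Real.rpow_nonneg hm'.le _)
          exact mul_le_mul (hBbd _) (hC τ hτ1) (abs_nonneg _) hB0
      _ = B * C * (m ^ (1-c) * (τ:ℝ) ^ (c-1)) := by ring
      _ = B * C * ((τ:ℝ)/m) ^ (c-1) := by rw [key m hm' _ hτR.le]
      _ ≤ B * C * v ^ (c-1) := by
          apply mul_le_mul_of_nonneg_left _ (by positivity)
          exact Real.rpow_le_rpow_of_nonpos hv.1 hvle hc1'
  -- pointwise limit
  have h_lim : ∀ᵐ v ∂μ, Tendsto (fun n => g n v) atTop (nhds (G * (kern v * v ^ (c-1)))) := by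
    have hsub : Set.Ioc (0:ℝ) 1 ⊆ Set.Icc (-1:ℝ) 1 := fun x hx =>
      ⟨by linarith [hx.1], hx.2⟩
    have hcont' : ∀ᵐ v ∂μ, ContinuousAt kern v :=
      ae_restrict_of_ae_restrict_of_subset hsub hRiemann
    rw [hμ] at hcont' ⊢
    filter_upwards [hcont', ae_restrict_mem measurableSet_Ioc] with v hcont hv
    set τ : ℕ → ℤ := fun n => ⌈(M n : ℝ) * v⌉ with hτdef
    have hτpos : ∀ n, 0 < τ n := fun n => Int.ceil_pos.mpr (mul_pos (hMpos' n) hv.1)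
    have hτR : ∀ n, (0:ℝ) < ((τ n):ℝ) := fun n => by exact_mod_cast hτpos n
    set r : ℕ → ℝ := fun n => ((τ n : ℤ):ℝ) / (M n : ℝ) with hrdef
    have hrlow : ∀ n, v ≤ r n := by
      intro n
      rw [hrdef]
      rw [le_div_iff₀ (hMpos' n), mul_comm]
      exact Int.le_ceil _
    have hrhigh : ∀ n, r n ≤ v + (M n : ℝ)⁻¹ := by
      intro n
      rw [hrdef]
      rw [div_le_iff₀ (hMpos' n)]
      have := Int.ceil_lt_add_one ((M n : ℝ) * v)
      calc ((τ n : ℤ):ℝ) ≤ (M n : ℝ) * v + 1 := by exact this.le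
        _ = (v + (M n:ℝ)⁻¹) * (M n : ℝ) := by
              rw [add_mul, inv_mul_cancel₀ (hMpos' n).ne']; ring
    have hr : Tendsto r atTop (nhds v) := by
      have hup : Tendsto (fun n => v + (M n : ℝ)⁻¹) atTop (nhds (v + 0)) :=
        tendsto_const_nhds.add (tendsto_inv_atTop_zero.comp hMR)
      rw [add_zero] at hup
      exact tendsto_of_tendsto_of_tendsto_of_le_of_le tendsto_const_nhds hup hrlow hrhigh
    have hτtop : Tendsto (fun n => (τ n).toNat) atTop atTop := by
      rw [tendsto_atTop]
      intro b
      have hMv : Tendsto (fun n => (M n : ℝ) * v) atTop atTop :=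
        hMR.atTop_mul_const hv.1
      filter_upwards [hMv.eventually_ge_atTop (b:ℝ)] with n hn
      have h1 : (b:ℝ) ≤ ((τ n : ℤ):ℝ) := le_trans hn (Int.le_ceil _)
      have h2 : (((τ n).toNat : ℕ):ℝ) = ((τ n : ℤ):ℝ) := by
        exact_mod_cast congrArg (Int.cast : ℤ → ℝ)
          (Int.toNat_of_nonneg (hτpos n).le)
      rw [← h2] at h1
      exact_mod_cast h1
    have hratio : Tendsto (fun n => γ (τ n) / (G * ((τ n : ℤ):ℝ) ^ (c-1))) atTop (nhds 1) := by
      have := hγ.comp hτtop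
      apply this.congr
      intro n
      simp only [Function.comp_apply]
      have h2 : (((τ n).toNat : ℕ):ℝ) = ((τ n : ℤ):ℝ) :=
        mod_cast congrArg (Int.cast : ℤ → ℝ) (Int.toNat_of_nonneg (hτpos n).le)
      rw [Int.toNat_of_nonneg (hτpos n).le, h2]
    have hrpow : Tendsto (fun n => (r n) ^ (c-1)) atTop (nhds (v ^ (c-1))) :=
      ((Real.continuousAt_rpow_const v (c-1) (Or.inl (ne_of_gt hv.1))).tendsto.comp hr)
    have hprod : Tendsto
        (fun n => kern (r n) * (γ (τ n) / (G * ((τ n : ℤ):ℝ) ^ (c-1)) * (G * (r n) ^ (c-1))))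
        atTop (nhds (kern v * (1 * (G * v ^ (c-1))))) :=
      (hcont.tendsto.comp hr).mul (hratio.mul (hrpow.const_mul G))
    rw [show kern v * (1 * (G * v ^ (c-1))) = G * (kern v * v ^ (c-1)) by ring] at hprod
    apply hprod.congr
    intro n
    have hne : G * ((τ n : ℤ):ℝ) ^ (c-1) ≠ 0 :=
      ne_of_gt (mul_pos hG (Real.rpow_pos_of_pos (hτR n) _))
    have hrpow_eq : (r n) ^ (c-1) = (M n : ℝ) ^ (1-c) * ((τ n : ℤ):ℝ) ^ (c-1) := by
      rw [hrdef, ← key (M n : ℝ) (hMpos' n) _ (hτR n).le]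
    rw [hg]
    simp only
    rw [hrpow_eq]
    show kern (r n) * (γ (τ n) / (G * ((τ n : ℤ):ℝ) ^ (c-1)) * (G * ((M n : ℝ) ^ (1-c) * ((τ n : ℤ):ℝ) ^ (c-1)))) = (M n : ℝ) ^ (1-c) * (kern (r n) * γ (τ n))
    rw [div_mul_eq_mul_div, mul_div_assoc', div_eq_iff hne]
    ring
  -- dominated convergence
  have hDCT : Tendsto (fun n => ∫ v, g n v ∂μ) atTop
      (nhds (∫ v, G * (kern v * v ^ (c-1)) ∂μ)) :=
    tendsto_integral_of_dominated_convergence _ hgmeas hbound_int h_bound h_lim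
  -- identify the integral of g n with the positive-τ part of the sum
  have hEqn : ∀ n, (M n:ℝ) ^ (-c) *
      ∑ τ ∈ Finset.Icc (-(M n : ℤ)) (M n : ℤ), kern ((τ : ℝ) / (M n : ℝ)) * γ τ
      = (M n:ℝ) ^ (-c) * (kern 0 * γ 0) + 2 * ∫ v, g n v ∂μ := by
    intro n
    have hm' : (0:ℝ) < (M n : ℝ) := hMpos' n
    have heven : ∀ τ : ℤ, kern ((-τ : ℤ) / (M n : ℝ)) * γ (-τ)
        = kern ((τ : ℤ) / (M n : ℝ)) * γ τ := by
      intro τ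
      rw [hγeven]
      congr 1
      push_cast
      rw [neg_div, hsymm]
    have hstep : ∫ v, g n v ∂μ
        = (M n:ℝ)⁻¹ * ∑ i ∈ Finset.range (M n),
            (M n : ℝ) ^ (1-c) * (kern ((((i:ℤ)+1 : ℤ):ℝ)/(M n:ℝ)) * γ ((i:ℤ)+1)) := by
      rw [hμ, hg]
      exact step_integral (M n) (hMpos n)
        (fun τ : ℤ => (M n : ℝ) ^ (1-c) * (kern ((τ:ℝ)/(M n:ℝ)) * γ τ))
    have hsum := sym_sum (fun τ : ℤ => kern ((τ : ℝ) / (M n : ℝ)) * γ τ)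
      (fun τ => heven τ) (M n)
    rw [hsum, hstep, ← Finset.mul_sum]
    have hmc : (M n:ℝ)⁻¹ * (M n:ℝ) ^ (1-c) = (M n:ℝ) ^ (-c) := by
      rw [← Real.rpow_neg_one (M n : ℝ), ← Real.rpow_add hm']
      ring_nf
    simp only [Int.cast_zero, zero_div]
    rw [mul_add]
    congr 1
    rw [← hmc]
    ring
  -- limit of the middle term
  have hmid : Tendsto (fun n => (M n:ℝ) ^ (-c) * (kern 0 * γ 0)) atTop (nhds 0) := by
    have h1 : Tendsto (fun n => (M n:ℝ) ^ (-c)) atTop (nhds 0) :=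
      (tendsto_rpow_neg_atTop hc0).comp hMR
    simpa using h1.mul_const (kern 0 * γ 0)
  -- identify the limit value
  have hup : IntervalIntegrable (fun v => kern v * |v| ^ (c-1)) volume 0 1 := by
    rw [intervalIntegrable_iff_integrableOn_Ioc_of_le zero_le_one]
    apply Integrable.mono' (g := fun v : ℝ => B * v ^ (c-1)) (hrpow_int.const_mul B)
    · exact ((hmeas.mul ((measurable_abs).pow measurable_const)).aestronglyMeasurable).restrict
    · filter_upwards [ae_restrict_mem measurableSet_Ioc] with v hv
      rw [Real.norm_eq_abs, abs_mul, abs_of_nonneg (hpos v),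
          abs_of_nonneg (Real.rpow_nonneg (abs_nonneg v) _), abs_of_pos hv.1]
      exact mul_le_mul_of_nonneg_right (hBbd v) (Real.rpow_nonneg hv.1.le _)
  have hdown : IntervalIntegrable (fun v => kern v * |v| ^ (c-1)) volume (-1) 0 := by
    have h1 := (IntervalIntegrable.iff_comp_neg enorm_ne_top).mp hup
    simp only [hsymm, abs_neg, neg_zero] at h1
    exact h1.symm
  have hval : G * ∫ v in (-1 : ℝ)..1, kern v * |v| ^ (c - 1)
      = 0 + 2 * ∫ v, G * (kern v * v ^ (c-1)) ∂μ := by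
    have hsplit : (∫ v in (-1 : ℝ)..1, kern v * |v| ^ (c - 1))
        = 2 * ∫ v in (0:ℝ)..1, kern v * |v| ^ (c-1) := by
      rw [← intervalIntegral.integral_add_adjacent_intervals hdown hup]
      have hneg : (∫ v in (-1:ℝ)..0, kern v * |v| ^ (c-1))
          = ∫ v in (0:ℝ)..1, kern v * |v| ^ (c-1) := by
        have h3 : (∫ x in (0:ℝ)..1, kern (-x) * |(-x)| ^ (c-1))
            = ∫ x in (-1:ℝ)..0, kern x * |x| ^ (c-1) := by
          simpa using intervalIntegral.integral_comp_neg (a := 0) (b := 1)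
            (fun v => kern v * |v| ^ (c-1))
        rw [← h3]
        simp only [hsymm, abs_neg]
      rw [hneg]; ring
    have habs : (∫ v in (0:ℝ)..1, kern v * |v| ^ (c-1))
        = ∫ v in (0:ℝ)..1, kern v * v ^ (c-1) := by
      apply intervalIntegral.integral_congr
      intro v hv
      rw [Set.uIcc_of_le zero_le_one] at hv
      show kern v * |v| ^ (c-1) = kern v * v ^ (c-1)
      rw [abs_of_nonneg hv.1]
    have hIoc : (∫ v in (0:ℝ)..1, kern v * v ^ (c-1))
        = ∫ v, kern v * v ^ (c-1) ∂μ := by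
      rw [hμ, intervalIntegral.integral_of_le zero_le_one]
    rw [hsplit, habs, hIoc, integral_const_mul]
    ring
  rw [hval]
  apply Tendsto.congr (fun n => (hEqn n).symm)
  exact hmid.add (hDCT.const_mul 2)
end

section
/- Let 0 < d_a < 1/2, 0 < d_b < 1/2 and C > 0. Let γ₁, γ₂ : ℤ → ℝ satisfy |γ₁(τ)| ≤ C(|τ|+1)^{2d_a−1} and |γ₂(τ)| ≤ C(|τ|+1)^{2d_b−1} for all τ. Let M = M(n) be a sequence of positive integers with M → ∞, M ≤ n and M/n → 0 as n → ∞. Then Σ_{p=−M}^{M} Σ_{q=−M}^{M} n^{−1} | Σ_{r=−n+1}^{n−1} (1 − |r|/n) γ₁(r) γ₂(r+q−p) | = o(M^{2d_a+2d_b}) as n → ∞. -/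
open Filter Finset

lemma sum_Icc_int (f : ℤ → ℝ) (a b : ℤ) :
    ∑ k ∈ Finset.Icc a b, f k = ∑ j ∈ Finset.range (b + 1 - a).toNat, f (a + j) := by
  rcases le_or_gt a (b + 1) with h | h
  · apply Finset.sum_nbij' (i := fun k => (k - a).toNat) (j := fun j => a + (j : ℤ))
    · intro k hk; simp only [Finset.mem_Icc] at hk; simp only [Finset.mem_range]; omega
    · intro j hj; simp only [Finset.mem_range] at hj; simp only [Finset.mem_Icc]; omega
    · intro k hk; simp only [Finset.mem_Icc] at hk; omega
    · intro j hj; simp only [Finset.mem_range] at hj; omega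
    · intro k hk; simp only [Finset.mem_Icc] at hk
      congr 1; omega
  · rw [Finset.Icc_eq_empty (by omega), Finset.sum_empty]
    have : (b + 1 - a).toNat = 0 := by omega
    rw [this]; simp

lemma window_sum (h : ℕ → ℝ) (h0 : ∀ j, 0 ≤ h j) (hm : ∀ ⦃i j : ℕ⦄, i ≤ j → h j ≤ h i)
    (e : ℤ) (L : ℕ) :
    ∑ j ∈ Finset.range L, h (e + j).natAbs ≤ 2 * ∑ j ∈ Finset.range L, h j := by
  have hsum0 : (0:ℝ) ≤ ∑ j ∈ Finset.range L, h j := Finset.sum_nonneg fun j _ => h0 j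
  rcases le_or_gt 0 e with he | he
  · have : ∑ j ∈ Finset.range L, h (e + j).natAbs ≤ ∑ j ∈ Finset.range L, h j := by
      apply Finset.sum_le_sum
      intro j _
      exact hm (by omega)
    linarith
  · set t : ℕ := (-e).toNat with ht
    have het : e = -(t : ℤ) := by omega
    set j0 : ℕ := min t L with hj0
    have hsplit : Finset.range L = Finset.Ico 0 j0 ∪ Finset.Ico j0 L := by
      rw [Finset.range_eq_Ico, Finset.Ico_union_Ico_eq_Ico (by omega) (by omega)]
    have hunion : ∑ j ∈ Finset.range L, h (e + j).natAbs =
        ∑ j ∈ Finset.Ico 0 j0, h (e + j).natAbs + ∑ j ∈ Finset.Ico j0 L, h (e + j).natAbs := by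
      rw [hsplit, Finset.sum_union (Finset.Ico_disjoint_Ico_consecutive 0 j0 L)]
    have part1 : ∑ j ∈ Finset.Ico 0 j0, h (e + j).natAbs ≤ ∑ j ∈ Finset.range L, h j := by
      have e1 : ∑ j ∈ Finset.Ico 0 j0, h (e + j).natAbs ≤ ∑ j ∈ Finset.Ico 0 j0, h (j0 - 1 - j) := by
        apply Finset.sum_le_sum
        intro j hj
        simp only [Finset.mem_Ico] at hj
        apply hm
        omega
      have e2 : ∑ j ∈ Finset.Ico 0 j0, h (j0 - 1 - j) = ∑ j ∈ Finset.range j0, h j := by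
        rw [← Finset.range_eq_Ico, Finset.sum_range_reflect]
      have e3 : ∑ j ∈ Finset.range j0, h j ≤ ∑ j ∈ Finset.range L, h j :=
        Finset.sum_le_sum_of_subset_of_nonneg (Finset.range_subset_range.2 (by omega))
          (fun j _ _ => h0 j)
      linarith
    have part2 : ∑ j ∈ Finset.Ico j0 L, h (e + j).natAbs ≤ ∑ j ∈ Finset.range L, h j := by
      rcases le_or_gt t L with htL | htL
      · have hj0t : j0 = t := by omega
        have e1 : ∑ j ∈ Finset.Ico j0 L, h (e + j).natAbs = ∑ j ∈ Finset.Ico j0 L, h (j - t) := by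
          apply Finset.sum_congr rfl
          intro j hj
          simp only [Finset.mem_Ico] at hj
          congr 1
          omega
        rw [e1, Finset.sum_Ico_eq_sum_range]
        have e2 : ∑ j ∈ Finset.range (L - j0), h (j0 + j - t) = ∑ j ∈ Finset.range (L - j0), h j := by
          apply Finset.sum_congr rfl
          intro j _
          congr 1
          omega
        rw [e2]
        exact Finset.sum_le_sum_of_subset_of_nonneg (Finset.range_subset_range.2 (by omega))
          (fun j _ _ => h0 j)
      · have hLL : j0 = L := by omega
        rw [hLL, Finset.Ico_self, Finset.sum_empty]
        exact hsum0
    rw [hunion]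
    linarith

lemma powsum (β : ℝ) (hβ1 : -1 < β) (hβ0 : β < 0) (N : ℕ) (hN : 1 ≤ N) :
    ∑ j ∈ Finset.range N, ((j : ℝ) + 1) ^ β ≤ (1 + 1 / (β + 1)) * (N : ℝ) ^ (β + 1) := by
  have hβp : 0 < β + 1 := by linarith
  have hanti : AntitoneOn (fun x : ℝ => (x + 1) ^ β) (Set.Icc (0:ℝ) ((0:ℝ) + (N - 1 : ℕ))) := by
    intro x hx y hy hxy
    exact Real.rpow_le_rpow_of_nonpos (by simp at hx; linarith [hx.1]) (by linarith) hβ0.le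
  have hint := hanti.sum_le_integral
  have hval : ∫ x in (0:ℝ)..((0:ℝ) + (N - 1 : ℕ)), (x + 1) ^ β
      = (((N - 1 : ℕ) : ℝ) + 1) ^ (β + 1) / (β + 1) - 1 / (β + 1) := by
    rw [zero_add]
    rw [intervalIntegral.integral_comp_add_right (fun x => x ^ β) 1]
    rw [integral_rpow (Or.inl hβ1)]
    rw [show ((0:ℝ) + 1) = (1:ℝ) by ring, Real.one_rpow]
    ring
  have hcast : (((N - 1 : ℕ) : ℝ) + 1) = (N : ℝ) := by
    have : (N - 1 : ℕ) + 1 = N := by omega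
    rw [← this]; push_cast; ring
  have hNpow1 : (1:ℝ) ≤ (N : ℝ) ^ (β + 1) :=
    calc (1:ℝ) = (1:ℝ) ^ (β + 1) := (Real.one_rpow _).symm
    _ ≤ (N : ℝ) ^ (β + 1) :=
      Real.rpow_le_rpow zero_le_one (by exact_mod_cast hN) hβp.le
  have hdecomp : ∑ j ∈ Finset.range N, ((j : ℝ) + 1) ^ β
      = 1 + ∑ i ∈ Finset.range (N - 1), ((0:ℝ) + ((i + 1 : ℕ) : ℝ) + 1) ^ β := by
    have hN' : N = (N - 1) + 1 := by omega
    rw [hN', Finset.sum_range_succ']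
    rw [show (((0:ℕ):ℝ) + 1) ^ β = ((0:ℝ) + 1) ^ β by norm_num,
      show ((0:ℝ) + 1) = (1:ℝ) by ring, Real.one_rpow]
    rw [add_comm]
    congr 1
    apply Finset.sum_congr rfl
    intro i _
    congr 1
    push_cast
    ring
  rw [hdecomp]
  rw [hval, hcast] at hint
  calc 1 + ∑ i ∈ Finset.range (N - 1), ((0:ℝ) + ((i + 1 : ℕ) : ℝ) + 1) ^ β
      ≤ 1 + ((N:ℝ) ^ (β + 1) / (β + 1) - 1 / (β + 1)) := by
        linarith [hint]
    _ ≤ (1 + 1 / (β + 1)) * (N : ℝ) ^ (β + 1) := by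
        have h1 : (0:ℝ) < 1 / (β + 1) := by positivity
        have h2 : (N:ℝ) ^ (β+1) / (β+1) = (1/(β+1)) * (N:ℝ)^(β+1) := by ring
        nlinarith [hNpow1]

lemma window_rpow (β : ℝ) (hβ1 : -1 < β) (hβ0 : β < 0) (e : ℤ) (L : ℕ) (hL : 1 ≤ L) :
    ∑ j ∈ Finset.range L, (((e + j).natAbs : ℝ) + 1) ^ β
      ≤ 2 * (1 + 1 / (β + 1)) * (L : ℝ) ^ (β + 1) := by
  have h0 : ∀ j : ℕ, (0:ℝ) ≤ ((j:ℝ) + 1) ^ β := fun j => Real.rpow_nonneg (by positivity) _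
  have hm : ∀ ⦃i j : ℕ⦄, i ≤ j → ((j:ℝ) + 1) ^ β ≤ ((i:ℝ) + 1) ^ β := by
    intro i j hij
    exact Real.rpow_le_rpow_of_nonpos (by positivity) (by exact_mod_cast by omega) hβ0.le
  have h1 := window_sum (fun j => ((j:ℝ) + 1) ^ β) h0 hm e L
  have h2 := powsum β hβ1 hβ0 L hL
  calc ∑ j ∈ Finset.range L, (((e + j).natAbs : ℝ) + 1) ^ β
      ≤ 2 * ∑ j ∈ Finset.range L, ((j:ℝ) + 1) ^ β := h1
    _ ≤ 2 * ((1 + 1 / (β + 1)) * (L : ℝ) ^ (β + 1)) := by linarith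
    _ = 2 * (1 + 1 / (β + 1)) * (L : ℝ) ^ (β + 1) := by ring

/-- bound on the first product term of the covariance of sample
covariances in the proof of Lemma 1: if `|γ₁(τ)| ≤ C(|τ|+1)^{2d_a-1}`,
`|γ₂(τ)| ≤ C(|τ|+1)^{2d_b-1}` with `d_a, d_b ∈ (0,1/2)`, `M → ∞`, `M ≤ n`,
`M/n → 0`, then
`Σ_{p=-M}^{M} Σ_{q=-M}^{M} n⁻¹ |Σ_{r=-n+1}^{n-1} (1-|r|/n) γ₁(r) γ₂(r+q-p)| = o(M^{2d_a+2d_b})`. -/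
theorem first_product_term_small (da db C : ℝ)
    (hda0 : 0 < da) (hda : da < 1 / 2) (hdb0 : 0 < db) (hdb : db < 1 / 2) (hC : 0 < C)
    (γ₁ γ₂ : ℤ → ℝ)
    (hγ₁ : ∀ τ : ℤ, |γ₁ τ| ≤ C * ((|τ| : ℝ) + 1) ^ (2 * da - 1))
    (hγ₂ : ∀ τ : ℤ, |γ₂ τ| ≤ C * ((|τ| : ℝ) + 1) ^ (2 * db - 1))
    (M : ℕ → ℕ) (hMpos : ∀ n, 0 < M n) (hM : Tendsto M atTop atTop)
    (hMle : ∀ n : ℕ, 0 < n → M n ≤ n)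
    (hMn : Tendsto (fun n : ℕ => (M n : ℝ) / (n : ℝ)) atTop (nhds 0)) :
    Tendsto (fun n : ℕ => (M n : ℝ) ^ (-(2 * da + 2 * db)) *
        ∑ p ∈ Finset.Icc (-(M n : ℤ)) (M n : ℤ),
          ∑ q ∈ Finset.Icc (-(M n : ℤ)) (M n : ℤ),
            (n : ℝ)⁻¹ * |∑ r ∈ Finset.Icc (-(n : ℤ) + 1) ((n : ℤ) - 1),
              (1 - (|r| : ℝ) / (n : ℝ)) * γ₁ r * γ₂ (r + q - p)|)
      atTop (nhds 0) := by
  have hK1 : (0:ℝ) < 2 * (1 + 1 / (2 * da)) := by positivity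
  have hK2 : (0:ℝ) < 2 * (1 + 1 / (2 * db)) := by positivity
  set K1 : ℝ := 2 * (1 + 1 / (2 * da)) with hK1def
  set K2 : ℝ := 2 * (1 + 1 / (2 * db)) with hK2def
  set D : ℝ := 3 * C ^ 2 * K1 * K2 * (2:ℝ) ^ (2 * da) * (3:ℝ) ^ (2 * db) with hDdef
  -- pointwise bounds on γ in terms of natAbs
  have hA0 : ∀ r : ℤ, (0:ℝ) ≤ ((r.natAbs : ℝ) + 1) ^ (2 * da - 1) :=
    fun r => Real.rpow_nonneg (by positivity) _
  have hB0 : ∀ r : ℤ, (0:ℝ) ≤ ((r.natAbs : ℝ) + 1) ^ (2 * db - 1) :=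
    fun r => Real.rpow_nonneg (by positivity) _
  have hAbs1 : ∀ τ : ℤ, |γ₁ τ| ≤ C * ((τ.natAbs : ℝ) + 1) ^ (2 * da - 1) := by
    intro τ
    have h := hγ₁ τ
    rwa [show |(τ : ℝ)| = (τ.natAbs : ℝ) from
      (by rw [Nat.cast_natAbs, Int.cast_abs] : (τ.natAbs : ℝ) = |(τ : ℝ)|).symm] at h
  have hAbs2 : ∀ τ : ℤ, |γ₂ τ| ≤ C * ((τ.natAbs : ℝ) + 1) ^ (2 * db - 1) := by
    intro τ
    have h := hγ₂ τ
    rwa [show |(τ : ℝ)| = (τ.natAbs : ℝ) from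
      (by rw [Nat.cast_natAbs, Int.cast_abs] : (τ.natAbs : ℝ) = |(τ : ℝ)|).symm] at h
  -- the key eventual bound
  have key : ∀ n : ℕ, 1 ≤ n →
      (M n : ℝ) ^ (-(2 * da + 2 * db)) *
        ∑ p ∈ Finset.Icc (-(M n : ℤ)) (M n : ℤ),
          ∑ q ∈ Finset.Icc (-(M n : ℤ)) (M n : ℤ),
            (n : ℝ)⁻¹ * |∑ r ∈ Finset.Icc (-(n : ℤ) + 1) ((n : ℤ) - 1),
              (1 - (|r| : ℝ) / (n : ℝ)) * γ₁ r * γ₂ (r + q - p)|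
      ≤ D * ((M n : ℝ) / (n : ℝ)) ^ (1 - 2 * da) := by
    intro n hn
    set m : ℕ := M n with hmdef
    have hm1 : 1 ≤ m := hMpos n
    have hmpos : (0:ℝ) < (m:ℝ) := by exact_mod_cast hm1
    have hnpos : (0:ℝ) < (n:ℝ) := by exact_mod_cast hn
    -- window bound for the q-sums
    have hq : ∀ c : ℤ, ∑ q ∈ Finset.Icc (-(m:ℤ)) (m:ℤ),
        (((q + c).natAbs : ℝ) + 1) ^ (2 * db - 1)
        ≤ K2 * ((2 * m + 1 : ℕ) : ℝ) ^ (2 * db) := by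
      intro c
      rw [sum_Icc_int (fun q => (((q + c).natAbs : ℝ) + 1) ^ (2 * db - 1))]
      have hcard : ((m:ℤ) + 1 - (-(m:ℤ))).toNat = 2 * m + 1 := by omega
      rw [hcard]
      have hterm : ∀ j ∈ Finset.range (2 * m + 1),
          (((-(m:ℤ) + (j:ℤ) + c).natAbs : ℝ) + 1) ^ (2 * db - 1)
          = ((((c - (m:ℤ)) + (j:ℤ)).natAbs : ℝ) + 1) ^ (2 * db - 1) := by
        intro j _
        congr 3
        omega
      rw [Finset.sum_congr rfl hterm]
      have h := window_rpow (2 * db - 1) (by linarith) (by linarith) (c - (m:ℤ))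
        (2 * m + 1) (by omega)
      rw [show 2 * db - 1 + 1 = 2 * db by ring] at h
      exact h
    -- bound on the r-sum of A
    have hr : ∑ r ∈ Finset.Icc (-(n : ℤ) + 1) ((n : ℤ) - 1),
        ((r.natAbs : ℝ) + 1) ^ (2 * da - 1)
        ≤ K1 * ((2 * n - 1 : ℕ) : ℝ) ^ (2 * da) := by
      rw [sum_Icc_int (fun r => ((r.natAbs : ℝ) + 1) ^ (2 * da - 1))]
      have hcard : (((n:ℤ) - 1) + 1 - (-(n:ℤ) + 1)).toNat = 2 * n - 1 := by omega
      rw [hcard]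
      have h := window_rpow (2 * da - 1) (by linarith) (by linarith) (-(n:ℤ) + 1)
        (2 * n - 1) (by omega)
      rw [show 2 * da - 1 + 1 = 2 * da by ring] at h
      exact h
    -- bound on the inner absolute sum
    have hinner : ∀ p q : ℤ,
        |∑ r ∈ Finset.Icc (-(n : ℤ) + 1) ((n : ℤ) - 1),
          (1 - (|r| : ℝ) / (n : ℝ)) * γ₁ r * γ₂ (r + q - p)|
        ≤ ∑ r ∈ Finset.Icc (-(n : ℤ) + 1) ((n : ℤ) - 1),
          C ^ 2 * (((r.natAbs : ℝ) + 1) ^ (2 * da - 1) *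
            (((r + q - p).natAbs : ℝ) + 1) ^ (2 * db - 1)) := by
      intro p q
      refine (Finset.abs_sum_le_sum_abs _ _).trans (Finset.sum_le_sum ?_)
      intro r hrmem
      simp only [Finset.mem_Icc] at hrmem
      have habs : |(r : ℝ)| ≤ (n:ℝ) := by
        rw [← Int.cast_abs]
        exact_mod_cast (abs_le.mpr ⟨by omega, by omega⟩ : |r| ≤ (n:ℤ))
      have habs0 : (0:ℝ) ≤ |(r : ℝ)| := abs_nonneg _
      have hw : |1 - |(r : ℝ)| / (n : ℝ)| ≤ 1 := by
        rw [abs_le]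
        constructor
        · have : |(r : ℝ)| / (n:ℝ) ≤ 1 := by rw [div_le_one hnpos]; exact habs
          linarith
        · have : (0:ℝ) ≤ |(r : ℝ)| / (n:ℝ) := by positivity
          linarith
      calc |(1 - |(r : ℝ)| / (n : ℝ)) * γ₁ r * γ₂ (r + q - p)|
          = |1 - |(r : ℝ)| / (n : ℝ)| * |γ₁ r| * |γ₂ (r + q - p)| := by
            rw [abs_mul, abs_mul]
        _ ≤ 1 * (C * ((r.natAbs : ℝ) + 1) ^ (2 * da - 1)) *
              (C * (((r + q - p).natAbs : ℝ) + 1) ^ (2 * db - 1)) := by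
            apply mul_le_mul _ (hAbs2 _) (abs_nonneg _) _
            · exact mul_le_mul hw (hAbs1 r) (abs_nonneg _) zero_le_one
            · have := hA0 r
              positivity
        _ = C ^ 2 * (((r.natAbs : ℝ) + 1) ^ (2 * da - 1) *
              (((r + q - p).natAbs : ℝ) + 1) ^ (2 * db - 1)) := by ring
    -- bound on the q-sum of the inner absolute sums
    have hqsum : ∀ p : ℤ,
        ∑ q ∈ Finset.Icc (-(m:ℤ)) (m:ℤ),
          |∑ r ∈ Finset.Icc (-(n : ℤ) + 1) ((n : ℤ) - 1),
            (1 - (|r| : ℝ) / (n : ℝ)) * γ₁ r * γ₂ (r + q - p)|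
        ≤ C ^ 2 * ((K1 * ((2 * n - 1 : ℕ) : ℝ) ^ (2 * da)) *
            (K2 * ((2 * m + 1 : ℕ) : ℝ) ^ (2 * db))) := by
      intro p
      have hW2 : (0:ℝ) ≤ K2 * ((2 * m + 1 : ℕ) : ℝ) ^ (2 * db) := by positivity
      calc ∑ q ∈ Finset.Icc (-(m:ℤ)) (m:ℤ),
            |∑ r ∈ Finset.Icc (-(n : ℤ) + 1) ((n : ℤ) - 1),
              (1 - (|r| : ℝ) / (n : ℝ)) * γ₁ r * γ₂ (r + q - p)|
          ≤ ∑ q ∈ Finset.Icc (-(m:ℤ)) (m:ℤ),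
              ∑ r ∈ Finset.Icc (-(n : ℤ) + 1) ((n : ℤ) - 1),
                C ^ 2 * (((r.natAbs : ℝ) + 1) ^ (2 * da - 1) *
                  (((r + q - p).natAbs : ℝ) + 1) ^ (2 * db - 1)) :=
            Finset.sum_le_sum fun q _ => hinner p q
        _ = C ^ 2 * ∑ r ∈ Finset.Icc (-(n : ℤ) + 1) ((n : ℤ) - 1),
              ((r.natAbs : ℝ) + 1) ^ (2 * da - 1) *
                ∑ q ∈ Finset.Icc (-(m:ℤ)) (m:ℤ),
                  (((r + q - p).natAbs : ℝ) + 1) ^ (2 * db - 1) := by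
            rw [Finset.sum_comm, Finset.mul_sum]
            refine Finset.sum_congr rfl fun r _ => ?_
            rw [Finset.mul_sum, Finset.mul_sum]
        _ ≤ C ^ 2 * ∑ r ∈ Finset.Icc (-(n : ℤ) + 1) ((n : ℤ) - 1),
              ((r.natAbs : ℝ) + 1) ^ (2 * da - 1) *
                (K2 * ((2 * m + 1 : ℕ) : ℝ) ^ (2 * db)) := by
            apply mul_le_mul_of_nonneg_left _ (by positivity)
            apply Finset.sum_le_sum
            intro r _
            apply mul_le_mul_of_nonneg_left _ (hA0 r)
            have h := hq (r - p)
            calc ∑ q ∈ Finset.Icc (-(m:ℤ)) (m:ℤ),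
                  (((r + q - p).natAbs : ℝ) + 1) ^ (2 * db - 1)
                = ∑ q ∈ Finset.Icc (-(m:ℤ)) (m:ℤ),
                  (((q + (r - p)).natAbs : ℝ) + 1) ^ (2 * db - 1) := by
                  apply Finset.sum_congr rfl
                  intro q _
                  congr 3
                  omega
              _ ≤ K2 * ((2 * m + 1 : ℕ) : ℝ) ^ (2 * db) := h
        _ = C ^ 2 * ((∑ r ∈ Finset.Icc (-(n : ℤ) + 1) ((n : ℤ) - 1),
              ((r.natAbs : ℝ) + 1) ^ (2 * da - 1)) *
                (K2 * ((2 * m + 1 : ℕ) : ℝ) ^ (2 * db))) := by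
            rw [← Finset.sum_mul]
        _ ≤ C ^ 2 * ((K1 * ((2 * n - 1 : ℕ) : ℝ) ^ (2 * da)) *
              (K2 * ((2 * m + 1 : ℕ) : ℝ) ^ (2 * db))) := by
            apply mul_le_mul_of_nonneg_left _ (by positivity)
            exact mul_le_mul_of_nonneg_right hr hW2
    -- summing over p
    have hcardp : (Finset.Icc (-(m:ℤ)) (m:ℤ)).card = 2 * m + 1 := by
      rw [Int.card_Icc]; omega
    have hT : ∑ p ∈ Finset.Icc (-(m:ℤ)) (m:ℤ),
        ∑ q ∈ Finset.Icc (-(m:ℤ)) (m:ℤ),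
          (n : ℝ)⁻¹ * |∑ r ∈ Finset.Icc (-(n : ℤ) + 1) ((n : ℤ) - 1),
            (1 - (|r| : ℝ) / (n : ℝ)) * γ₁ r * γ₂ (r + q - p)|
        ≤ ((2 * m + 1 : ℕ) : ℝ) * ((n:ℝ)⁻¹ * (C ^ 2 *
            ((K1 * ((2 * n - 1 : ℕ) : ℝ) ^ (2 * da)) *
              (K2 * ((2 * m + 1 : ℕ) : ℝ) ^ (2 * db))))) := by
      calc ∑ p ∈ Finset.Icc (-(m:ℤ)) (m:ℤ),
            ∑ q ∈ Finset.Icc (-(m:ℤ)) (m:ℤ),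
              (n : ℝ)⁻¹ * |∑ r ∈ Finset.Icc (-(n : ℤ) + 1) ((n : ℤ) - 1),
                (1 - (|r| : ℝ) / (n : ℝ)) * γ₁ r * γ₂ (r + q - p)|
          ≤ ∑ p ∈ Finset.Icc (-(m:ℤ)) (m:ℤ),
              ((n:ℝ)⁻¹ * (C ^ 2 * ((K1 * ((2 * n - 1 : ℕ) : ℝ) ^ (2 * da)) *
                (K2 * ((2 * m + 1 : ℕ) : ℝ) ^ (2 * db))))) := by
            apply Finset.sum_le_sum
            intro p _
            rw [← Finset.mul_sum]
            exact mul_le_mul_of_nonneg_left (hqsum p) (by positivity)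
        _ = ((2 * m + 1 : ℕ) : ℝ) * ((n:ℝ)⁻¹ * (C ^ 2 *
              ((K1 * ((2 * n - 1 : ℕ) : ℝ) ^ (2 * da)) *
                (K2 * ((2 * m + 1 : ℕ) : ℝ) ^ (2 * db))))) := by
            rw [Finset.sum_const, hcardp, nsmul_eq_mul]
    -- now the numeric simplification
    have hcast1 : ((2 * m + 1 : ℕ) : ℝ) ≤ 3 * (m:ℝ) := by
      have hm1' : (1:ℝ) ≤ (m:ℝ) := by exact_mod_cast hm1
      push_cast
      linarith
    have hcast2 : ((2 * n - 1 : ℕ) : ℝ) ≤ 2 * (n:ℝ) := by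
      have : (2 * n - 1 : ℕ) ≤ 2 * n := by omega
      calc ((2 * n - 1 : ℕ) : ℝ) ≤ ((2 * n : ℕ) : ℝ) := by exact_mod_cast this
        _ = 2 * (n:ℝ) := by push_cast; ring
    have hp1 : ((2 * n - 1 : ℕ) : ℝ) ^ (2 * da) ≤ (2:ℝ) ^ (2 * da) * (n:ℝ) ^ (2 * da) := by
      calc ((2 * n - 1 : ℕ) : ℝ) ^ (2 * da) ≤ (2 * (n:ℝ)) ^ (2 * da) :=
          Real.rpow_le_rpow (by positivity) hcast2 (by linarith)
        _ = (2:ℝ) ^ (2 * da) * (n:ℝ) ^ (2 * da) := Real.mul_rpow (by norm_num) hnpos.le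
    have hp2 : ((2 * m + 1 : ℕ) : ℝ) ^ (2 * db) ≤ (3:ℝ) ^ (2 * db) * (m:ℝ) ^ (2 * db) := by
      calc ((2 * m + 1 : ℕ) : ℝ) ^ (2 * db) ≤ (3 * (m:ℝ)) ^ (2 * db) :=
          Real.rpow_le_rpow (by positivity) hcast1 (by linarith)
        _ = (3:ℝ) ^ (2 * db) * (m:ℝ) ^ (2 * db) := Real.mul_rpow (by norm_num) hmpos.le
    -- rpow identities
    have h1 : (m:ℝ) ^ (-(2 * da + 2 * db)) * ((m:ℝ) * (m:ℝ) ^ (2 * db))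
        = (m:ℝ) ^ (1 - 2 * da) := by
      calc (m:ℝ) ^ (-(2 * da + 2 * db)) * ((m:ℝ) * (m:ℝ) ^ (2 * db))
          = (m:ℝ) ^ (-(2 * da + 2 * db)) * ((m:ℝ) ^ (1:ℝ) * (m:ℝ) ^ (2 * db)) := by
            rw [Real.rpow_one]
        _ = (m:ℝ) ^ (-(2 * da + 2 * db) + ((1:ℝ) + 2 * db)) := by
            rw [← Real.rpow_add hmpos, ← Real.rpow_add hmpos]
        _ = (m:ℝ) ^ (1 - 2 * da) := by congr 1; ring
    have h2 : (n:ℝ)⁻¹ * (n:ℝ) ^ (2 * da) = (n:ℝ) ^ (2 * da - 1) := by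
      calc (n:ℝ)⁻¹ * (n:ℝ) ^ (2 * da) = (n:ℝ) ^ (-1 : ℝ) * (n:ℝ) ^ (2 * da) := by
            rw [Real.rpow_neg_one]
        _ = (n:ℝ) ^ ((-1 : ℝ) + 2 * da) := by rw [← Real.rpow_add hnpos]
        _ = (n:ℝ) ^ (2 * da - 1) := by congr 1; ring
    have h3 : (m:ℝ) ^ (1 - 2 * da) * (n:ℝ) ^ (2 * da - 1)
        = ((m:ℝ) / (n:ℝ)) ^ (1 - 2 * da) := by
      rw [Real.div_rpow hmpos.le hnpos.le]
      rw [show (2 * da - 1 : ℝ) = -(1 - 2 * da) by ring, Real.rpow_neg hnpos.le]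
      rw [div_eq_mul_inv]
    -- combine
    have hmnonneg : (0:ℝ) ≤ (m:ℝ) ^ (-(2 * da + 2 * db)) := Real.rpow_nonneg hmpos.le _
    calc (m : ℝ) ^ (-(2 * da + 2 * db)) *
          ∑ p ∈ Finset.Icc (-(m:ℤ)) (m:ℤ),
            ∑ q ∈ Finset.Icc (-(m:ℤ)) (m:ℤ),
              (n : ℝ)⁻¹ * |∑ r ∈ Finset.Icc (-(n : ℤ) + 1) ((n : ℤ) - 1),
                (1 - (|r| : ℝ) / (n : ℝ)) * γ₁ r * γ₂ (r + q - p)|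
        ≤ (m : ℝ) ^ (-(2 * da + 2 * db)) *
            (((2 * m + 1 : ℕ) : ℝ) * ((n:ℝ)⁻¹ * (C ^ 2 *
              ((K1 * ((2 * n - 1 : ℕ) : ℝ) ^ (2 * da)) *
                (K2 * ((2 * m + 1 : ℕ) : ℝ) ^ (2 * db)))))) :=
          mul_le_mul_of_nonneg_left hT hmnonneg
      _ ≤ (m : ℝ) ^ (-(2 * da + 2 * db)) *
            ((3 * (m:ℝ)) * ((n:ℝ)⁻¹ * (C ^ 2 *
              ((K1 * ((2:ℝ) ^ (2 * da) * (n:ℝ) ^ (2 * da))) *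
                (K2 * ((3:ℝ) ^ (2 * db) * (m:ℝ) ^ (2 * db))))))) := by
          apply mul_le_mul_of_nonneg_left _ hmnonneg
          apply mul_le_mul hcast1 _ (by positivity) (by positivity)
          apply mul_le_mul_of_nonneg_left _ (by positivity)
          apply mul_le_mul_of_nonneg_left _ (by positivity)
          exact mul_le_mul (mul_le_mul_of_nonneg_left hp1 hK1.le)
            (mul_le_mul_of_nonneg_left hp2 hK2.le) (by positivity) (by positivity)
      _ = D * (((m:ℝ) ^ (-(2 * da + 2 * db)) * ((m:ℝ) * (m:ℝ) ^ (2 * db))) *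
            ((n:ℝ)⁻¹ * (n:ℝ) ^ (2 * da))) := by
          rw [hDdef]; ring
      _ = D * ((m:ℝ) / (n:ℝ)) ^ (1 - 2 * da) := by
          rw [h1, h2, h3]
  -- conclude via squeeze
  have hg : Tendsto (fun n : ℕ => D * ((M n : ℝ) / (n : ℝ)) ^ (1 - 2 * da)) atTop (nhds 0) := by
    have hpow : Tendsto (fun n : ℕ => ((M n : ℝ) / (n : ℝ)) ^ (1 - 2 * da)) atTop
        (nhds ((0:ℝ) ^ (1 - 2 * da))) :=
      hMn.rpow_const (Or.inr (by linarith))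
    rw [Real.zero_rpow (by intro h; nlinarith)] at hpow
    have := hpow.const_mul D
    simpa using this
  apply squeeze_zero' _ _ hg
  · filter_upwards with n
    apply mul_nonneg (Real.rpow_nonneg (Nat.cast_nonneg _) _)
    apply Finset.sum_nonneg
    intro p _
    apply Finset.sum_nonneg
    intro q _
    exact mul_nonneg (by positivity) (abs_nonneg _)
  · filter_upwards [eventually_ge_atTop 1] with n hn
    exact key n hn
end

section
/- Let 0 < d_a < 1/2, 0 < d_b < 1/2 and C > 0. Let γ₁₂, γ₂₁ : ℤ → ℝ satisfy |γ₁₂(τ)| ≤ C(|τ|+1)^{d_a+d_b−1} and |γ₂₁(τ)| ≤ C(|τ|+1)^{d_a+d_b−1} for all τ. Let M = M(n) be a sequence of positive integers with M → ∞, M ≤ n and M/n → 0 as n → ∞. Then Σ_{p=−M}^{M} Σ_{q=−M}^{M} n^{−1} | Σ_{r=−n+1}^{n−1} (1 − |r|/n) γ₁₂(r+p) γ₂₁(r−q) | = o(M^{2d_a+2d_b}) as n → ∞. -/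
open Filter Finset

set_option linter.unusedVariables false


lemma step_ineq {p x : ℝ} (hp0 : 0 < p) (hp1 : p < 1) (hx : 0 ≤ x) :
    p * (x + 1) ^ (p - 1) + x ^ p ≤ (x + 1) ^ p := by
  have hx1 : (0:ℝ) < x + 1 := by linarith
  have hc : (0:ℝ) < (x + 1) ^ (p - 1) := Real.rpow_pos_of_pos hx1 _
  have key : x ^ p ≤ (x + 1) ^ (p - 1) * (x + 1 - p) := by
    rcases eq_or_lt_of_le hx with h | hxpos
    · rw [← h, Real.zero_rpow hp0.ne']
      have h2 : (0:ℝ) < (0 + 1 : ℝ) ^ (p - 1) := Real.rpow_pos_of_pos (by norm_num) _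
      nlinarith
    · have hb : (1 + 1/x) ^ (1 - p) ≤ 1 + (1 - p) * (1/x) := by
        apply rpow_one_add_le_one_add_mul_self
        · have : (0:ℝ) ≤ 1/x := by positivity
          linarith
        · linarith
        · linarith
      have e1 : (1 + 1/x : ℝ) = (x + 1) / x := by field_simp
      have e2 : ((x+1)/x) ^ (1-p) = (x+1)^(1-p) / x^(1-p) :=
        Real.div_rpow (by linarith) hx _
      have hxx : x ^ p * x ^ (1-p) = x := by
        rw [← Real.rpow_add hxpos]
        norm_num
      have hxp : (0:ℝ) < x ^ (1-p) := Real.rpow_pos_of_pos hxpos _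
      have h1 : x ^ p * (x + 1) ^ (1 - p) ≤ x + 1 - p := by
        have hb2 : x * ((x+1)^(1-p) / x^(1-p)) ≤ x * (1 + (1 - p) * (1/x)) := by
          apply mul_le_mul_of_nonneg_left _ hx
          rw [← e2, ← e1]; exact hb
        have lhs : x * ((x+1)^(1-p) / x^(1-p)) = x ^ p * (x + 1) ^ (1 - p) := by
          field_simp
          linear_combination -hxx
        have rhs : x * (1 + (1 - p) * (1/x)) = x + 1 - p := by
          field_simp; ring
        rw [lhs, rhs] at hb2; exact hb2
      have hA : (x+1)^(1-p) * (x+1)^(p-1) = 1 := by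
        rw [← Real.rpow_add hx1]; norm_num
      have h2 := mul_le_mul_of_nonneg_right h1 hc.le
      calc x ^ p = x ^ p * ((x+1)^(1-p) * (x+1)^(p-1)) := by rw [hA, mul_one]
        _ = x ^ p * (x+1)^(1-p) * (x+1)^(p-1) := by ring
        _ ≤ (x + 1 - p) * (x+1)^(p-1) := h2
        _ = (x + 1) ^ (p - 1) * (x + 1 - p) := by ring
  have e : (x+1)^p = (x+1)^(p-1) * (x+1) := by
    have := Real.rpow_add_one (ne_of_gt hx1) (p-1)
    rw [show p - 1 + 1 = p by ring] at this
    exact this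
  rw [e]; nlinarith [key]

lemma sum_pow_le {p : ℝ} (hp0 : 0 < p) (hp1 : p < 1) (m : ℕ) :
    ∑ k ∈ range m, ((k:ℝ)+1)^(p-1) ≤ (m:ℝ)^p / p := by
  induction m with
  | zero => simp; positivity
  | succ m ih =>
      rw [Finset.sum_range_succ]
      have h := step_ineq hp0 hp1 (Nat.cast_nonneg m : (0:ℝ) ≤ m)
      have : ((m:ℝ)+1)^(p-1) ≤ (((m:ℝ)+1)^p - (m:ℝ)^p) / p := by
        rw [le_div_iff₀ hp0]; nlinarith
      push_cast
      calc ∑ k ∈ range m, ((k:ℝ)+1)^(p-1) + ((m:ℝ)+1)^(p-1)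
          ≤ (m:ℝ)^p / p + (((m:ℝ)+1)^p - (m:ℝ)^p) / p := by gcongr
        _ = ((m:ℝ)+1)^p / p := by ring

lemma part_bound {α : ℝ} (hα : α ≤ 0) (T : Finset ℤ) (v : ℤ → ℤ) (ι : ℤ → ℕ) (N : ℕ)
    (hinj : ∀ j ∈ T, ∀ j' ∈ T, ι j = ι j' → j = j')
    (hlt : ∀ j ∈ T, ι j < N)
    (hle : ∀ j ∈ T, (ι j : ℤ) ≤ |v j|) :
    ∑ j ∈ T, (((|v j| : ℤ) : ℝ) + 1) ^ α ≤ ∑ k ∈ range N, ((k:ℝ)+1)^α := by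
  calc ∑ j ∈ T, (((|v j| : ℤ):ℝ)+1)^α ≤ ∑ j ∈ T, ((ι j : ℝ)+1)^α := by
        apply Finset.sum_le_sum
        intro j hj
        apply Real.rpow_le_rpow_of_nonpos (by positivity) _ hα
        have := hle j hj
        have h2 : ((ι j : ℤ):ℝ) ≤ ((|v j| : ℤ) : ℝ) := by exact_mod_cast this
        push_cast at h2 ⊢
        linarith
    _ = ∑ k ∈ T.image ι, ((k:ℝ)+1)^α := by
        rw [Finset.sum_image]
        exact hinj
    _ ≤ ∑ k ∈ range N, ((k:ℝ)+1)^α := by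
        apply Finset.sum_le_sum_of_subset_of_nonneg
        · intro k hk
          rw [Finset.mem_image] at hk
          obtain ⟨j, hj, rfl⟩ := hk
          exact Finset.mem_range.mpr (hlt j hj)
        · intro k _ _
          positivity

lemma window_bound {α : ℝ} (hα : α ≤ 0) (c : ℤ) (L : ℕ) :
    ∑ j ∈ Icc (-(L:ℤ)) (L:ℤ), ((|((c + j : ℤ) : ℝ)|) + 1) ^ α
      ≤ 2 * ∑ k ∈ range (2*L+1), ((k:ℝ)+1)^α := by
  classical
  have hcast : ∀ j : ℤ, ((|((c + j : ℤ) : ℝ)|) + 1) ^ α = (((|c + j| : ℤ) : ℝ) + 1) ^ α := by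
    intro j
    rw [Int.cast_abs]
  simp only [hcast]
  have hsplit := Finset.sum_filter_add_sum_filter_not (Icc (-(L:ℤ)) (L:ℤ))
    (fun j => 0 ≤ c + j) (fun j => (((|c + j| : ℤ) : ℝ) + 1) ^ α)
  rw [← hsplit]
  have hpos : ∑ j ∈ (Icc (-(L:ℤ)) (L:ℤ)).filter (fun j => 0 ≤ c + j),
      (((|c + j| : ℤ) : ℝ) + 1) ^ α ≤ ∑ k ∈ range (2*L+1), ((k:ℝ)+1)^α := by
    apply part_bound hα _ _ (fun j => (c + j - max (c - L) 0).toNat)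
    · intro j hj j' hj' h
      simp only [Finset.mem_filter, Finset.mem_Icc] at hj hj'
      rcases max_choice (c - (L:ℤ)) 0 with hm | hm <;> omega
    · intro j hj
      simp only [Finset.mem_filter, Finset.mem_Icc] at hj
      rcases max_choice (c - (L:ℤ)) 0 with hm | hm <;> omega
    · intro j hj
      simp only [Finset.mem_filter, Finset.mem_Icc] at hj
      rw [abs_of_nonneg hj.2]
      rcases max_choice (c - (L:ℤ)) 0 with hm | hm <;> omega
  have hneg : ∑ j ∈ (Icc (-(L:ℤ)) (L:ℤ)).filter (fun j => ¬ 0 ≤ c + j),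
      (((|c + j| : ℤ) : ℝ) + 1) ^ α ≤ ∑ k ∈ range (2*L+1), ((k:ℝ)+1)^α := by
    apply part_bound hα _ _ (fun j => (-(c + j) - max (-(c + L)) 1).toNat)
    · intro j hj j' hj' h
      simp only [Finset.mem_filter, Finset.mem_Icc, not_le] at hj hj'
      rcases max_choice (-(c + (L:ℤ))) 1 with hm | hm <;> omega
    · intro j hj
      simp only [Finset.mem_filter, Finset.mem_Icc, not_le] at hj
      rcases max_choice (-(c + (L:ℤ))) 1 with hm | hm <;> omega
    · intro j hj
      simp only [Finset.mem_filter, Finset.mem_Icc, not_le] at hj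
      rw [abs_of_neg hj.2]
      rcases max_choice (-(c + (L:ℤ))) 1 with hm | hm <;> omega
  linarith

lemma core_bound {da db C : ℝ}
    (hda0 : 0 < da) (hda : da < 1 / 2) (hdb0 : 0 < db) (hdb : db < 1 / 2) (hC : 0 < C)
    (γ₁₂ γ₂₁ : ℤ → ℝ)
    (hγ₁₂ : ∀ τ : ℤ, |γ₁₂ τ| ≤ C * ((|τ| : ℝ) + 1) ^ (da + db - 1))
    (hγ₂₁ : ∀ τ : ℤ, |γ₂₁ τ| ≤ C * ((|τ| : ℝ) + 1) ^ (da + db - 1))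
    (m N : ℕ) (hm : 1 ≤ m) (hN : 1 ≤ N) (hmN : m ≤ N) :
    (m : ℝ) ^ (-(2 * da + 2 * db)) *
        ∑ p ∈ Finset.Icc (-(m : ℤ)) (m : ℤ),
          ∑ q ∈ Finset.Icc (-(m : ℤ)) (m : ℤ),
            (N : ℝ)⁻¹ * |∑ r ∈ Finset.Icc (-(N : ℤ) + 1) ((N : ℤ) - 1),
              (1 - (|r| : ℝ) / (N : ℝ)) * γ₁₂ (r + p) * γ₂₁ (r - q)|
      ≤ (12 * C^2 * 3^(da+db) * 2^(da+db) / ((da+db) * (da+db))) *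
          ((m : ℝ) / (N : ℝ)) ^ (1 - (da+db)) := by
  have hP0 : (0:ℝ) < da + db := by linarith
  have hP1 : da + db < 1 := by linarith
  have hα : da + db - 1 ≤ 0 := by linarith
  have hm0 : (0:ℝ) < m := by exact_mod_cast hm
  have hN0 : (0:ℝ) < N := by exact_mod_cast hN
  set g : ℤ → ℝ := fun j => ((|(j : ℝ)|) + 1) ^ (da + db - 1) with hg
  have hg0 : ∀ j, 0 ≤ g j := fun j => by rw [hg]; positivity
  set B : ℕ → ℝ := fun L => ∑ k ∈ range (2*L+1), ((k:ℝ)+1)^(da+db-1) with hB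
  have hB0 : ∀ L, 0 ≤ B L := fun L => Finset.sum_nonneg fun k _ => by positivity
  have hW : ∀ (c : ℤ) (L : ℕ),
      ∑ j ∈ Icc (-(L:ℤ)) (L:ℤ), g (c + j) ≤ 2 * B L := by
    intro c L
    simp only [hg, hB]
    exact window_bound hα c L
  set I : Finset ℤ := Finset.Icc (-(m : ℤ)) (m : ℤ) with hI
  set R : Finset ℤ := Finset.Icc (-(N : ℤ) + 1) ((N : ℤ) - 1) with hR
  set f : ℤ → ℝ := fun r => ∑ p ∈ I, g (r + p) with hf
  have hf0 : ∀ r, 0 ≤ f r := fun r => Finset.sum_nonneg fun p _ => hg0 _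
  have hγg₁ : ∀ τ : ℤ, |γ₁₂ τ| ≤ C * g τ := by
    intro τ; simp only [hg]; exact hγ₁₂ τ
  have hγg₂ : ∀ τ : ℤ, |γ₂₁ τ| ≤ C * g τ := by
    intro τ; simp only [hg]; exact hγ₂₁ τ
  have habs : ∀ p q : ℤ,
      |∑ r ∈ R, (1 - (|r| : ℝ) / (N : ℝ)) * γ₁₂ (r + p) * γ₂₁ (r - q)|
        ≤ C^2 * ∑ r ∈ R, g (r + p) * g (r - q) := by
    intro p q
    calc |∑ r ∈ R, (1 - (|r| : ℝ) / (N : ℝ)) * γ₁₂ (r + p) * γ₂₁ (r - q)|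
        ≤ ∑ r ∈ R, |(1 - (|r| : ℝ) / (N : ℝ)) * γ₁₂ (r + p) * γ₂₁ (r - q)| :=
          Finset.abs_sum_le_sum_abs _ _
      _ ≤ ∑ r ∈ R, C^2 * (g (r + p) * g (r - q)) := by
          apply Finset.sum_le_sum
          intro r hr
          rw [hR, Finset.mem_Icc] at hr
          have h1 : (-(N:ℝ)+1) ≤ (r:ℝ) := by exact_mod_cast hr.1
          have h2 : (r:ℝ) ≤ (N:ℝ)-1 := by exact_mod_cast hr.2
          have hrabs : |(r:ℝ)| ≤ (N:ℝ) - 1 := by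
            rw [abs_le]; constructor <;> linarith
          have hw : |1 - |(r:ℝ)|/(N:ℝ)| ≤ 1 := by
            rw [abs_le]
            constructor
            · have : |(r:ℝ)|/(N:ℝ) ≤ 1 := by rw [div_le_one hN0]; linarith
              linarith
            · have : (0:ℝ) ≤ |(r:ℝ)|/(N:ℝ) := by positivity
              linarith
          calc |(1 - (|r| : ℝ) / (N : ℝ)) * γ₁₂ (r + p) * γ₂₁ (r - q)|
              = |1 - (|r| : ℝ)/(N:ℝ)| * |γ₁₂ (r + p)| * |γ₂₁ (r - q)| := by
                rw [abs_mul, abs_mul]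
            _ ≤ 1 * (C * g (r + p)) * (C * g (r - q)) := by
                apply mul_le_mul _ (hγg₂ _) (abs_nonneg _) _
                · apply mul_le_mul hw (hγg₁ _) (abs_nonneg _) (by norm_num)
                · have := hg0 (r + p); positivity
            _ = C^2 * (g (r + p) * g (r - q)) := by ring
      _ = C^2 * ∑ r ∈ R, g (r + p) * g (r - q) := by rw [Finset.mul_sum]
  have hqref : ∀ r : ℤ, ∑ q ∈ I, g (r - q) = f r := by
    intro r
    simp only [hf]
    apply Finset.sum_equiv (Equiv.neg ℤ)
    · intro q
      simp only [hI, Finset.mem_Icc, Equiv.neg_apply]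
      omega
    · intro q hq
      rw [sub_eq_add_neg]
      simp
  have hswap : ∑ p ∈ I, ∑ q ∈ I, ∑ r ∈ R, g (r+p) * g (r-q) = ∑ r ∈ R, f r * f r := by
    calc ∑ p ∈ I, ∑ q ∈ I, ∑ r ∈ R, g (r+p) * g (r-q)
        = ∑ p ∈ I, ∑ r ∈ R, ∑ q ∈ I, g (r+p) * g (r-q) :=
          Finset.sum_congr rfl fun p _ => Finset.sum_comm
      _ = ∑ p ∈ I, ∑ r ∈ R, g (r+p) * f r := by
          refine Finset.sum_congr rfl fun p _ => Finset.sum_congr rfl fun r _ => ?_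
          rw [← Finset.mul_sum, hqref r]
      _ = ∑ r ∈ R, ∑ p ∈ I, g (r+p) * f r := Finset.sum_comm
      _ = ∑ r ∈ R, f r * f r := by
          refine Finset.sum_congr rfl fun r _ => ?_
          rw [← Finset.sum_mul]
  have hfle : ∀ r : ℤ, f r ≤ 2 * B m := by
    intro r
    simp only [hf, hI]
    exact hW r m
  have hsumf : ∑ r ∈ R, f r ≤ (2*(m:ℝ)+1) * (2 * B (N-1)) := by
    have hcard : ((I.card : ℝ)) = 2*(m:ℝ)+1 := by
      rw [hI, Int.card_Icc]
      have h3 : ((m:ℤ) + 1 - -(m:ℤ)).toNat = 2*m+1 := by omega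
      rw [h3]; push_cast; ring
    have hRI : R = Icc (-((N-1 : ℕ):ℤ)) (((N-1:ℕ)):ℤ) := by
      rw [hR]; congr 1 <;> omega
    have hinner : ∀ p : ℤ, ∑ r ∈ R, g (r + p) ≤ 2 * B (N-1) := by
      intro p
      have h1 : ∑ r ∈ R, g (r + p) = ∑ r ∈ Icc (-((N-1:ℕ):ℤ)) ((N-1:ℕ):ℤ), g (p + r) := by
        rw [hRI]
        exact Finset.sum_congr rfl fun r _ => by rw [add_comm]
      rw [h1]; exact hW p (N-1)
    calc ∑ r ∈ R, f r = ∑ p ∈ I, ∑ r ∈ R, g (r + p) := by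
          simp only [hf]; exact Finset.sum_comm
      _ ≤ ∑ _p ∈ I, (2 * B (N-1)) := Finset.sum_le_sum fun p _ => hinner p
      _ = (I.card : ℝ) * (2 * B (N-1)) := by rw [Finset.sum_const, nsmul_eq_mul]
      _ = (2*(m:ℝ)+1) * (2 * B (N-1)) := by rw [hcard]
  have hsumff : ∑ r ∈ R, f r * f r ≤ 2 * B m * ((2*(m:ℝ)+1) * (2 * B (N-1))) := by
    calc ∑ r ∈ R, f r * f r ≤ ∑ r ∈ R, 2 * B m * f r :=
          Finset.sum_le_sum fun r _ => mul_le_mul_of_nonneg_right (hfle r) (hf0 r)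
      _ = 2 * B m * ∑ r ∈ R, f r := (Finset.mul_sum _ _ _).symm
      _ ≤ 2 * B m * ((2*(m:ℝ)+1) * (2 * B (N-1))) := by
          apply mul_le_mul_of_nonneg_left hsumf
          have := hB0 m; linarith
  have hS : ∑ p ∈ I, ∑ q ∈ I,
      (N:ℝ)⁻¹ * |∑ r ∈ R, (1 - (|r| : ℝ)/(N:ℝ)) * γ₁₂ (r+p) * γ₂₁ (r-q)|
      ≤ (N:ℝ)⁻¹ * C^2 * (2 * B m * ((2*(m:ℝ)+1) * (2 * B (N-1)))) := by
    calc ∑ p ∈ I, ∑ q ∈ I,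
        (N:ℝ)⁻¹ * |∑ r ∈ R, (1 - (|r| : ℝ)/(N:ℝ)) * γ₁₂ (r+p) * γ₂₁ (r-q)|
        ≤ ∑ p ∈ I, ∑ q ∈ I, (N:ℝ)⁻¹ * (C^2 * ∑ r ∈ R, g (r+p) * g (r-q)) := by
          refine Finset.sum_le_sum fun p _ => Finset.sum_le_sum fun q _ => ?_
          exact mul_le_mul_of_nonneg_left (habs p q) (by positivity)
      _ = (N:ℝ)⁻¹ * C^2 * ∑ p ∈ I, ∑ q ∈ I, ∑ r ∈ R, g (r+p) * g (r-q) := by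
          rw [Finset.mul_sum]
          refine Finset.sum_congr rfl fun p _ => ?_
          rw [Finset.mul_sum]
          refine Finset.sum_congr rfl fun q _ => ?_
          ring
      _ = (N:ℝ)⁻¹ * C^2 * ∑ r ∈ R, f r * f r := by rw [hswap]
      _ ≤ (N:ℝ)⁻¹ * C^2 * (2 * B m * ((2*(m:ℝ)+1) * (2 * B (N-1)))) := by
          apply mul_le_mul_of_nonneg_left hsumff (by positivity)
  have hBm : B m ≤ 3^(da+db) * (m:ℝ)^(da+db) / (da+db) := by
    have h1 : B m ≤ ((2*m+1 : ℕ):ℝ)^(da+db) / (da+db) := by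
      simp only [hB]
      exact sum_pow_le hP0 hP1 (2*m+1)
    have h2 : ((2*m+1:ℕ):ℝ)^(da+db) ≤ 3^(da+db) * (m:ℝ)^(da+db) := by
      have hc1 : (2*m+1 : ℕ) ≤ 3*m := by omega
      have hc : ((2*m+1:ℕ):ℝ) ≤ 3*(m:ℝ) := by
        calc ((2*m+1:ℕ):ℝ) ≤ ((3*m:ℕ):ℝ) := by exact_mod_cast hc1
          _ = 3*(m:ℝ) := by push_cast; ring
      calc ((2*m+1:ℕ):ℝ)^(da+db) ≤ (3*(m:ℝ))^(da+db) :=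
            Real.rpow_le_rpow (by positivity) hc hP0.le
        _ = 3^(da+db) * (m:ℝ)^(da+db) := Real.mul_rpow (by norm_num) (by positivity)
    calc B m ≤ ((2*m+1:ℕ):ℝ)^(da+db)/(da+db) := h1
      _ ≤ 3^(da+db)*(m:ℝ)^(da+db)/(da+db) := by gcongr
  have hBN : B (N-1) ≤ 2^(da+db) * (N:ℝ)^(da+db) / (da+db) := by
    have h1 : B (N-1) ≤ ((2*(N-1)+1 : ℕ):ℝ)^(da+db) / (da+db) := by
      simp only [hB]
      exact sum_pow_le hP0 hP1 (2*(N-1)+1)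
    have h2 : ((2*(N-1)+1:ℕ):ℝ)^(da+db) ≤ 2^(da+db) * (N:ℝ)^(da+db) := by
      have hc1 : (2*(N-1)+1 : ℕ) ≤ 2*N := by omega
      have hc : ((2*(N-1)+1:ℕ):ℝ) ≤ 2*(N:ℝ) := by
        calc ((2*(N-1)+1:ℕ):ℝ) ≤ ((2*N:ℕ):ℝ) := by exact_mod_cast hc1
          _ = 2*(N:ℝ) := by push_cast; ring
      calc ((2*(N-1)+1:ℕ):ℝ)^(da+db) ≤ (2*(N:ℝ))^(da+db) :=
            Real.rpow_le_rpow (by positivity) hc hP0.le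
        _ = 2^(da+db) * (N:ℝ)^(da+db) := Real.mul_rpow (by norm_num) (by positivity)
    calc B (N-1) ≤ ((2*(N-1)+1:ℕ):ℝ)^(da+db)/(da+db) := h1
      _ ≤ 2^(da+db)*(N:ℝ)^(da+db)/(da+db) := by gcongr
  -- final assembly
  have hrpow0 : (0:ℝ) ≤ (m:ℝ)^(-(2*da+2*db)) := Real.rpow_nonneg hm0.le _
  have e1 : (m:ℝ)^(-(2*da+2*db)) * ((m:ℝ)^(da+db) * (m:ℝ)^(1:ℝ)) = (m:ℝ)^(1-(da+db)) := by
    rw [← Real.rpow_add hm0, ← Real.rpow_add hm0]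
    congr 1
    ring
  have e2 : (N:ℝ)^(da+db) * (N:ℝ)⁻¹ = (N:ℝ)^(da+db-1) := by
    rw [show ((N:ℝ))⁻¹ = (N:ℝ)^(-1:ℝ) from (Real.rpow_neg_one _).symm, ← Real.rpow_add hN0]
    congr 1
  have e3 : ((m:ℝ)/(N:ℝ))^(1-(da+db)) = (m:ℝ)^(1-(da+db)) * (N:ℝ)^(da+db-1) := by
    rw [Real.div_rpow hm0.le hN0.le, div_eq_mul_inv, ← Real.rpow_neg hN0.le]
    congr 1
    ring
  calc (m : ℝ) ^ (-(2 * da + 2 * db)) *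
        ∑ p ∈ I, ∑ q ∈ I,
          (N : ℝ)⁻¹ * |∑ r ∈ R, (1 - (|r| : ℝ) / (N : ℝ)) * γ₁₂ (r + p) * γ₂₁ (r - q)|
      ≤ (m:ℝ)^(-(2*da+2*db)) *
          ((N:ℝ)⁻¹ * C^2 * (2 * B m * ((2*(m:ℝ)+1) * (2 * B (N-1))))) :=
        mul_le_mul_of_nonneg_left hS hrpow0
    _ ≤ (m:ℝ)^(-(2*da+2*db)) *
          ((N:ℝ)⁻¹ * C^2 * (2 * (3^(da+db)*(m:ℝ)^(da+db)/(da+db)) *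
            ((3*(m:ℝ)) * (2 * (2^(da+db)*(N:ℝ)^(da+db)/(da+db)))))) := by
        apply mul_le_mul_of_nonneg_left _ hrpow0
        apply mul_le_mul_of_nonneg_left _ (by positivity)
        have h2m : (2*(m:ℝ)+1) ≤ 3*(m:ℝ) := by
          have : (1:ℝ) ≤ (m:ℝ) := by exact_mod_cast hm
          linarith
        apply mul_le_mul (by linarith [hBm]) _ _ (by positivity)
        · apply mul_le_mul h2m (by linarith [hBN]) (by have := hB0 (N-1); linarith) (by positivity)
        · have h1 := hB0 (N-1)
          have h2 : (0:ℝ) ≤ 2*(m:ℝ)+1 := by linarith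
          positivity
    _ = (12 * C^2 * 3^(da+db) * 2^(da+db) / ((da+db) * (da+db))) *
          ((m : ℝ) / (N : ℝ)) ^ (1 - (da+db)) := by
        rw [e3, ← e1, ← e2, Real.rpow_one]
        field_simp
        ring



/-- bound on the second product term of the covariance of sample
covariances in the proof of Lemma 1: if `|γ₁₂(τ)|, |γ₂₁(τ)| ≤ C(|τ|+1)^{d_a+d_b-1}`
with `d_a, d_b ∈ (0,1/2)`, `M → ∞`, `M ≤ n`, `M/n → 0`, then
`Σ_{p=-M}^{M} Σ_{q=-M}^{M} n⁻¹ |Σ_{r=-n+1}^{n-1} (1-|r|/n) γ₁₂(r+p) γ₂₁(r-q)| = o(M^{2d_a+2d_b})`. -/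
theorem second_product_term_small (da db C : ℝ)
    (hda0 : 0 < da) (hda : da < 1 / 2) (hdb0 : 0 < db) (hdb : db < 1 / 2) (hC : 0 < C)
    (γ₁₂ γ₂₁ : ℤ → ℝ)
    (hγ₁₂ : ∀ τ : ℤ, |γ₁₂ τ| ≤ C * ((|τ| : ℝ) + 1) ^ (da + db - 1))
    (hγ₂₁ : ∀ τ : ℤ, |γ₂₁ τ| ≤ C * ((|τ| : ℝ) + 1) ^ (da + db - 1))
    (M : ℕ → ℕ) (hMpos : ∀ n, 0 < M n) (hM : Tendsto M atTop atTop)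
    (hMle : ∀ n : ℕ, 0 < n → M n ≤ n)
    (hMn : Tendsto (fun n : ℕ => (M n : ℝ) / (n : ℝ)) atTop (nhds 0)) :
    Tendsto (fun n : ℕ => (M n : ℝ) ^ (-(2 * da + 2 * db)) *
        ∑ p ∈ Finset.Icc (-(M n : ℤ)) (M n : ℤ),
          ∑ q ∈ Finset.Icc (-(M n : ℤ)) (M n : ℤ),
            (n : ℝ)⁻¹ * |∑ r ∈ Finset.Icc (-(n : ℤ) + 1) ((n : ℤ) - 1),
              (1 - (|r| : ℝ) / (n : ℝ)) * γ₁₂ (r + p) * γ₂₁ (r - q)|)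
      atTop (nhds 0) := by
  have hP0 : (0:ℝ) < da + db := by linarith
  have hP1 : da + db < 1 := by linarith
  set K := 12 * C^2 * 3^(da+db) * 2^(da+db) / ((da+db) * (da+db)) with hK
  have hgtend : Tendsto (fun n : ℕ => K * ((M n : ℝ) / (n : ℝ)) ^ (1 - (da+db)))
      atTop (nhds 0) := by
    have hcont : ContinuousAt (fun x : ℝ => x ^ (1 - (da+db))) 0 :=
      Real.continuousAt_rpow_const 0 (1 - (da+db)) (Or.inr (by linarith))
    have h0 : Tendsto (fun n : ℕ => ((M n : ℝ) / (n : ℝ)) ^ (1 - (da+db)))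
        atTop (nhds 0) := by
      have := hcont.tendsto.comp hMn
      simpa [Function.comp_def, Real.zero_rpow (show (1:ℝ) - (da+db) ≠ 0 by intro h; linarith)] using this
    simpa using h0.const_mul K
  apply squeeze_zero' ?_ ?_ hgtend
  · filter_upwards with n
    apply mul_nonneg (Real.rpow_nonneg (Nat.cast_nonneg _) _)
    apply Finset.sum_nonneg; intro p _
    apply Finset.sum_nonneg; intro q _
    positivity
  · filter_upwards [Filter.eventually_ge_atTop 1] with n hn
    exact core_bound hda0 hda hdb0 hdb hC γ₁₂ γ₂₁ hγ₁₂ hγ₂₁ (M n) n (hMpos n) hn (hMle n hn)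
end

section
/- Let 0 ≤ d_x < 1/2, 0 ≤ d_ε < 1/2 and let k̃_0 ≥ 2 be an integer with k̃_0(2d_ε−1) > −1. Let M = M(n) be a sequence of positive integers with M → ∞, M ≤ n and M^{max(3, k̃_0−2)}/n → 0 as n → ∞. Then n^{−1} Σ_{p=−M}^{M} Σ_{q=−M}^{M} Σ_{r=−n+1}^{n−1} [ (|p|+1)^{d_x+d_ε−1}(|q|+1)^{d_x+d_ε−1} + (|r−p|+1)^{d_x+d_ε−1}(|r+q|+1)^{d_x+d_ε−1} ] (|r+q−p|+1)^{(k̃_0−1)(2d_ε−1)} = o(M^{2d_x + k̃_0(2d_ε−1) + 1}) as n → ∞. -/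
open Filter Finset

private lemma amgm_aux {x p : ℝ} (hx : 0 ≤ x) (hp0 : 0 ≤ p) (hp1 : p ≤ 1) :
    x ^ p ≤ p * x + (1 - p) := by
  have h := Real.geom_mean_le_arith_mean2_weighted hp0 (by linarith : (0:ℝ) ≤ 1 - p)
    hx zero_le_one (by ring)
  simpa using h

private lemma sum_rpow_le {γ : ℝ} (h1 : -1 < γ) (h0 : γ ≤ 0) (N : ℕ) :
    ∑ m ∈ range N, ((m : ℝ) + 1) ^ γ ≤ (N : ℝ) ^ (1 + γ) / (1 + γ) := by
  have hp0 : (0:ℝ) < 1 + γ := by linarith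
  induction N with
  | zero => simp [Real.zero_rpow (by linarith : (1:ℝ) + γ ≠ 0)]
  | succ N ih =>
    rw [Finset.sum_range_succ]
    have hN1 : (0:ℝ) < (N:ℝ) + 1 := by positivity
    have hdiv : ((N:ℝ) / ((N:ℝ)+1)) ^ (1+γ) = (N:ℝ)^(1+γ) / ((N:ℝ)+1)^(1+γ) :=
      Real.div_rpow (Nat.cast_nonneg N) hN1.le _
    have h := amgm_aux (show (0:ℝ) ≤ (N:ℝ)/((N:ℝ)+1) by positivity) hp0.le (by linarith)
    rw [hdiv] at h
    have hBpos : (0:ℝ) < ((N:ℝ)+1)^(1+γ) := Real.rpow_pos_of_pos hN1 _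
    have hmul := mul_le_mul_of_nonneg_right h hBpos.le
    rw [div_mul_cancel₀ _ hBpos.ne'] at hmul
    have hsplit : ((N:ℝ)+1)^(1+γ) = ((N:ℝ)+1) * ((N:ℝ)+1)^γ := by
      rw [Real.rpow_add hN1, Real.rpow_one]
    have e2 : ((1+γ) * ((N:ℝ)/((N:ℝ)+1)) + (1-(1+γ))) * (((N:ℝ)+1)^(1+γ))
        = (1+γ) * (N:ℝ) * ((N:ℝ)+1)^γ + (1-(1+γ)) * (((N:ℝ)+1) * ((N:ℝ)+1)^γ) := by
      rw [hsplit]; field_simp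
    rw [e2] at hmul
    have key : (N:ℝ)^(1+γ) + (1+γ) * ((N:ℝ)+1)^γ ≤ ((N:ℝ)+1)^(1+γ) := by
      rw [hsplit]; nlinarith [hmul]
    have step : (N:ℝ)^(1+γ)/(1+γ) + ((N:ℝ)+1)^γ ≤ ((N:ℝ)+1)^(1+γ)/(1+γ) := by
      rw [div_add' _ _ _ hp0.ne', div_le_div_iff₀ hp0 hp0]
      nlinarith [key]
    push_cast
    linarith [ih, step]

private lemma anti_rpow {γ : ℝ} (h0 : γ ≤ 0) {i j : ℕ} (hij : i ≤ j) :
    ((j : ℝ) + 1) ^ γ ≤ ((i : ℝ) + 1) ^ γ := by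
  have : (i:ℝ) ≤ (j:ℝ) := Nat.cast_le.mpr hij
  exact Real.rpow_le_rpow_of_nonpos (by positivity) (by linarith) h0

private lemma pos_side {γ : ℝ} (h0 : γ ≤ 0) (a b : ℤ) (ha : 0 ≤ a) :
    ∑ s ∈ Finset.Icc a b, ((s.natAbs : ℝ) + 1) ^ γ ≤
      ∑ m ∈ range (b + 1 - a).toNat, ((m : ℝ) + 1) ^ γ := by
  calc ∑ s ∈ Finset.Icc a b, ((s.natAbs : ℝ) + 1) ^ γ
      ≤ ∑ s ∈ Finset.Icc a b, (((s - a).toNat : ℝ) + 1) ^ γ := by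
        apply Finset.sum_le_sum
        intro s hs
        rw [Finset.mem_Icc] at hs
        exact anti_rpow h0 (by omega)
    _ = ∑ m ∈ range (b + 1 - a).toNat, ((m : ℝ) + 1) ^ γ := by
        apply Finset.sum_nbij' (fun s => (s - a).toNat) (fun m => a + (m : ℤ))
        · intro s hs; rw [Finset.mem_Icc] at hs; rw [Finset.mem_range]; omega
        · intro m hm; rw [Finset.mem_range] at hm; rw [Finset.mem_Icc]; omega
        · intro s hs; rw [Finset.mem_Icc] at hs; omega
        · intro m hm; rw [Finset.mem_range] at hm; omega
        · intro s hs; rfl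

private lemma neg_side {γ : ℝ} (h0 : γ ≤ 0) (a b : ℤ) (hb : b ≤ -1) :
    ∑ s ∈ Finset.Icc a b, ((s.natAbs : ℝ) + 1) ^ γ ≤
      ∑ m ∈ range (b + 1 - a).toNat, ((m : ℝ) + 1) ^ γ := by
  calc ∑ s ∈ Finset.Icc a b, ((s.natAbs : ℝ) + 1) ^ γ
      ≤ ∑ s ∈ Finset.Icc a b, (((b - s).toNat : ℝ) + 1) ^ γ := by
        apply Finset.sum_le_sum
        intro s hs
        rw [Finset.mem_Icc] at hs
        exact anti_rpow h0 (by omega)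
    _ = ∑ m ∈ range (b + 1 - a).toNat, ((m : ℝ) + 1) ^ γ := by
        apply Finset.sum_nbij' (fun s => (b - s).toNat) (fun m => b - (m : ℤ))
        · intro s hs; rw [Finset.mem_Icc] at hs; rw [Finset.mem_range]; omega
        · intro m hm; rw [Finset.mem_range] at hm; rw [Finset.mem_Icc]; omega
        · intro s hs; rw [Finset.mem_Icc] at hs; omega
        · intro m hm; rw [Finset.mem_range] at hm; omega
        · intro s hs; rfl

private lemma rpow_base_nonneg (z : ℤ) : (0:ℝ) ≤ (|z| : ℝ) + 1 := by
  have : (0:ℝ) ≤ (|z| : ℝ) := by exact_mod_cast abs_nonneg z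
  linarith

private lemma lemB {γ : ℝ} (h0 : γ ≤ 0) (a b c : ℤ) :
    ∑ s ∈ Finset.Icc a b, ((|s + c| : ℝ) + 1) ^ γ ≤
      2 * ∑ m ∈ range (b + 1 - a).toNat, ((m : ℝ) + 1) ^ γ := by
  have hcast : ∀ z : ℤ, |(z : ℝ)| = ((z.natAbs : ℕ) : ℝ) := by
    intro z
    rw [Nat.cast_natAbs]
    exact Int.cast_abs.symm
  have hre : ∑ s ∈ Finset.Icc a b, ((|s + c| : ℝ) + 1) ^ γ
      = ∑ s ∈ Finset.Icc (a + c) (b + c), (((s.natAbs : ℕ) : ℝ) + 1) ^ γ := by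
    rw [← Finset.map_add_right_Icc a b c, Finset.sum_map]
    apply Finset.sum_congr rfl
    intro s _
    simp only [addRightEmbedding_apply]
    rw [show ((s : ℝ) + (c : ℝ)) = (((s + c : ℤ) : ℝ)) by push_cast; ring, hcast]
  rw [hre]
  have hsplit : Finset.Icc (a + c) (b + c)
      = Finset.Icc (a + c) (min (b + c) (-1)) ∪ Finset.Icc (max (a + c) 0) (b + c) := by
    ext s
    simp only [Finset.mem_union, Finset.mem_Icc]
    omega
  have hdisj : Disjoint (Finset.Icc (a + c) (min (b + c) (-1)))
      (Finset.Icc (max (a + c) 0) (b + c)) := by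
    rw [Finset.disjoint_left]
    intro s hs hs'
    rw [Finset.mem_Icc] at hs hs'
    omega
  rw [hsplit, Finset.sum_union hdisj, two_mul]
  have hnonneg : ∀ m ∈ range (b + 1 - a).toNat, (0:ℝ) ≤ ((m : ℝ) + 1) ^ γ := by
    intro m _; positivity
  gcongr ?_ + ?_
  · calc ∑ s ∈ Finset.Icc (a + c) (min (b + c) (-1)), ((s.natAbs : ℝ) + 1) ^ γ
        ≤ ∑ m ∈ range (min (b + c) (-1) + 1 - (a + c)).toNat, ((m : ℝ) + 1) ^ γ :=
          neg_side h0 _ _ (min_le_right _ _)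
      _ ≤ ∑ m ∈ range (b + 1 - a).toNat, ((m : ℝ) + 1) ^ γ := by
          apply Finset.sum_le_sum_of_subset_of_nonneg _ (fun m hm _ => hnonneg m hm)
          apply Finset.range_subset_range.mpr
          omega
  · calc ∑ s ∈ Finset.Icc (max (a + c) 0) (b + c), ((s.natAbs : ℝ) + 1) ^ γ
        ≤ ∑ m ∈ range (b + c + 1 - max (a + c) 0).toNat, ((m : ℝ) + 1) ^ γ :=
          pos_side h0 _ _ (le_max_right _ _)
      _ ≤ ∑ m ∈ range (b + 1 - a).toNat, ((m : ℝ) + 1) ^ γ := by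
          apply Finset.sum_le_sum_of_subset_of_nonneg _ (fun m hm _ => hnonneg m hm)
          apply Finset.range_subset_range.mpr
          omega

private lemma lemC {γ : ℝ} (h1 : -1 < γ) (h0 : γ ≤ 0) (a b c : ℤ) :
    ∑ s ∈ Finset.Icc a b, ((|s + c| : ℝ) + 1) ^ γ ≤
      2 / (1 + γ) * (((b + 1 - a).toNat : ℝ)) ^ (1 + γ) := by
  calc ∑ s ∈ Finset.Icc a b, ((|s + c| : ℝ) + 1) ^ γ
      ≤ 2 * ∑ m ∈ range (b + 1 - a).toNat, ((m : ℝ) + 1) ^ γ := lemB h0 a b c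
    _ ≤ 2 * ((((b + 1 - a).toNat : ℕ) : ℝ) ^ (1 + γ) / (1 + γ)) := by
        have := sum_rpow_le h1 h0 (b + 1 - a).toNat
        linarith
    _ = 2 / (1 + γ) * (((b + 1 - a).toNat : ℝ)) ^ (1 + γ) := by ring

private lemma rpow_prod_bound {e : ℝ} (he0 : 0 ≤ e) (he1 : e ≤ 1) {x C y : ℝ}
    (hC : 1 ≤ C) (hy : 0 ≤ y) (hx0 : 0 ≤ x) (hxy : x ≤ C * y) :
    x ^ e ≤ C * y ^ e := by
  calc x ^ e ≤ (C * y) ^ e := Real.rpow_le_rpow hx0 hxy he0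
    _ = C ^ e * y ^ e := Real.mul_rpow (by linarith) hy
    _ ≤ C * y ^ e := by
        have h1 : C ^ e ≤ C ^ (1:ℝ) := Real.rpow_le_rpow_of_exponent_le hC he1
        rw [Real.rpow_one] at h1
        exact mul_le_mul_of_nonneg_right h1 (Real.rpow_nonneg hy e)

private lemma windowC {γ : ℝ} (h1 : -1 < γ) (h0 : γ ≤ 0) (a b c : ℤ) {C y : ℝ}
    (hC : 1 ≤ C) (hy : 0 ≤ y) (hlen : ((b + 1 - a).toNat : ℝ) ≤ C * y)
    (F : ℤ → ℝ) (hF : ∀ s, F s = (|(s : ℝ) + (c : ℝ)| + 1) ^ γ) :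
    ∑ s ∈ Finset.Icc a b, F s ≤ 2 / (1 + γ) * C * y ^ (1 + γ) := by
  have hp : (0:ℝ) < 1 + γ := by linarith
  have h := lemC h1 h0 a b c
  have h2 : (((b + 1 - a).toNat : ℝ)) ^ (1 + γ) ≤ C * y ^ (1 + γ) :=
    rpow_prod_bound hp.le (by linarith) hC hy (Nat.cast_nonneg _) hlen
  calc ∑ s ∈ Finset.Icc a b, F s
      = ∑ s ∈ Finset.Icc a b, (|(s : ℝ) + (c : ℝ)| + 1) ^ γ :=
        Finset.sum_congr rfl (fun s _ => hF s)
    _ ≤ 2 / (1 + γ) * (((b + 1 - a).toNat : ℝ)) ^ (1 + γ) := h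
    _ ≤ 2 / (1 + γ) * (C * y ^ (1 + γ)) := by
        apply mul_le_mul_of_nonneg_left h2 (by positivity)
    _ = 2 / (1 + γ) * C * y ^ (1 + γ) := by ring

private lemma main_bound {α β : ℝ} (hα1 : -1 < α) (hα0 : α ≤ 0) (hβ1 : -1 < β) (hβ0 : β ≤ 0)
    (M n : ℕ) (hM1 : 1 ≤ M) (hMn : M ≤ n) :
    (∑ p ∈ Finset.Icc (-(M : ℤ)) (M : ℤ),
      ∑ q ∈ Finset.Icc (-(M : ℤ)) (M : ℤ),
        ∑ r ∈ Finset.Icc (-(n : ℤ) + 1) ((n : ℤ) - 1),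
          (((|p| : ℝ) + 1) ^ α * ((|q| : ℝ) + 1) ^ α +
            ((|r - p| : ℝ) + 1) ^ α * ((|r + q| : ℝ) + 1) ^ α) *
            ((|r + q - p| : ℝ) + 1) ^ β)
    ≤ (2/(1+α))^2 * (2/(1+β)) * 45 *
        ((M:ℝ)^(1+α) * (M:ℝ)^(1+α) * (n:ℝ)^(1+β)
          + (M:ℝ)^(1+α) * (M:ℝ)^(1+β) * (n:ℝ)^(1+α)) := by
  have hn1 : 1 ≤ n := le_trans hM1 hMn
  have hMR : (1:ℝ) ≤ (M:ℝ) := by exact_mod_cast hM1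
  have hnR : (1:ℝ) ≤ (n:ℝ) := by exact_mod_cast hn1
  have hMnR : (M:ℝ) ≤ (n:ℝ) := by exact_mod_cast hMn
  have hpA : (0:ℝ) < 1 + α := by linarith
  have hpB : (0:ℝ) < 1 + β := by linarith
  have hlen1 : (((M:ℤ) + 1 - -(M:ℤ)).toNat : ℝ) ≤ 3 * (M:ℝ) := by
    have h : ((M:ℤ) + 1 - -(M:ℤ)).toNat = 2 * M + 1 := by omega
    rw [h]; push_cast; linarith
  have hlen2 : ((((n:ℤ) - 1) + 1 - (-(n:ℤ) + 1)).toNat : ℝ) ≤ 2 * (n:ℝ) := by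
    have h : (((n:ℤ) - 1) + 1 - (-(n:ℤ) + 1)).toNat = 2 * n - 1 := by omega
    rw [h]
    calc ((2*n-1 : ℕ) : ℝ) ≤ ((2*n : ℕ) : ℝ) := by exact_mod_cast Nat.sub_le _ _
      _ = 2 * (n:ℝ) := by push_cast; ring
  have hlen4 : ((((n:ℤ) + (M:ℤ)) + 1 - -((n:ℤ) + (M:ℤ))).toNat : ℝ) ≤ 5 * (n:ℝ) := by
    have h : (((n:ℤ) + (M:ℤ)) + 1 - -((n:ℤ) + (M:ℤ))).toNat = 2*n + 2*M + 1 := by omega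
    rw [h]; push_cast; linarith
  -- the p/q-window bound with exponent α
  have hpsum : ∑ p ∈ Finset.Icc (-(M : ℤ)) (M : ℤ), ((|p| : ℝ) + 1) ^ α
      ≤ 2/(1+α) * 3 * (M:ℝ)^(1+α) := by
    apply windowC hα1 hα0 (-(M:ℤ)) (M:ℤ) 0 (by norm_num) (by positivity) hlen1
    intro s; norm_num
  -- Part S₁ --------------------------------------------------------------
  have hrsum : ∀ p q : ℤ,
      ∑ r ∈ Finset.Icc (-(n : ℤ) + 1) ((n : ℤ) - 1), ((|r + q - p| : ℝ) + 1) ^ β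
        ≤ 2/(1+β) * 2 * (n:ℝ)^(1+β) := by
    intro p q
    apply windowC hβ1 hβ0 (-(n:ℤ)+1) ((n:ℤ)-1) (q - p) one_le_two (by positivity) hlen2
    intro s
    rw [show (s:ℝ) + ((q - p : ℤ) : ℝ) = (s:ℝ) + (q:ℝ) - (p:ℝ) by push_cast; ring]
  have bound1 : (∑ p ∈ Finset.Icc (-(M : ℤ)) (M : ℤ),
      ∑ q ∈ Finset.Icc (-(M : ℤ)) (M : ℤ),
        ∑ r ∈ Finset.Icc (-(n : ℤ) + 1) ((n : ℤ) - 1),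
          (((|p| : ℝ) + 1) ^ α * ((|q| : ℝ) + 1) ^ α) * ((|r + q - p| : ℝ) + 1) ^ β)
      ≤ (2/(1+α) * 3 * (M:ℝ)^(1+α)) * (2/(1+α) * 3 * (M:ℝ)^(1+α))
          * (2/(1+β) * 2 * (n:ℝ)^(1+β)) := by
    calc (∑ p ∈ Finset.Icc (-(M : ℤ)) (M : ℤ),
        ∑ q ∈ Finset.Icc (-(M : ℤ)) (M : ℤ),
          ∑ r ∈ Finset.Icc (-(n : ℤ) + 1) ((n : ℤ) - 1),
            (((|p| : ℝ) + 1) ^ α * ((|q| : ℝ) + 1) ^ α) * ((|r + q - p| : ℝ) + 1) ^ β)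
        ≤ ∑ p ∈ Finset.Icc (-(M : ℤ)) (M : ℤ),
            ∑ q ∈ Finset.Icc (-(M : ℤ)) (M : ℤ),
              (((|p| : ℝ) + 1) ^ α * ((|q| : ℝ) + 1) ^ α) * (2/(1+β) * 2 * (n:ℝ)^(1+β)) := by
          apply Finset.sum_le_sum; intro p _
          apply Finset.sum_le_sum; intro q _
          rw [← Finset.mul_sum]
          exact mul_le_mul_of_nonneg_left (hrsum p q) (by positivity)
      _ = (∑ p ∈ Finset.Icc (-(M : ℤ)) (M : ℤ), ((|p| : ℝ) + 1) ^ α)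
            * (∑ q ∈ Finset.Icc (-(M : ℤ)) (M : ℤ), ((|q| : ℝ) + 1) ^ α)
            * (2/(1+β) * 2 * (n:ℝ)^(1+β)) := by
          rw [Finset.sum_mul_sum, Finset.sum_mul]
          apply Finset.sum_congr rfl; intro p _
          rw [Finset.sum_mul]
      _ ≤ (2/(1+α) * 3 * (M:ℝ)^(1+α)) * (2/(1+α) * 3 * (M:ℝ)^(1+α))
            * (2/(1+β) * 2 * (n:ℝ)^(1+β)) := by
          have h1 : (0:ℝ) ≤ ∑ q ∈ Finset.Icc (-(M : ℤ)) (M : ℤ), ((|q| : ℝ) + 1) ^ α := by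
            apply Finset.sum_nonneg; intro q _; positivity
          gcongr <;> positivity
  -- Part S₂ --------------------------------------------------------------
  have stepA : ∀ p ∈ Finset.Icc (-(M : ℤ)) (M : ℤ), ∀ q : ℤ,
      (∑ r ∈ Finset.Icc (-(n : ℤ) + 1) ((n : ℤ) - 1),
        (((|r - p| : ℝ) + 1) ^ α * ((|r + q| : ℝ) + 1) ^ α) * ((|r + q - p| : ℝ) + 1) ^ β)
      ≤ ∑ u ∈ Finset.Icc (-((n:ℤ) + (M:ℤ))) ((n:ℤ) + (M:ℤ)),
          (((|u| : ℝ) + 1) ^ α * ((|p + (u + q)| : ℝ) + 1) ^ α) * ((|q + u| : ℝ) + 1) ^ β := by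
    intro p hp q
    rw [Finset.mem_Icc] at hp
    calc (∑ r ∈ Finset.Icc (-(n : ℤ) + 1) ((n : ℤ) - 1),
        (((|r - p| : ℝ) + 1) ^ α * ((|r + q| : ℝ) + 1) ^ α) * ((|r + q - p| : ℝ) + 1) ^ β)
        = ∑ u ∈ Finset.Icc (-(n:ℤ) + 1 + -p) ((n:ℤ) - 1 + -p),
            (((|u| : ℝ) + 1) ^ α * ((|p + (u + q)| : ℝ) + 1) ^ α) * ((|q + u| : ℝ) + 1) ^ β := by
          rw [← Finset.map_add_right_Icc (-(n:ℤ) + 1) ((n:ℤ) - 1) (-p), Finset.sum_map]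
          apply Finset.sum_congr rfl
          intro r _
          simp only [addRightEmbedding_apply]
          rw [show ((r + -p : ℤ) : ℝ) = (r:ℝ) - (p:ℝ) by push_cast; ring]
          rw [show (p:ℝ) + ((r:ℝ) - (p:ℝ) + (q:ℝ)) = (r:ℝ) + (q:ℝ) by ring]
          rw [show (q:ℝ) + ((r:ℝ) - (p:ℝ)) = (r:ℝ) + (q:ℝ) - (p:ℝ) by ring]
      _ ≤ ∑ u ∈ Finset.Icc (-((n:ℤ) + (M:ℤ))) ((n:ℤ) + (M:ℤ)),
            (((|u| : ℝ) + 1) ^ α * ((|p + (u + q)| : ℝ) + 1) ^ α) * ((|q + u| : ℝ) + 1) ^ β := by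
          apply Finset.sum_le_sum_of_subset_of_nonneg
          · intro u hu
            rw [Finset.mem_Icc] at hu ⊢
            omega
          · intro u _ _; positivity
  have stepB : (∑ p ∈ Finset.Icc (-(M : ℤ)) (M : ℤ),
      ∑ q ∈ Finset.Icc (-(M : ℤ)) (M : ℤ),
        ∑ r ∈ Finset.Icc (-(n : ℤ) + 1) ((n : ℤ) - 1),
          (((|r - p| : ℝ) + 1) ^ α * ((|r + q| : ℝ) + 1) ^ α) * ((|r + q - p| : ℝ) + 1) ^ β)
      ≤ ∑ u ∈ Finset.Icc (-((n:ℤ) + (M:ℤ))) ((n:ℤ) + (M:ℤ)),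
          ∑ q ∈ Finset.Icc (-(M : ℤ)) (M : ℤ),
            ∑ p ∈ Finset.Icc (-(M : ℤ)) (M : ℤ),
              (((|u| : ℝ) + 1) ^ α * ((|p + (u + q)| : ℝ) + 1) ^ α) * ((|q + u| : ℝ) + 1) ^ β := by
    calc (∑ p ∈ Finset.Icc (-(M : ℤ)) (M : ℤ),
        ∑ q ∈ Finset.Icc (-(M : ℤ)) (M : ℤ),
          ∑ r ∈ Finset.Icc (-(n : ℤ) + 1) ((n : ℤ) - 1),
            (((|r - p| : ℝ) + 1) ^ α * ((|r + q| : ℝ) + 1) ^ α) * ((|r + q - p| : ℝ) + 1) ^ β)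
        ≤ ∑ p ∈ Finset.Icc (-(M : ℤ)) (M : ℤ),
            ∑ q ∈ Finset.Icc (-(M : ℤ)) (M : ℤ),
              ∑ u ∈ Finset.Icc (-((n:ℤ) + (M:ℤ))) ((n:ℤ) + (M:ℤ)),
                (((|u| : ℝ) + 1) ^ α * ((|p + (u + q)| : ℝ) + 1) ^ α) * ((|q + u| : ℝ) + 1) ^ β := by
          apply Finset.sum_le_sum; intro p hp
          apply Finset.sum_le_sum; intro q _
          exact stepA p hp q
      _ = ∑ p ∈ Finset.Icc (-(M : ℤ)) (M : ℤ),
            ∑ u ∈ Finset.Icc (-((n:ℤ) + (M:ℤ))) ((n:ℤ) + (M:ℤ)),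
              ∑ q ∈ Finset.Icc (-(M : ℤ)) (M : ℤ),
                (((|u| : ℝ) + 1) ^ α * ((|p + (u + q)| : ℝ) + 1) ^ α) * ((|q + u| : ℝ) + 1) ^ β :=
          Finset.sum_congr rfl (fun p _ => Finset.sum_comm)
      _ = ∑ u ∈ Finset.Icc (-((n:ℤ) + (M:ℤ))) ((n:ℤ) + (M:ℤ)),
            ∑ p ∈ Finset.Icc (-(M : ℤ)) (M : ℤ),
              ∑ q ∈ Finset.Icc (-(M : ℤ)) (M : ℤ),
                (((|u| : ℝ) + 1) ^ α * ((|p + (u + q)| : ℝ) + 1) ^ α) * ((|q + u| : ℝ) + 1) ^ β :=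
          Finset.sum_comm
      _ = ∑ u ∈ Finset.Icc (-((n:ℤ) + (M:ℤ))) ((n:ℤ) + (M:ℤ)),
            ∑ q ∈ Finset.Icc (-(M : ℤ)) (M : ℤ),
              ∑ p ∈ Finset.Icc (-(M : ℤ)) (M : ℤ),
                (((|u| : ℝ) + 1) ^ α * ((|p + (u + q)| : ℝ) + 1) ^ α) * ((|q + u| : ℝ) + 1) ^ β :=
          Finset.sum_congr rfl (fun u _ => Finset.sum_comm)
  have husum : ∑ u ∈ Finset.Icc (-((n:ℤ) + (M:ℤ))) ((n:ℤ) + (M:ℤ)), ((|u| : ℝ) + 1) ^ α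
      ≤ 2/(1+α) * 5 * (n:ℝ)^(1+α) := by
    apply windowC hα1 hα0 (-((n:ℤ) + (M:ℤ))) ((n:ℤ) + (M:ℤ)) 0 (by norm_num) (by positivity) hlen4
    intro s; norm_num
  have hinnerp : ∀ u q : ℤ,
      ∑ p ∈ Finset.Icc (-(M : ℤ)) (M : ℤ), ((|p + (u + q)| : ℝ) + 1) ^ α
        ≤ 2/(1+α) * 3 * (M:ℝ)^(1+α) := by
    intro u q
    apply windowC hα1 hα0 (-(M:ℤ)) (M:ℤ) (u + q) (by norm_num) (by positivity) hlen1
    intro s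
    rw [show (s:ℝ) + ((u + q : ℤ) : ℝ) = (s:ℝ) + ((u:ℝ) + (q:ℝ)) by push_cast; ring]
  have hinnerq : ∀ u : ℤ,
      ∑ q ∈ Finset.Icc (-(M : ℤ)) (M : ℤ), ((|q + u| : ℝ) + 1) ^ β
        ≤ 2/(1+β) * 3 * (M:ℝ)^(1+β) := by
    intro u
    exact windowC hβ1 hβ0 (-(M:ℤ)) (M:ℤ) u (by norm_num) (by positivity) hlen1 _ (fun s => rfl)
  have bound2 : (∑ p ∈ Finset.Icc (-(M : ℤ)) (M : ℤ),
      ∑ q ∈ Finset.Icc (-(M : ℤ)) (M : ℤ),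
        ∑ r ∈ Finset.Icc (-(n : ℤ) + 1) ((n : ℤ) - 1),
          (((|r - p| : ℝ) + 1) ^ α * ((|r + q| : ℝ) + 1) ^ α) * ((|r + q - p| : ℝ) + 1) ^ β)
      ≤ (2/(1+α) * 5 * (n:ℝ)^(1+α)) * ((2/(1+β) * 3 * (M:ℝ)^(1+β)) * (2/(1+α) * 3 * (M:ℝ)^(1+α))) := by
    refine le_trans stepB ?_
    calc (∑ u ∈ Finset.Icc (-((n:ℤ) + (M:ℤ))) ((n:ℤ) + (M:ℤ)),
        ∑ q ∈ Finset.Icc (-(M : ℤ)) (M : ℤ),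
          ∑ p ∈ Finset.Icc (-(M : ℤ)) (M : ℤ),
            (((|u| : ℝ) + 1) ^ α * ((|p + (u + q)| : ℝ) + 1) ^ α) * ((|q + u| : ℝ) + 1) ^ β)
        ≤ ∑ u ∈ Finset.Icc (-((n:ℤ) + (M:ℤ))) ((n:ℤ) + (M:ℤ)),
            ∑ q ∈ Finset.Icc (-(M : ℤ)) (M : ℤ),
              (((|u| : ℝ) + 1) ^ α * ((|q + u| : ℝ) + 1) ^ β) * (2/(1+α) * 3 * (M:ℝ)^(1+α)) := by
          apply Finset.sum_le_sum; intro u _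
          apply Finset.sum_le_sum; intro q _
          have e : ∀ p : ℤ, (((|u| : ℝ) + 1) ^ α * ((|p + (u + q)| : ℝ) + 1) ^ α)
              * ((|q + u| : ℝ) + 1) ^ β
              = (((|u| : ℝ) + 1) ^ α * ((|q + u| : ℝ) + 1) ^ β) * ((|p + (u + q)| : ℝ) + 1) ^ α :=
            fun p => by ring
          rw [Finset.sum_congr rfl (fun p _ => e p), ← Finset.mul_sum]
          exact mul_le_mul_of_nonneg_left (hinnerp u q) (by positivity)
      _ ≤ ∑ u ∈ Finset.Icc (-((n:ℤ) + (M:ℤ))) ((n:ℤ) + (M:ℤ)),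
            (((|u| : ℝ) + 1) ^ α * (2/(1+β) * 3 * (M:ℝ)^(1+β))) * (2/(1+α) * 3 * (M:ℝ)^(1+α)) := by
          apply Finset.sum_le_sum; intro u _
          have e : ∀ q : ℤ, (((|u| : ℝ) + 1) ^ α * ((|q + u| : ℝ) + 1) ^ β)
              * (2/(1+α) * 3 * (M:ℝ)^(1+α))
              = (((|u| : ℝ) + 1) ^ α * (2/(1+α) * 3 * (M:ℝ)^(1+α))) * ((|q + u| : ℝ) + 1) ^ β :=
            fun q => by ring
          rw [Finset.sum_congr rfl (fun q _ => e q), ← Finset.mul_sum]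
          have := mul_le_mul_of_nonneg_left (hinnerq u) (show (0:ℝ) ≤ ((|u| : ℝ) + 1) ^ α * (2/(1+α) * 3 * (M:ℝ)^(1+α)) by positivity)
          calc ((|u| : ℝ) + 1) ^ α * (2/(1+α) * 3 * (M:ℝ)^(1+α))
                * (∑ q ∈ Finset.Icc (-(M : ℤ)) (M : ℤ), ((|q + u| : ℝ) + 1) ^ β)
              ≤ ((|u| : ℝ) + 1) ^ α * (2/(1+α) * 3 * (M:ℝ)^(1+α)) * (2/(1+β) * 3 * (M:ℝ)^(1+β)) := this
            _ = ((|u| : ℝ) + 1) ^ α * (2/(1+β) * 3 * (M:ℝ)^(1+β)) * (2/(1+α) * 3 * (M:ℝ)^(1+α)) := by ring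
      _ = (∑ u ∈ Finset.Icc (-((n:ℤ) + (M:ℤ))) ((n:ℤ) + (M:ℤ)), ((|u| : ℝ) + 1) ^ α)
            * ((2/(1+β) * 3 * (M:ℝ)^(1+β)) * (2/(1+α) * 3 * (M:ℝ)^(1+α))) := by
          rw [← Finset.sum_mul, ← Finset.sum_mul, mul_assoc]
      _ ≤ (2/(1+α) * 5 * (n:ℝ)^(1+α)) * ((2/(1+β) * 3 * (M:ℝ)^(1+β)) * (2/(1+α) * 3 * (M:ℝ)^(1+α))) := by
          gcongr <;> positivity
  -- combine ---------------------------------------------------------------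
  have hsplit : (∑ p ∈ Finset.Icc (-(M : ℤ)) (M : ℤ),
      ∑ q ∈ Finset.Icc (-(M : ℤ)) (M : ℤ),
        ∑ r ∈ Finset.Icc (-(n : ℤ) + 1) ((n : ℤ) - 1),
          (((|p| : ℝ) + 1) ^ α * ((|q| : ℝ) + 1) ^ α +
            ((|r - p| : ℝ) + 1) ^ α * ((|r + q| : ℝ) + 1) ^ α) *
            ((|r + q - p| : ℝ) + 1) ^ β)
      = (∑ p ∈ Finset.Icc (-(M : ℤ)) (M : ℤ),
          ∑ q ∈ Finset.Icc (-(M : ℤ)) (M : ℤ),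
            ∑ r ∈ Finset.Icc (-(n : ℤ) + 1) ((n : ℤ) - 1),
              (((|p| : ℝ) + 1) ^ α * ((|q| : ℝ) + 1) ^ α) * ((|r + q - p| : ℝ) + 1) ^ β)
        + (∑ p ∈ Finset.Icc (-(M : ℤ)) (M : ℤ),
            ∑ q ∈ Finset.Icc (-(M : ℤ)) (M : ℤ),
              ∑ r ∈ Finset.Icc (-(n : ℤ) + 1) ((n : ℤ) - 1),
                (((|r - p| : ℝ) + 1) ^ α * ((|r + q| : ℝ) + 1) ^ α) * ((|r + q - p| : ℝ) + 1) ^ β) := by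
    simp only [add_mul, Finset.sum_add_distrib]
  rw [hsplit]
  have hXnn : (0:ℝ) ≤ (M:ℝ)^(1+α) := by positivity
  have hYnn : (0:ℝ) ≤ (M:ℝ)^(1+β) := by positivity
  have hZnn : (0:ℝ) ≤ (n:ℝ)^(1+α) := by positivity
  have hWnn : (0:ℝ) ≤ (n:ℝ)^(1+β) := by positivity
  have hcA : (0:ℝ) ≤ 2/(1+α) := by positivity
  have hcB : (0:ℝ) ≤ 2/(1+β) := by positivity
  nlinarith [bound1, bound2, mul_nonneg (mul_nonneg hXnn hXnn) hWnn,
    mul_nonneg (mul_nonneg hXnn hYnn) hZnn,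
    mul_nonneg hcA hcB, sq_nonneg (2/(1+α)),
    mul_nonneg (mul_nonneg (mul_nonneg (sq_nonneg (2/(1+α))) hcB) (mul_nonneg (mul_nonneg hXnn hXnn) hWnn)) (by norm_num : (0:ℝ) ≤ 1),
    mul_nonneg (mul_nonneg (sq_nonneg (2/(1+α))) hcB) (mul_nonneg (mul_nonneg hXnn hYnn) hZnn)]

private lemma rpow_reduce {m nn : ℝ} (hm : 0 < m) (hn : 0 < nn) (t e1 e2 e3 c : ℝ)
    (h1 : e1 + e2 - t = -c) (h2 : e3 - 1 = c) :
    m ^ (-t) * (nn⁻¹ * (m ^ e1 * m ^ e2 * nn ^ e3)) = (m / nn) ^ (-c) := by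
  have hm1 : m ^ (-t) * m ^ e1 * m ^ e2 = m ^ (-c) := by
    rw [← Real.rpow_add hm, ← Real.rpow_add hm, show -t + e1 + e2 = -c by linarith]
  have hn1 : nn⁻¹ * nn ^ e3 = nn ^ c := by
    rw [show nn⁻¹ = nn ^ (-1 : ℝ) from (Real.rpow_neg_one nn).symm,
      ← Real.rpow_add hn, show (-1 : ℝ) + e3 = c by linarith]
  calc m ^ (-t) * (nn⁻¹ * (m ^ e1 * m ^ e2 * nn ^ e3))
      = (m ^ (-t) * m ^ e1 * m ^ e2) * (nn⁻¹ * nn ^ e3) := by ring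
    _ = m ^ (-c) * nn ^ c := by rw [hm1, hn1]
    _ = (m / nn) ^ (-c) := by
        rw [Real.div_rpow hm.le hn.le, Real.rpow_neg hn.le, div_inv_eq_mul]

/-- the fourth-cumulant bound of Part I of the proof of Lemma 1
(case `a = 1`, residual Hermite rank `k̃₀ ≥ 2` with `k̃₀(2d_ε-1) > -1`):
under `M → ∞`, `M ≤ n`, `M^{max(3,k̃₀-2)}/n → 0`,
the cumulant sum is `o(M^{2d_x + k̃₀(2d_ε-1) + 1})`. -/
theorem partI_cumulant_bound (dx dε : ℝ)
    (hdx0 : 0 ≤ dx) (hdx : dx < 1 / 2) (hdε0 : 0 ≤ dε) (hdε : dε < 1 / 2)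
    (ktil0 : ℕ) (hktil0 : 2 ≤ ktil0) (hlm : (-1 : ℝ) < (ktil0 : ℝ) * (2 * dε - 1))
    (M : ℕ → ℕ) (hMpos : ∀ n, 0 < M n) (hM : Tendsto M atTop atTop)
    (hMle : ∀ n : ℕ, 0 < n → M n ≤ n)
    (hMn : Tendsto (fun n : ℕ => (M n : ℝ) ^ (max 3 (ktil0 - 2)) / (n : ℝ))
      atTop (nhds 0)) :
    Tendsto (fun n : ℕ =>
        (M n : ℝ) ^ (-(2 * dx + (ktil0 : ℝ) * (2 * dε - 1) + 1)) *
          ((n : ℝ)⁻¹ *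
            ∑ p ∈ Finset.Icc (-(M n : ℤ)) (M n : ℤ),
              ∑ q ∈ Finset.Icc (-(M n : ℤ)) (M n : ℤ),
                ∑ r ∈ Finset.Icc (-(n : ℤ) + 1) ((n : ℤ) - 1),
                  (((|p| : ℝ) + 1) ^ (dx + dε - 1) * ((|q| : ℝ) + 1) ^ (dx + dε - 1) +
                      ((|r - p| : ℝ) + 1) ^ (dx + dε - 1) *
                        ((|r + q| : ℝ) + 1) ^ (dx + dε - 1)) *
                    ((|r + q - p| : ℝ) + 1) ^ (((ktil0 : ℝ) - 1) * (2 * dε - 1))))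
      atTop (nhds 0) := by
  have hk2 : (2:ℝ) ≤ (ktil0 : ℝ) := by exact_mod_cast hktil0
  have hdε4 : 1/4 < dε := by nlinarith
  set α := dx + dε - 1 with hαdef
  set β := ((ktil0 : ℝ) - 1) * (2 * dε - 1) with hβdef
  have hα1 : -1 < α := by rw [hαdef]; linarith
  have hα0 : α < 0 := by rw [hαdef]; linarith
  have hβ1 : -1 < β := by rw [hβdef]; nlinarith
  have hβ0 : β < 0 := by rw [hβdef]; nlinarith
  have hTeq : 2 * dx + (ktil0 : ℝ) * (2 * dε - 1) + 1 = 2 + 2*α + β := by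
    rw [hαdef, hβdef]; ring
  set K : ℝ := (2/(1+α))^2 * (2/(1+β)) * 45 with hKdef
  -- M/n → 0
  have hq0 : Tendsto (fun n : ℕ => (M n : ℝ) / (n : ℝ)) atTop (nhds 0) := by
    apply squeeze_zero' (Eventually.of_forall (fun n => by positivity))
      (g := fun n : ℕ => (M n : ℝ) ^ (max 3 (ktil0 - 2)) / (n : ℝ)) ?_ hMn
    filter_upwards [eventually_ge_atTop 1] with n hn
    have h1M : (1:ℝ) ≤ (M n : ℝ) := by exact_mod_cast hMpos n
    gcongr
    · exact le_self_pow₀ h1M (by omega)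
  have hlim : ∀ c : ℝ, 0 < c →
      Tendsto (fun n : ℕ => ((M n : ℝ) / (n : ℝ)) ^ c) atTop (nhds 0) := by
    intro c hc
    have hcont := (Real.continuousAt_rpow_const 0 c (Or.inr hc.le)).tendsto.comp hq0
    simpa [Real.zero_rpow hc.ne', Function.comp_def] using hcont
  have hU : Tendsto (fun n : ℕ =>
      K * (((M n : ℝ) / (n : ℝ)) ^ (-β) + ((M n : ℝ) / (n : ℝ)) ^ (-α)))
      atTop (nhds 0) := by
    have := ((hlim (-β) (by linarith)).add (hlim (-α) (by linarith))).const_mul K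
    simpa using this
  apply squeeze_zero' (Eventually.of_forall (fun n => by positivity)) ?_ hU
  filter_upwards [eventually_ge_atTop 1] with n hn
  have hMn1 : 1 ≤ M n := hMpos n
  have hMlen : M n ≤ n := hMle n (by omega)
  have hmR : (0:ℝ) < (M n : ℝ) := by exact_mod_cast hMpos n
  have hnR : (0:ℝ) < (n : ℝ) := by exact_mod_cast hn
  have hb := main_bound hα1 hα0.le hβ1 hβ0.le (M n) n hMn1 hMlen
  calc (M n : ℝ) ^ (-(2 * dx + (ktil0 : ℝ) * (2 * dε - 1) + 1)) *
        ((n : ℝ)⁻¹ *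
          ∑ p ∈ Finset.Icc (-(M n : ℤ)) (M n : ℤ),
            ∑ q ∈ Finset.Icc (-(M n : ℤ)) (M n : ℤ),
              ∑ r ∈ Finset.Icc (-(n : ℤ) + 1) ((n : ℤ) - 1),
                (((|p| : ℝ) + 1) ^ α * ((|q| : ℝ) + 1) ^ α +
                    ((|r - p| : ℝ) + 1) ^ α * ((|r + q| : ℝ) + 1) ^ α) *
                  ((|r + q - p| : ℝ) + 1) ^ β)
      ≤ (M n : ℝ) ^ (-(2 * dx + (ktil0 : ℝ) * (2 * dε - 1) + 1)) *
        ((n : ℝ)⁻¹ * (K *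
          ((M n:ℝ)^(1+α) * (M n:ℝ)^(1+α) * (n:ℝ)^(1+β)
            + (M n:ℝ)^(1+α) * (M n:ℝ)^(1+β) * (n:ℝ)^(1+α)))) := by
        have hS := hb.trans_eq (show _ = K *
            ((M n:ℝ)^(1+α) * (M n:ℝ)^(1+α) * (n:ℝ)^(1+β)
              + (M n:ℝ)^(1+α) * (M n:ℝ)^(1+β) * (n:ℝ)^(1+α)) by rw [hKdef])
        exact mul_le_mul_of_nonneg_left (mul_le_mul_of_nonneg_left hS (by positivity))
          (by positivity)
    _ = K * ((M n : ℝ) ^ (-(2 + 2*α + β)) * ((n : ℝ)⁻¹ *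
            ((M n:ℝ)^(1+α) * (M n:ℝ)^(1+α) * (n:ℝ)^(1+β)))
          + (M n : ℝ) ^ (-(2 + 2*α + β)) * ((n : ℝ)⁻¹ *
            ((M n:ℝ)^(1+α) * (M n:ℝ)^(1+β) * (n:ℝ)^(1+α)))) := by
        rw [hTeq]; ring
    _ = K * (((M n : ℝ) / (n : ℝ)) ^ (-β) + ((M n : ℝ) / (n : ℝ)) ^ (-α)) := by
        rw [rpow_reduce hmR hnR (2 + 2*α + β) (1+α) (1+α) (1+β) β (by ring) (by ring),
          rpow_reduce hmR hnR (2 + 2*α + β) (1+α) (1+β) (1+α) α (by ring) (by ring)]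
end

section
/- Let 1/4 < d_x < 1/2, 0 ≤ d_ε < 1/2 and let k̃_0 ≥ 2 be an integer with k̃_0(2d_ε−1) > −1. Let M = M(n) be a sequence of positive integers with M → ∞, M ≤ n and M^{max(3, k̃_0−2)}/n → 0 as n → ∞. Then n^{−1} Σ_{p=−M}^{M} Σ_{q=−M}^{M} Σ_{r=−n+1}^{n−1} [ (|p|+1)^{d_x+d_ε−1}(|q|+1)^{d_x+d_ε−1}(|r|+1)^{2d_x−1}(|r+q−p|+1)^{(k̃_0−1)(2d_ε−1)} + (|p|+1)^{d_x+d_ε−1}(|q|+1)^{d_x+d_ε−1}(|r+q|+1)^{d_x+d_ε−1}(|r−p|+1)^{d_x+d_ε−1}(|r+q−p|+1)^{(k̃_0−2)(2d_ε−1)} + (|r|+1)^{2d_x−1}(|r−p|+1)^{d_x+d_ε−1}(|r+q|+1)^{d_x+d_ε−1}(|r+q−p|+1)^{(k̃_0−1)(2d_ε−1)} ] = o(M^{(4d_x−1) + (k̃_0(2d_ε−1)+1)}) as n → ∞. -/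
open Filter Finset

private lemma bern (s x : ℝ) (hs0 : 0 ≤ s) (hs1 : s ≤ 1) (hx : 0 ≤ x) :
    x ^ s + s * (x + 1) ^ (s - 1) ≤ (x + 1) ^ s := by
  have hx1 : (0:ℝ) < x + 1 := by linarith
  have hu0 : (0:ℝ) ≤ x / (x + 1) := by positivity
  have key := Real.geom_mean_le_arith_mean2_weighted hs0 (by linarith : (0:ℝ) ≤ 1 - s)
    hu0 zero_le_one (by ring)
  rw [Real.one_rpow, mul_one] at key
  have h2 : x ^ s = (x+1)^s * (x/(x+1))^s := by
    rw [← Real.mul_rpow hx1.le hu0]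
    congr 1
    field_simp
  have h3 : (x+1)^(s-1) = (x+1)^s / (x+1) := by
    rw [Real.rpow_sub hx1, Real.rpow_one]
  have hpos : (0:ℝ) ≤ (x+1)^s := Real.rpow_nonneg hx1.le _
  calc x ^ s + s * (x+1)^(s-1)
      = (x+1)^s * (x/(x+1))^s + s * ((x+1)^s / (x+1)) := by rw [← h2, ← h3]
    _ ≤ (x+1)^s * (s * (x/(x+1)) + (1 - s) * 1) + s * ((x+1)^s / (x+1)) := by
        exact add_le_add (mul_le_mul_of_nonneg_left key hpos) le_rfl
    _ = (x+1)^s := by field_simp; ring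

private lemma sum_Icc_rpow (s : ℝ) (hs4 : 1/4 ≤ s) (hs1 : s ≤ 1) :
    ∀ N : ℕ, ∑ m ∈ Icc (-(N:ℤ)) (N:ℤ), ((|m| : ℝ) + 1) ^ (s - 1) ≤ 8 * ((N:ℝ) + 1) ^ s := by
  intro N
  induction N with
  | zero =>
    simp only [Nat.cast_zero, neg_zero, Finset.Icc_self, Finset.sum_singleton, abs_zero,
      Int.cast_zero, zero_add, Real.one_rpow]
    norm_num [Real.one_rpow]
  | succ N ih =>
    have hset : Icc (-((N+1:ℕ)):ℤ) ((N+1:ℕ):ℤ)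
        = insert (-((N:ℤ)+1)) (insert ((N:ℤ)+1) (Icc (-(N:ℤ)) (N:ℤ))) := by
      ext x
      simp only [Finset.mem_Icc, Finset.mem_insert]
      push_cast
      omega
    rw [hset, Finset.sum_insert (by simp only [Finset.mem_insert, Finset.mem_Icc]; omega),
      Finset.sum_insert (by simp only [Finset.mem_Icc]; omega)]
    push_cast
    have e1 : |(-((N:ℝ)+1))| = (N:ℝ)+1 := by
      rw [abs_neg]; exact abs_of_nonneg (by positivity)
    have e2 : |((N:ℝ)+1)| = (N:ℝ)+1 := abs_of_nonneg (by positivity)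
    rw [e1, e2]
    have hb := bern s ((N:ℝ)+1) (by linarith) hs1 (by positivity)
    have h0 : (0:ℝ) ≤ ((N:ℝ)+1+1) ^ (s-1) := Real.rpow_nonneg (by positivity) _
    have : ((N:ℝ)+1+1) = ((N:ℝ)+1)+1 := by ring
    nlinarith [ih]

private lemma sum_subset_rpow (w : ℝ) (hw : w ≤ 0) (K : ℕ) (F : Finset ℤ)
    (hF : F ⊆ Icc (-(K:ℤ)) (K:ℤ)) :
    ∑ m ∈ F, ((|m| : ℝ) + 1) ^ w ≤ 8 * ((K:ℝ) + 1) ^ max (w+1) (1/4) := by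
  have h1 : ∀ m : ℤ, (1:ℝ) ≤ |(m:ℝ)| + 1 := fun m => by
    have : (0:ℝ) ≤ |(m:ℝ)| := abs_nonneg _
    linarith
  calc ∑ m ∈ F, ((|m|:ℝ)+1)^w
      ≤ ∑ m ∈ Icc (-(K:ℤ)) (K:ℤ), ((|m|:ℝ)+1)^w :=
        Finset.sum_le_sum_of_subset_of_nonneg hF (fun i _ _ => by positivity)
    _ ≤ ∑ m ∈ Icc (-(K:ℤ)) (K:ℤ), ((|m|:ℝ)+1)^(max (w+1) (1/4) - 1) :=
        Finset.sum_le_sum (fun i _ => Real.rpow_le_rpow_of_exponent_le (h1 i)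
          (by have := le_max_left (w+1) (1/4); linarith))
    _ ≤ 8 * ((K:ℝ)+1) ^ max (w+1) (1/4) :=
        sum_Icc_rpow _ (le_max_right _ _) (max_le (by linarith) (by norm_num)) K

private lemma sum_shift_rpow (w : ℝ) (hw : w ≤ 0) (K : ℕ) (A B σ : ℤ)
    (h1 : -(K:ℤ) ≤ A + σ) (h2 : B + σ ≤ (K:ℤ)) :
    ∑ r ∈ Icc A B, ((|r + σ| : ℝ) + 1) ^ w ≤ 8 * ((K:ℝ) + 1) ^ max (w+1) (1/4) := by
  have h : ∑ r ∈ Icc A B, ((|r + σ| : ℝ) + 1) ^ w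
      = ∑ m ∈ Icc (A+σ) (B+σ), ((|m|:ℝ)+1)^w := by
    rw [← Finset.map_add_right_Icc, Finset.sum_map]
    simp [addRightEmbedding_apply]
  rw [h]
  refine sum_subset_rpow w hw K _ (fun x hx => ?_)
  simp only [Finset.mem_Icc] at *
  omega

private lemma amgm2 {u v A B : ℝ} (hu : u ≤ 0) (hv : v ≤ 0) (huv : u + v < 0)
    (hA : 1 ≤ A) (hB : 1 ≤ B) :
    A ^ u * B ^ v ≤ A ^ (u + v) + B ^ (u + v) := by
  have hA0 : (0:ℝ) ≤ A := by linarith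
  have hB0 : (0:ℝ) ≤ B := by linarith
  have h1 : 0 ≤ u / (u+v) := by
    have := div_nonneg (neg_nonneg.2 hu) (neg_nonneg.2 huv.le)
    rwa [neg_div_neg_eq] at this
  have h2 : 0 ≤ v / (u+v) := by
    have := div_nonneg (neg_nonneg.2 hv) (neg_nonneg.2 huv.le)
    rwa [neg_div_neg_eq] at this
  have hne : u + v ≠ 0 := huv.ne
  have hsum : u/(u+v) + v/(u+v) = 1 := by
    rw [← add_div, div_self hne]
  have key := Real.geom_mean_le_arith_mean2_weighted h1 h2
    (Real.rpow_nonneg hA0 (u+v)) (Real.rpow_nonneg hB0 (u+v)) hsum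
  have e1 : (A ^ (u+v)) ^ (u/(u+v)) = A ^ u := by
    rw [← Real.rpow_mul hA0]; congr 1; rw [mul_comm]; exact div_mul_cancel₀ _ hne
  have e2 : (B ^ (u+v)) ^ (v/(u+v)) = B ^ v := by
    rw [← Real.rpow_mul hB0]; congr 1; rw [mul_comm]; exact div_mul_cancel₀ _ hne
  rw [e1, e2] at key
  have h1' : u/(u+v) ≤ 1 := by linarith
  have h2' : v/(u+v) ≤ 1 := by linarith
  calc A^u * B^v ≤ u/(u+v) * A^(u+v) + v/(u+v) * B^(u+v) := key
    _ ≤ 1 * A^(u+v) + 1 * B^(u+v) := by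
        gcongr <;> first
          | assumption
          | exact Real.rpow_nonneg hA0 _ | exact Real.rpow_nonneg hB0 _
    _ = A^(u+v) + B^(u+v) := by ring

private lemma amgm3 {u v x A B C : ℝ} (hu : u ≤ 0) (hv : v ≤ 0) (hx : x ≤ 0)
    (huv : u + v + x < 0) (hA : 1 ≤ A) (hB : 1 ≤ B) (hC : 1 ≤ C) :
    A ^ u * B ^ v * C ^ x ≤ A ^ (u + v + x) + B ^ (u + v + x) + C ^ (u + v + x) := by
  have hA0 : (0:ℝ) ≤ A := by linarith
  have hB0 : (0:ℝ) ≤ B := by linarith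
  have hC0 : (0:ℝ) ≤ C := by linarith
  set w := u + v + x with hwdef
  have hwn : w < 0 := huv
  have h1 : 0 ≤ u / w := by
    have := div_nonneg (neg_nonneg.2 hu) (neg_nonneg.2 hwn.le)
    rwa [neg_div_neg_eq] at this
  have h2 : 0 ≤ v / w := by
    have := div_nonneg (neg_nonneg.2 hv) (neg_nonneg.2 hwn.le)
    rwa [neg_div_neg_eq] at this
  have h3 : 0 ≤ x / w := by
    have := div_nonneg (neg_nonneg.2 hx) (neg_nonneg.2 hwn.le)
    rwa [neg_div_neg_eq] at this
  have hsum : u/w + v/w + x/w = 1 := by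
    rw [← add_div, ← add_div, hwdef, div_self hwn.ne]
  have key := Real.geom_mean_le_arith_mean3_weighted h1 h2 h3
    (Real.rpow_nonneg hA0 w) (Real.rpow_nonneg hB0 w) (Real.rpow_nonneg hC0 w) hsum
  have e1 : (A ^ w) ^ (u/w) = A ^ u := by
    rw [← Real.rpow_mul hA0]; congr 1; rw [mul_comm]; exact div_mul_cancel₀ _ hwn.ne
  have e2 : (B ^ w) ^ (v/w) = B ^ v := by
    rw [← Real.rpow_mul hB0]; congr 1; rw [mul_comm]; exact div_mul_cancel₀ _ hwn.ne
  have e3 : (C ^ w) ^ (x/w) = C ^ x := by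
    rw [← Real.rpow_mul hC0]; congr 1; rw [mul_comm]; exact div_mul_cancel₀ _ hwn.ne
  rw [e1, e2, e3] at key
  have h1' : u/w ≤ 1 := by linarith
  have h2' : v/w ≤ 1 := by linarith
  have h3' : x/w ≤ 1 := by linarith
  calc A^u * B^v * C^x ≤ u/w * A^w + v/w * B^w + x/w * C^w := key
    _ ≤ 1 * A^w + 1 * B^w + 1 * C^w := by
        gcongr <;> first
          | assumption
          | exact Real.rpow_nonneg hA0 _ | exact Real.rpow_nonneg hB0 _
          | exact Real.rpow_nonneg hC0 _
    _ = A^w + B^w + C^w := by ring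

private lemma amgm4 {u v x y A B C D : ℝ} (hu : u ≤ 0) (hv : v ≤ 0) (hx : x ≤ 0) (hy : y ≤ 0)
    (huv : u + v + x + y < 0) (hA : 1 ≤ A) (hB : 1 ≤ B) (hC : 1 ≤ C) (hD : 1 ≤ D) :
    A ^ u * B ^ v * C ^ x * D ^ y
      ≤ A ^ (u+v+x+y) + B ^ (u+v+x+y) + C ^ (u+v+x+y) + D ^ (u+v+x+y) := by
  have hA0 : (0:ℝ) ≤ A := by linarith
  have hB0 : (0:ℝ) ≤ B := by linarith
  have hC0 : (0:ℝ) ≤ C := by linarith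
  have hD0 : (0:ℝ) ≤ D := by linarith
  set w := u + v + x + y with hwdef
  have hwn : w < 0 := huv
  have h1 : 0 ≤ u / w := by
    have := div_nonneg (neg_nonneg.2 hu) (neg_nonneg.2 hwn.le)
    rwa [neg_div_neg_eq] at this
  have h2 : 0 ≤ v / w := by
    have := div_nonneg (neg_nonneg.2 hv) (neg_nonneg.2 hwn.le)
    rwa [neg_div_neg_eq] at this
  have h3 : 0 ≤ x / w := by
    have := div_nonneg (neg_nonneg.2 hx) (neg_nonneg.2 hwn.le)
    rwa [neg_div_neg_eq] at this
  have h4 : 0 ≤ y / w := by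
    have := div_nonneg (neg_nonneg.2 hy) (neg_nonneg.2 hwn.le)
    rwa [neg_div_neg_eq] at this
  have hsum : u/w + v/w + x/w + y/w = 1 := by
    rw [← add_div, ← add_div, ← add_div, hwdef, div_self hwn.ne]
  have key := Real.geom_mean_le_arith_mean4_weighted h1 h2 h3 h4
    (Real.rpow_nonneg hA0 w) (Real.rpow_nonneg hB0 w) (Real.rpow_nonneg hC0 w)
    (Real.rpow_nonneg hD0 w) hsum
  have e1 : (A ^ w) ^ (u/w) = A ^ u := by
    rw [← Real.rpow_mul hA0]; congr 1; rw [mul_comm]; exact div_mul_cancel₀ _ hwn.ne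
  have e2 : (B ^ w) ^ (v/w) = B ^ v := by
    rw [← Real.rpow_mul hB0]; congr 1; rw [mul_comm]; exact div_mul_cancel₀ _ hwn.ne
  have e3 : (C ^ w) ^ (x/w) = C ^ x := by
    rw [← Real.rpow_mul hC0]; congr 1; rw [mul_comm]; exact div_mul_cancel₀ _ hwn.ne
  have e4 : (D ^ w) ^ (y/w) = D ^ y := by
    rw [← Real.rpow_mul hD0]; congr 1; rw [mul_comm]; exact div_mul_cancel₀ _ hwn.ne
  rw [e1, e2, e3, e4] at key
  have h1' : u/w ≤ 1 := by linarith
  have h2' : v/w ≤ 1 := by linarith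
  have h3' : x/w ≤ 1 := by linarith
  have h4' : y/w ≤ 1 := by linarith
  calc A^u * B^v * C^x * D^y ≤ u/w * A^w + v/w * B^w + x/w * C^w + y/w * D^w := key
    _ ≤ 1 * A^w + 1 * B^w + 1 * C^w + 1 * D^w := by
        gcongr <;> first
          | assumption
          | exact Real.rpow_nonneg hA0 _ | exact Real.rpow_nonneg hB0 _
          | exact Real.rpow_nonneg hC0 _ | exact Real.rpow_nonneg hD0 _
    _ = A^w + B^w + C^w + D^w := by ring

private lemma aux_tendsto (M : ℕ → ℕ) (hM1 : ∀ n, 1 ≤ M n)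
    (hM3 : Tendsto (fun n : ℕ => (M n : ℝ)^(3:ℕ) / (n:ℝ)) atTop (nhds 0))
    (γ β : ℝ) (hβ : 0 < β) (hγ : γ ≤ 3*β) :
    Tendsto (fun n : ℕ => (M n:ℝ) ^ γ * (n:ℝ) ^ (-β)) atTop (nhds 0) := by
  have hg : Tendsto (fun n : ℕ => ((M n:ℝ)^(3:ℕ) / (n:ℝ)) ^ β) atTop (nhds 0) := by
    have := hM3.rpow_const (Or.inr hβ.le)
    simpa [Real.zero_rpow hβ.ne'] using this
  apply squeeze_zero' (Eventually.of_forall fun n => by positivity) _ hg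
  filter_upwards [eventually_ge_atTop 1] with n hn
  have hM1' : (1:ℝ) ≤ (M n:ℝ) := by exact_mod_cast hM1 n
  have hM0 : (0:ℝ) ≤ (M n:ℝ) := by linarith
  have hn1 : (1:ℝ) ≤ (n:ℝ) := by exact_mod_cast hn
  have hn0 : (0:ℝ) < (n:ℝ) := by linarith
  have e : ((M n:ℝ)^(3:ℕ) / (n:ℝ)) ^ β = (M n:ℝ)^(3*β) * (n:ℝ)^(-β) := by
    rw [Real.div_rpow (by positivity) hn0.le, ← Real.rpow_natCast (M n:ℝ) 3,
      ← Real.rpow_mul hM0, Real.rpow_neg hn0.le, div_eq_mul_inv]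
    norm_num
  rw [e]
  exact mul_le_mul_of_nonneg_right (Real.rpow_le_rpow_of_exponent_le hM1' hγ)
    (by positivity)


set_option maxHeartbeats 2000000 in
/-- the fourth-cumulant bound of Part II of the proof of Lemma 1
(case `a = 2`, residual Hermite rank `k̃₀ ≥ 2` with `k̃₀(2d_ε-1) > -1`, `1/4 < d_x < 1/2`):
under `M → ∞`, `M ≤ n`, `M^{max(3,k̃₀-2)}/n → 0`, the cumulant sum is
`o(M^{(4d_x-1) + (k̃₀(2d_ε-1)+1)})`. -/
theorem partII_cumulant_bound (dx dε : ℝ)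
    (hdx0 : 1 / 4 < dx) (hdx : dx < 1 / 2) (hdε0 : 0 ≤ dε) (hdε : dε < 1 / 2)
    (ktil0 : ℕ) (hktil0 : 2 ≤ ktil0) (hlm : (-1 : ℝ) < (ktil0 : ℝ) * (2 * dε - 1))
    (M : ℕ → ℕ) (hMpos : ∀ n, 0 < M n) (hM : Tendsto M atTop atTop)
    (hMle : ∀ n : ℕ, 0 < n → M n ≤ n)
    (hMn : Tendsto (fun n : ℕ => (M n : ℝ) ^ (max 3 (ktil0 - 2)) / (n : ℝ))
      atTop (nhds 0)) :
    Tendsto (fun n : ℕ =>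
        (M n : ℝ) ^ (-((4 * dx - 1) + ((ktil0 : ℝ) * (2 * dε - 1) + 1))) *
          ((n : ℝ)⁻¹ *
            ∑ p ∈ Finset.Icc (-(M n : ℤ)) (M n : ℤ),
              ∑ q ∈ Finset.Icc (-(M n : ℤ)) (M n : ℤ),
                ∑ r ∈ Finset.Icc (-(n : ℤ) + 1) ((n : ℤ) - 1),
                  (((|p| : ℝ) + 1) ^ (dx + dε - 1) * ((|q| : ℝ) + 1) ^ (dx + dε - 1) *
                      ((|r| : ℝ) + 1) ^ (2 * dx - 1) *
                      ((|r + q - p| : ℝ) + 1) ^ (((ktil0 : ℝ) - 1) * (2 * dε - 1)) +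
                    ((|p| : ℝ) + 1) ^ (dx + dε - 1) * ((|q| : ℝ) + 1) ^ (dx + dε - 1) *
                      ((|r + q| : ℝ) + 1) ^ (dx + dε - 1) *
                      ((|r - p| : ℝ) + 1) ^ (dx + dε - 1) *
                      ((|r + q - p| : ℝ) + 1) ^ (((ktil0 : ℝ) - 2) * (2 * dε - 1)) +
                    ((|r| : ℝ) + 1) ^ (2 * dx - 1) *
                      ((|r - p| : ℝ) + 1) ^ (dx + dε - 1) *
                      ((|r + q| : ℝ) + 1) ^ (dx + dε - 1) *
                      ((|r + q - p| : ℝ) + 1) ^ (((ktil0 : ℝ) - 1) * (2 * dε - 1)))))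
      atTop (nhds 0) := by
  have hk2 : (2:ℝ) ≤ (ktil0:ℝ) := by exact_mod_cast hktil0
  have he : 2*dε - 1 < 0 := by linarith
  have ha : dx + dε - 1 < 0 := by linarith
  have hb : 2*dx - 1 < 0 := by linarith
  have hc1 : ((ktil0:ℝ) - 1) * (2*dε - 1) < 0 := mul_neg_of_pos_of_neg (by linarith) he
  have hc2 : ((ktil0:ℝ) - 2) * (2*dε - 1) ≤ 0 :=
    mul_nonpos_iff.2 (Or.inl ⟨by linarith, he.le⟩)
  have hc1' : (-1:ℝ) < ((ktil0:ℝ) - 1) * (2*dε - 1) := by nlinarith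
  have hkneg : (ktil0:ℝ) * (2*dε - 1) < 0 := mul_neg_of_pos_of_neg (by linarith) he
  have hprod : (2*(ktil0:ℝ) - 4) * (2*dε - 1) ≤ 0 :=
    mul_nonpos_iff.2 (Or.inl ⟨by linarith, he.le⟩)
  have hα : 0 < (4 * dx - 1) + ((ktil0 : ℝ) * (2 * dε - 1) + 1) := by linarith
  have hα2 : (4 * dx - 1) + ((ktil0 : ℝ) * (2 * dε - 1) + 1) < 2 := by linarith
  have hw1 : 2 * dx - 1 + ((ktil0 : ℝ) - 1) * (2 * dε - 1) < 0 := by linarith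
  have hw3 : 2 * dx - 1 + (dx + dε - 1) + (dx + dε - 1) + ((ktil0 : ℝ) - 1) * (2 * dε - 1) < 0 := by
    linarith
  -- shorthand names for the two "inner" exponents and their max-caps
  set w₁ : ℝ := 2 * dx - 1 + ((ktil0 : ℝ) - 1) * (2 * dε - 1) with hw₁def
  set w₃ : ℝ := 2 * dx - 1 + (dx + dε - 1) + (dx + dε - 1) + ((ktil0 : ℝ) - 1) * (2 * dε - 1)
    with hw₃def
  clear_value w₁ w₃
  have hβ₁ : 0 < 1 - max (w₁ + 1) (1/4) := by
    have : max (w₁ + 1) (1/4) < 1 := max_lt (by rw [hw₁def]; linarith) (by norm_num)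
    linarith
  have hβ₃ : 0 < 1 - max (w₃ + 1) (1/4) := by
    have : max (w₃ + 1) (1/4) < 1 := max_lt (by rw [hw₃def]; linarith) (by norm_num)
    linarith
  have hγ₁ : (2:ℝ) - ((4 * dx - 1) + ((ktil0 : ℝ) * (2 * dε - 1) + 1))
      ≤ 3 * (1 - max (w₁ + 1) (1/4)) := by
    rcases le_total (w₁ + 1) (1/4) with h | h
    · rw [max_eq_right h]; linarith
    · rw [max_eq_left h, hw₁def]; linarith
  have hγ₃ : (2:ℝ) - ((4 * dx - 1) + ((ktil0 : ℝ) * (2 * dε - 1) + 1))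
      ≤ 3 * (1 - max (w₃ + 1) (1/4)) := by
    rcases le_total (w₃ + 1) (1/4) with h | h
    · rw [max_eq_right h]; linarith
    · rw [max_eq_left h, hw₃def]; linarith
  -- M^3/n → 0
  have hM3 : Tendsto (fun n : ℕ => (M n : ℝ) ^ (3:ℕ) / (n : ℝ)) atTop (nhds 0) := by
    apply squeeze_zero' (Eventually.of_forall fun n => by positivity) _ hMn
    filter_upwards [eventually_ge_atTop 1] with n hn
    have hM1' : (1:ℝ) ≤ (M n : ℝ) := by exact_mod_cast hMpos n
    have hn0 : (0:ℝ) < (n:ℝ) := by exact_mod_cast hn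
    exact (div_le_div_iff_of_pos_right hn0).2 (pow_le_pow_right₀ hM1' (le_max_left _ _))
  -- the dominating sequence
  have T1 := aux_tendsto M (fun n => hMpos n) hM3
    ((2:ℝ) - ((4 * dx - 1) + ((ktil0 : ℝ) * (2 * dε - 1) + 1)))
    (1 - max (w₁ + 1) (1/4)) hβ₁ hγ₁
  have T3 := aux_tendsto M (fun n => hMpos n) hM3
    ((2:ℝ) - ((4 * dx - 1) + ((ktil0 : ℝ) * (2 * dε - 1) + 1)))
    (1 - max (w₃ + 1) (1/4)) hβ₃ hγ₃
  have hg : Tendsto (fun n : ℕ =>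
      1440 * ((M n : ℝ) ^ ((2:ℝ) - ((4 * dx - 1) + ((ktil0 : ℝ) * (2 * dε - 1) + 1))) *
          (n : ℝ) ^ (-(1 - max (w₁ + 1) (1/4)))) +
      1152 * ((M n : ℝ) ^ ((2:ℝ) - ((4 * dx - 1) + ((ktil0 : ℝ) * (2 * dε - 1) + 1))) *
          (n : ℝ) ^ (-(1 - max (w₃ + 1) (1/4))))) atTop (nhds 0) := by
    simpa using (T1.const_mul (1440:ℝ)).add (T3.const_mul (1152:ℝ))
  apply squeeze_zero' (Eventually.of_forall fun n => by positivity) _ hg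
  filter_upwards [eventually_ge_atTop 1] with n hn1
  have hn1' : (1:ℝ) ≤ (n:ℝ) := by exact_mod_cast hn1
  have hn0R : (0:ℝ) < (n:ℝ) := by linarith
  have hMZ : (M n : ℤ) ≤ (n:ℤ) := by exact_mod_cast hMle n hn1
  have hM1R : (1:ℝ) ≤ (M n : ℝ) := by exact_mod_cast hMpos n
  have hM0R : (0:ℝ) < (M n : ℝ) := by linarith
  have hbase : ∀ x : ℝ, (1:ℝ) ≤ |x| + 1 := fun x => by
    have := abs_nonneg x; linarith
  -- inner sum bound, uniform in p, q
  have hinner : ∀ p ∈ Finset.Icc (-(M n : ℤ)) (M n : ℤ),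
      ∀ q ∈ Finset.Icc (-(M n : ℤ)) (M n : ℤ),
      (∑ r ∈ Finset.Icc (-(n : ℤ) + 1) ((n : ℤ) - 1),
                  (((|p| : ℝ) + 1) ^ (dx + dε - 1) * ((|q| : ℝ) + 1) ^ (dx + dε - 1) *
                      ((|r| : ℝ) + 1) ^ (2 * dx - 1) *
                      ((|r + q - p| : ℝ) + 1) ^ (((ktil0 : ℝ) - 1) * (2 * dε - 1)) +
                    ((|p| : ℝ) + 1) ^ (dx + dε - 1) * ((|q| : ℝ) + 1) ^ (dx + dε - 1) *
                      ((|r + q| : ℝ) + 1) ^ (dx + dε - 1) *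
                      ((|r - p| : ℝ) + 1) ^ (dx + dε - 1) *
                      ((|r + q - p| : ℝ) + 1) ^ (((ktil0 : ℝ) - 2) * (2 * dε - 1)) +
                    ((|r| : ℝ) + 1) ^ (2 * dx - 1) *
                      ((|r - p| : ℝ) + 1) ^ (dx + dε - 1) *
                      ((|r + q| : ℝ) + 1) ^ (dx + dε - 1) *
                      ((|r + q - p| : ℝ) + 1) ^ (((ktil0 : ℝ) - 1) * (2 * dε - 1))))
        ≤ 5 * (8 * (3 * (n:ℝ) + 1) ^ max (w₁ + 1) (1/4))
          + 4 * (8 * (3 * (n:ℝ) + 1) ^ max (w₃ + 1) (1/4)) := by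
    intro p hp q hq
    rw [Finset.mem_Icc] at hp hq
    obtain ⟨hp1, hp2⟩ := hp
    obtain ⟨hq1, hq2⟩ := hq
    have S1 : ∑ r ∈ Finset.Icc (-(n : ℤ) + 1) ((n : ℤ) - 1), ((|r| : ℝ) + 1) ^ w₁
        ≤ 8 * (3 * (n:ℝ) + 1) ^ max (w₁ + 1) (1/4) := by
      have := sum_shift_rpow w₁ hw1.le (3*n) (-(n : ℤ) + 1) ((n : ℤ) - 1) 0
        (by push_cast; omega) (by push_cast; omega)
      push_cast at this
      simpa using this
    have S2 : ∑ r ∈ Finset.Icc (-(n : ℤ) + 1) ((n : ℤ) - 1), ((|r + q| : ℝ) + 1) ^ w₁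
        ≤ 8 * (3 * (n:ℝ) + 1) ^ max (w₁ + 1) (1/4) := by
      have := sum_shift_rpow w₁ hw1.le (3*n) (-(n : ℤ) + 1) ((n : ℤ) - 1) q
        (by push_cast; omega) (by push_cast; omega)
      push_cast at this
      exact this
    have S3 : ∑ r ∈ Finset.Icc (-(n : ℤ) + 1) ((n : ℤ) - 1), ((|r - p| : ℝ) + 1) ^ w₁
        ≤ 8 * (3 * (n:ℝ) + 1) ^ max (w₁ + 1) (1/4) := by
      have := sum_shift_rpow w₁ hw1.le (3*n) (-(n : ℤ) + 1) ((n : ℤ) - 1) (-p)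
        (by push_cast; omega) (by push_cast; omega)
      push_cast at this
      simpa [sub_eq_add_neg] using this
    have S4 : ∑ r ∈ Finset.Icc (-(n : ℤ) + 1) ((n : ℤ) - 1), ((|r + q - p| : ℝ) + 1) ^ w₁
        ≤ 8 * (3 * (n:ℝ) + 1) ^ max (w₁ + 1) (1/4) := by
      have := sum_shift_rpow w₁ hw1.le (3*n) (-(n : ℤ) + 1) ((n : ℤ) - 1) (q - p)
        (by push_cast; omega) (by push_cast; omega)
      push_cast at this
      simpa [add_sub_assoc] using this
    have S5 : ∑ r ∈ Finset.Icc (-(n : ℤ) + 1) ((n : ℤ) - 1), ((|r| : ℝ) + 1) ^ w₃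
        ≤ 8 * (3 * (n:ℝ) + 1) ^ max (w₃ + 1) (1/4) := by
      have := sum_shift_rpow w₃ hw3.le (3*n) (-(n : ℤ) + 1) ((n : ℤ) - 1) 0
        (by push_cast; omega) (by push_cast; omega)
      push_cast at this
      simpa using this
    have S6 : ∑ r ∈ Finset.Icc (-(n : ℤ) + 1) ((n : ℤ) - 1), ((|r + q| : ℝ) + 1) ^ w₃
        ≤ 8 * (3 * (n:ℝ) + 1) ^ max (w₃ + 1) (1/4) := by
      have := sum_shift_rpow w₃ hw3.le (3*n) (-(n : ℤ) + 1) ((n : ℤ) - 1) q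
        (by push_cast; omega) (by push_cast; omega)
      push_cast at this
      exact this
    have S7 : ∑ r ∈ Finset.Icc (-(n : ℤ) + 1) ((n : ℤ) - 1), ((|r - p| : ℝ) + 1) ^ w₃
        ≤ 8 * (3 * (n:ℝ) + 1) ^ max (w₃ + 1) (1/4) := by
      have := sum_shift_rpow w₃ hw3.le (3*n) (-(n : ℤ) + 1) ((n : ℤ) - 1) (-p)
        (by push_cast; omega) (by push_cast; omega)
      push_cast at this
      simpa [sub_eq_add_neg] using this
    have S8 : ∑ r ∈ Finset.Icc (-(n : ℤ) + 1) ((n : ℤ) - 1), ((|r + q - p| : ℝ) + 1) ^ w₃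
        ≤ 8 * (3 * (n:ℝ) + 1) ^ max (w₃ + 1) (1/4) := by
      have := sum_shift_rpow w₃ hw3.le (3*n) (-(n : ℤ) + 1) ((n : ℤ) - 1) (q - p)
        (by push_cast; omega) (by push_cast; omega)
      push_cast at this
      simpa [add_sub_assoc] using this
    have hple : ((|p| : ℝ) + 1) ^ (dx + dε - 1) ≤ 1 :=
      Real.rpow_le_one_of_one_le_of_nonpos (hbase _) ha.le
    have hqle : ((|q| : ℝ) + 1) ^ (dx + dε - 1) ≤ 1 :=
      Real.rpow_le_one_of_one_le_of_nonpos (hbase _) ha.le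
    have step : (∑ r ∈ Finset.Icc (-(n : ℤ) + 1) ((n : ℤ) - 1),
                  (((|p| : ℝ) + 1) ^ (dx + dε - 1) * ((|q| : ℝ) + 1) ^ (dx + dε - 1) *
                      ((|r| : ℝ) + 1) ^ (2 * dx - 1) *
                      ((|r + q - p| : ℝ) + 1) ^ (((ktil0 : ℝ) - 1) * (2 * dε - 1)) +
                    ((|p| : ℝ) + 1) ^ (dx + dε - 1) * ((|q| : ℝ) + 1) ^ (dx + dε - 1) *
                      ((|r + q| : ℝ) + 1) ^ (dx + dε - 1) *
                      ((|r - p| : ℝ) + 1) ^ (dx + dε - 1) *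
                      ((|r + q - p| : ℝ) + 1) ^ (((ktil0 : ℝ) - 2) * (2 * dε - 1)) +
                    ((|r| : ℝ) + 1) ^ (2 * dx - 1) *
                      ((|r - p| : ℝ) + 1) ^ (dx + dε - 1) *
                      ((|r + q| : ℝ) + 1) ^ (dx + dε - 1) *
                      ((|r + q - p| : ℝ) + 1) ^ (((ktil0 : ℝ) - 1) * (2 * dε - 1))))
        ≤ ∑ r ∈ Finset.Icc (-(n : ℤ) + 1) ((n : ℤ) - 1),
            ((((|r| : ℝ) + 1) ^ w₁ + ((|r + q - p| : ℝ) + 1) ^ w₁)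
              + (((|r + q| : ℝ) + 1) ^ w₁ + ((|r - p| : ℝ) + 1) ^ w₁
                  + ((|r + q - p| : ℝ) + 1) ^ w₁)
              + (((|r| : ℝ) + 1) ^ w₃ + ((|r - p| : ℝ) + 1) ^ w₃
                  + ((|r + q| : ℝ) + 1) ^ w₃ + ((|r + q - p| : ℝ) + 1) ^ w₃)) := by
      apply Finset.sum_le_sum
      intro r hr
      have t1 : ((|p| : ℝ) + 1) ^ (dx + dε - 1) * ((|q| : ℝ) + 1) ^ (dx + dε - 1) *
                  ((|r| : ℝ) + 1) ^ (2 * dx - 1) *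
                  ((|r + q - p| : ℝ) + 1) ^ (((ktil0 : ℝ) - 1) * (2 * dε - 1))
          ≤ ((|r| : ℝ) + 1) ^ w₁ + ((|r + q - p| : ℝ) + 1) ^ w₁ := by
        have hmm : ((|r| : ℝ) + 1) ^ (2 * dx - 1) *
            ((|r + q - p| : ℝ) + 1) ^ (((ktil0 : ℝ) - 1) * (2 * dε - 1))
            ≤ ((|r| : ℝ) + 1) ^ w₁ + ((|r + q - p| : ℝ) + 1) ^ w₁ := by
          rw [hw₁def]
          exact amgm2 hb.le hc1.le (by rw [← hw₁def]; exact hw1) (hbase _) (hbase _)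
        calc ((|p| : ℝ) + 1) ^ (dx + dε - 1) * ((|q| : ℝ) + 1) ^ (dx + dε - 1) *
                  ((|r| : ℝ) + 1) ^ (2 * dx - 1) *
                  ((|r + q - p| : ℝ) + 1) ^ (((ktil0 : ℝ) - 1) * (2 * dε - 1))
            = (((|p| : ℝ) + 1) ^ (dx + dε - 1) * ((|q| : ℝ) + 1) ^ (dx + dε - 1)) *
                (((|r| : ℝ) + 1) ^ (2 * dx - 1) *
                  ((|r + q - p| : ℝ) + 1) ^ (((ktil0 : ℝ) - 1) * (2 * dε - 1))) := by ring
          _ ≤ 1 * (((|r| : ℝ) + 1) ^ (2 * dx - 1) *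
                  ((|r + q - p| : ℝ) + 1) ^ (((ktil0 : ℝ) - 1) * (2 * dε - 1))) := by
              apply mul_le_mul_of_nonneg_right _ (by positivity)
              exact mul_le_one₀ hple (by positivity) hqle
          _ = ((|r| : ℝ) + 1) ^ (2 * dx - 1) *
                  ((|r + q - p| : ℝ) + 1) ^ (((ktil0 : ℝ) - 1) * (2 * dε - 1)) := one_mul _
          _ ≤ _ := hmm
      have t2 : ((|p| : ℝ) + 1) ^ (dx + dε - 1) * ((|q| : ℝ) + 1) ^ (dx + dε - 1) *
                  ((|r + q| : ℝ) + 1) ^ (dx + dε - 1) *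
                  ((|r - p| : ℝ) + 1) ^ (dx + dε - 1) *
                  ((|r + q - p| : ℝ) + 1) ^ (((ktil0 : ℝ) - 2) * (2 * dε - 1))
          ≤ ((|r + q| : ℝ) + 1) ^ w₁ + ((|r - p| : ℝ) + 1) ^ w₁
              + ((|r + q - p| : ℝ) + 1) ^ w₁ := by
        have eexp : dx + dε - 1 + (dx + dε - 1) + ((ktil0 : ℝ) - 2) * (2 * dε - 1) = w₁ := by
          rw [hw₁def]; ring
        have hmm := amgm3 ha.le ha.le hc2 (by rw [eexp]; exact hw1)
          (hbase ((r:ℝ) + (q:ℝ))) (hbase ((r:ℝ) - (p:ℝ))) (hbase ((r:ℝ) + (q:ℝ) - (p:ℝ)))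
        rw [eexp] at hmm
        calc ((|p| : ℝ) + 1) ^ (dx + dε - 1) * ((|q| : ℝ) + 1) ^ (dx + dε - 1) *
                  ((|r + q| : ℝ) + 1) ^ (dx + dε - 1) *
                  ((|r - p| : ℝ) + 1) ^ (dx + dε - 1) *
                  ((|r + q - p| : ℝ) + 1) ^ (((ktil0 : ℝ) - 2) * (2 * dε - 1))
            = (((|p| : ℝ) + 1) ^ (dx + dε - 1) * ((|q| : ℝ) + 1) ^ (dx + dε - 1)) *
                (((|r + q| : ℝ) + 1) ^ (dx + dε - 1) *
                  ((|r - p| : ℝ) + 1) ^ (dx + dε - 1) *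
                  ((|r + q - p| : ℝ) + 1) ^ (((ktil0 : ℝ) - 2) * (2 * dε - 1))) := by ring
          _ ≤ 1 * (((|r + q| : ℝ) + 1) ^ (dx + dε - 1) *
                  ((|r - p| : ℝ) + 1) ^ (dx + dε - 1) *
                  ((|r + q - p| : ℝ) + 1) ^ (((ktil0 : ℝ) - 2) * (2 * dε - 1))) := by
              apply mul_le_mul_of_nonneg_right _ (by positivity)
              exact mul_le_one₀ hple (by positivity) hqle
          _ = ((|r + q| : ℝ) + 1) ^ (dx + dε - 1) *
                  ((|r - p| : ℝ) + 1) ^ (dx + dε - 1) *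
                  ((|r + q - p| : ℝ) + 1) ^ (((ktil0 : ℝ) - 2) * (2 * dε - 1)) := one_mul _
          _ ≤ _ := hmm
      have t3 : ((|r| : ℝ) + 1) ^ (2 * dx - 1) *
                  ((|r - p| : ℝ) + 1) ^ (dx + dε - 1) *
                  ((|r + q| : ℝ) + 1) ^ (dx + dε - 1) *
                  ((|r + q - p| : ℝ) + 1) ^ (((ktil0 : ℝ) - 1) * (2 * dε - 1))
          ≤ ((|r| : ℝ) + 1) ^ w₃ + ((|r - p| : ℝ) + 1) ^ w₃
              + ((|r + q| : ℝ) + 1) ^ w₃ + ((|r + q - p| : ℝ) + 1) ^ w₃ := by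
        have hmm := amgm4 hb.le ha.le ha.le hc1.le (by rw [← hw₃def]; exact hw3)
          (hbase ((r:ℝ))) (hbase ((r:ℝ) - (p:ℝ))) (hbase ((r:ℝ) + (q:ℝ)))
          (hbase ((r:ℝ) + (q:ℝ) - (p:ℝ)))
        rw [← hw₃def] at hmm
        exact hmm
      exact add_le_add (add_le_add t1 t2) t3
    refine le_trans step ?_
    simp only [Finset.sum_add_distrib]
    linarith [S1, S2, S3, S4, S5, S6, S7, S8]
  have hcard : (Finset.Icc (-(M n : ℤ)) (M n : ℤ)).card = 2 * M n + 1 := by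
    rw [Int.card_Icc]
    omega
  have hsum2 : (∑ p ∈ Finset.Icc (-(M n : ℤ)) (M n : ℤ),
      ∑ q ∈ Finset.Icc (-(M n : ℤ)) (M n : ℤ),
        ∑ r ∈ Finset.Icc (-(n : ℤ) + 1) ((n : ℤ) - 1),
                  (((|p| : ℝ) + 1) ^ (dx + dε - 1) * ((|q| : ℝ) + 1) ^ (dx + dε - 1) *
                      ((|r| : ℝ) + 1) ^ (2 * dx - 1) *
                      ((|r + q - p| : ℝ) + 1) ^ (((ktil0 : ℝ) - 1) * (2 * dε - 1)) +
                    ((|p| : ℝ) + 1) ^ (dx + dε - 1) * ((|q| : ℝ) + 1) ^ (dx + dε - 1) *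
                      ((|r + q| : ℝ) + 1) ^ (dx + dε - 1) *
                      ((|r - p| : ℝ) + 1) ^ (dx + dε - 1) *
                      ((|r + q - p| : ℝ) + 1) ^ (((ktil0 : ℝ) - 2) * (2 * dε - 1)) +
                    ((|r| : ℝ) + 1) ^ (2 * dx - 1) *
                      ((|r - p| : ℝ) + 1) ^ (dx + dε - 1) *
                      ((|r + q| : ℝ) + 1) ^ (dx + dε - 1) *
                      ((|r + q - p| : ℝ) + 1) ^ (((ktil0 : ℝ) - 1) * (2 * dε - 1))))
      ≤ ((2 * M n + 1 : ℕ) : ℝ) * (((2 * M n + 1 : ℕ) : ℝ) *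
          (5 * (8 * (3 * (n:ℝ) + 1) ^ max (w₁ + 1) (1/4))
            + 4 * (8 * (3 * (n:ℝ) + 1) ^ max (w₃ + 1) (1/4)))) := by
    refine le_trans (Finset.sum_le_sum fun p hp =>
      Finset.sum_le_sum fun q hq => hinner p hp q hq) ?_
    rw [Finset.sum_const, Finset.sum_const, hcard, nsmul_eq_mul, nsmul_eq_mul]
  have hc3R : ((2 * M n + 1 : ℕ) : ℝ) ≤ 3 * (M n : ℝ) := by push_cast; linarith
  have hs₁0 : (0:ℝ) < max (w₁ + 1) (1/4) := lt_of_lt_of_le (by norm_num) (le_max_right _ _)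
  have hs₃0 : (0:ℝ) < max (w₃ + 1) (1/4) := lt_of_lt_of_le (by norm_num) (le_max_right _ _)
  have hs₁1 : max (w₁ + 1) (1/4) ≤ 1 := max_le (by linarith) (by norm_num)
  have hs₃1 : max (w₃ + 1) (1/4) ≤ 1 := max_le (by linarith) (by norm_num)
  have hC1 : (3 * (n:ℝ) + 1) ^ max (w₁ + 1) (1/4) ≤ 4 * (n:ℝ) ^ max (w₁ + 1) (1/4) := by
    calc (3 * (n:ℝ) + 1) ^ max (w₁ + 1) (1/4)
        ≤ (4 * (n:ℝ)) ^ max (w₁ + 1) (1/4) :=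
          Real.rpow_le_rpow (by positivity) (by linarith) hs₁0.le
      _ = (4:ℝ) ^ max (w₁ + 1) (1/4) * (n:ℝ) ^ max (w₁ + 1) (1/4) :=
          Real.mul_rpow (by norm_num) (by positivity)
      _ ≤ (4:ℝ) ^ (1:ℝ) * (n:ℝ) ^ max (w₁ + 1) (1/4) :=
          mul_le_mul_of_nonneg_right
            (Real.rpow_le_rpow_of_exponent_le (by norm_num) hs₁1) (by positivity)
      _ = 4 * (n:ℝ) ^ max (w₁ + 1) (1/4) := by rw [Real.rpow_one]
  have hC3 : (3 * (n:ℝ) + 1) ^ max (w₃ + 1) (1/4) ≤ 4 * (n:ℝ) ^ max (w₃ + 1) (1/4) := by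
    calc (3 * (n:ℝ) + 1) ^ max (w₃ + 1) (1/4)
        ≤ (4 * (n:ℝ)) ^ max (w₃ + 1) (1/4) :=
          Real.rpow_le_rpow (by positivity) (by linarith) hs₃0.le
      _ = (4:ℝ) ^ max (w₃ + 1) (1/4) * (n:ℝ) ^ max (w₃ + 1) (1/4) :=
          Real.mul_rpow (by norm_num) (by positivity)
      _ ≤ (4:ℝ) ^ (1:ℝ) * (n:ℝ) ^ max (w₃ + 1) (1/4) :=
          mul_le_mul_of_nonneg_right
            (Real.rpow_le_rpow_of_exponent_le (by norm_num) hs₃1) (by positivity)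
      _ = 4 * (n:ℝ) ^ max (w₃ + 1) (1/4) := by rw [Real.rpow_one]
  have hC0 : (5 * (8 * (3 * (n:ℝ) + 1) ^ max (w₁ + 1) (1/4))
        + 4 * (8 * (3 * (n:ℝ) + 1) ^ max (w₃ + 1) (1/4)))
      ≤ 160 * (n:ℝ) ^ max (w₁ + 1) (1/4) + 128 * (n:ℝ) ^ max (w₃ + 1) (1/4) := by
    linarith
  have hbig := hsum2.trans (mul_le_mul hc3R (mul_le_mul hc3R hC0 (by positivity)
    (by positivity)) (by positivity) (by positivity))
  have em2 : (M n : ℝ) ^ ((2:ℝ) - ((4 * dx - 1) + ((ktil0 : ℝ) * (2 * dε - 1) + 1)))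
      = (M n : ℝ) ^ (-((4 * dx - 1) + ((ktil0 : ℝ) * (2 * dε - 1) + 1))) *
          ((M n : ℝ) * (M n : ℝ)) := by
    rw [show (2:ℝ) - ((4 * dx - 1) + ((ktil0 : ℝ) * (2 * dε - 1) + 1))
      = -((4 * dx - 1) + ((ktil0 : ℝ) * (2 * dε - 1) + 1)) + 2 by ring,
      Real.rpow_add hM0R]
    congr 1
    rw [show (2:ℝ) = ((2:ℕ):ℝ) by norm_num, Real.rpow_natCast]
    ring
  have en1 : (n:ℝ) ^ (-(1 - max (w₁ + 1) (1/4)))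
      = (n:ℝ)⁻¹ * (n:ℝ) ^ max (w₁ + 1) (1/4) := by
    rw [show -(1 - max (w₁ + 1) (1/4)) = -1 + max (w₁ + 1) (1/4) by ring,
      Real.rpow_add hn0R, Real.rpow_neg_one]
  have en3 : (n:ℝ) ^ (-(1 - max (w₃ + 1) (1/4)))
      = (n:ℝ)⁻¹ * (n:ℝ) ^ max (w₃ + 1) (1/4) := by
    rw [show -(1 - max (w₃ + 1) (1/4)) = -1 + max (w₃ + 1) (1/4) by ring,
      Real.rpow_add hn0R, Real.rpow_neg_one]
  calc (M n : ℝ) ^ (-((4 * dx - 1) + ((ktil0 : ℝ) * (2 * dε - 1) + 1))) *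
          ((n : ℝ)⁻¹ *
            ∑ p ∈ Finset.Icc (-(M n : ℤ)) (M n : ℤ),
              ∑ q ∈ Finset.Icc (-(M n : ℤ)) (M n : ℤ),
                ∑ r ∈ Finset.Icc (-(n : ℤ) + 1) ((n : ℤ) - 1),
                  (((|p| : ℝ) + 1) ^ (dx + dε - 1) * ((|q| : ℝ) + 1) ^ (dx + dε - 1) *
                      ((|r| : ℝ) + 1) ^ (2 * dx - 1) *
                      ((|r + q - p| : ℝ) + 1) ^ (((ktil0 : ℝ) - 1) * (2 * dε - 1)) +
                    ((|p| : ℝ) + 1) ^ (dx + dε - 1) * ((|q| : ℝ) + 1) ^ (dx + dε - 1) *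
                      ((|r + q| : ℝ) + 1) ^ (dx + dε - 1) *
                      ((|r - p| : ℝ) + 1) ^ (dx + dε - 1) *
                      ((|r + q - p| : ℝ) + 1) ^ (((ktil0 : ℝ) - 2) * (2 * dε - 1)) +
                    ((|r| : ℝ) + 1) ^ (2 * dx - 1) *
                      ((|r - p| : ℝ) + 1) ^ (dx + dε - 1) *
                      ((|r + q| : ℝ) + 1) ^ (dx + dε - 1) *
                      ((|r + q - p| : ℝ) + 1) ^ (((ktil0 : ℝ) - 1) * (2 * dε - 1))))
      ≤ (M n : ℝ) ^ (-((4 * dx - 1) + ((ktil0 : ℝ) * (2 * dε - 1) + 1))) *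
          ((n : ℝ)⁻¹ * (3 * (M n : ℝ) * (3 * (M n : ℝ) *
            (160 * (n:ℝ) ^ max (w₁ + 1) (1/4) + 128 * (n:ℝ) ^ max (w₃ + 1) (1/4))))) := by
        refine mul_le_mul_of_nonneg_left ?_ (Real.rpow_nonneg hM0R.le _)
        exact mul_le_mul_of_nonneg_left hbig (by positivity)
    _ = 1440 * ((M n : ℝ) ^ ((2:ℝ) - ((4 * dx - 1) + ((ktil0 : ℝ) * (2 * dε - 1) + 1))) *
            (n : ℝ) ^ (-(1 - max (w₁ + 1) (1/4)))) +
        1152 * ((M n : ℝ) ^ ((2:ℝ) - ((4 * dx - 1) + ((ktil0 : ℝ) * (2 * dε - 1) + 1))) *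
            (n : ℝ) ^ (-(1 - max (w₃ + 1) (1/4)))) := by
        rw [em2, en1, en3]; ring
end

section
/- Let 1/3 < d_x < 1/2 and 1/3 < d_ε < 1/2. There exists a constant C (depending only on d_x, d_ε) such that for all integers n ≥ M ≥ 1: n^{−1} Σ_{p=−M}^{M} (|p|+1)^{2(d_x+d_ε−1)} Σ_{q=−M}^{M} (|q|+1)^{2(d_x+d_ε−1)} Σ_{r=−n+1}^{n−1} (|r−p|+1)^{d_x+d_ε−1}(|r+q|+1)^{d_x+d_ε−1} ≤ C ( M^{4d_x+4d_ε−1} n^{−1} + M^{4d_x+4d_ε−2} n^{2d_x+2d_ε−2} ). -/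
open Filter Finset

private lemma integral_shift_rpow (b : ℝ) (hb1 : -1 < b) (c : ℝ) :
    ∫ x in (0:ℝ)..c, (x + 1) ^ b = ((c + 1) ^ (b + 1) - 1) / (b + 1) := by
  have h := intervalIntegral.integral_comp_add_right (a := 0) (b := c) (fun x : ℝ => x ^ b) 1
  simp only [zero_add] at h
  rw [h, integral_rpow (Or.inl hb1), Real.one_rpow]

private lemma sum_range_rpow_le {b : ℝ} (hb1 : -1 < b) (hb2 : b < 0) (N : ℕ) (hN : 1 ≤ N) :
    ∑ k ∈ Finset.range (N + 1), ((k : ℝ) + 1) ^ b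
      ≤ (1 + 2 ^ (b + 1) / (b + 1)) * (N : ℝ) ^ (b + 1) := by
  have hb1' : 0 < b + 1 := by linarith
  have hN1 : (1:ℝ) ≤ (N:ℝ) := by exact_mod_cast hN
  have hanti : AntitoneOn (fun x : ℝ => (x + 1) ^ b) (Set.Icc (0:ℝ) ((0:ℝ) + N)) := by
    intro x hx y hy hxy
    exact Real.rpow_le_rpow_of_nonpos (by linarith [hx.1]) (by linarith) hb2.le
  have key := hanti.sum_le_integral
  simp only [zero_add] at key
  rw [integral_shift_rpow b hb1 (N:ℝ)] at key
  rw [Finset.sum_range_succ']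
  have h2N : ((N:ℝ) + 1) ^ (b+1) ≤ 2 ^ (b+1) * (N:ℝ) ^ (b+1) := by
    rw [← Real.mul_rpow (by norm_num) (by positivity)]
    exact Real.rpow_le_rpow (by positivity) (by linarith) hb1'.le
  have h1N : (1:ℝ) ≤ (N:ℝ) ^ (b+1) := Real.one_le_rpow hN1 hb1'.le
  have hdiv : (((N:ℝ) + 1) ^ (b+1) - 1) / (b + 1) ≤ (2 ^ (b+1) * (N:ℝ) ^ (b+1)) / (b + 1) := by
    gcongr
    linarith
  have h0 : ((0:ℕ):ℝ) + 1 = 1 := by norm_num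
  calc (∑ i ∈ Finset.range N, (((i + 1 : ℕ) : ℝ) + 1) ^ b) + (((0:ℕ):ℝ) + 1) ^ b
      ≤ (((N:ℝ) + 1) ^ (b+1) - 1) / (b + 1) + 1 := by
        rw [h0, Real.one_rpow]
        exact add_le_add_left key 1
    _ ≤ (2 ^ (b+1) * (N:ℝ) ^ (b+1)) / (b + 1) + (N:ℝ) ^ (b+1) := by linarith
    _ = (1 + 2 ^ (b + 1) / (b + 1)) * (N : ℝ) ^ (b + 1) := by ring

private lemma sum_Icc_abs_rpow_le {b : ℝ} (hb1 : -1 < b) (hb2 : b < 0) (N : ℕ) (hN : 1 ≤ N) :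
    ∑ s ∈ Finset.Icc (-(N:ℤ)) (N:ℤ), ((|s| : ℝ) + 1) ^ b
      ≤ 2 * (1 + 2 ^ (b + 1) / (b + 1)) * (N : ℝ) ^ (b + 1) := by
  have hposf : ∀ k : ℕ, (0:ℝ) ≤ ((k : ℝ) + 1) ^ b := fun k => Real.rpow_nonneg (by positivity) b
  have hsplit : Finset.Icc (-(N:ℤ)) (N:ℤ) = Finset.Icc (-(N:ℤ)) (-1) ∪ Finset.Icc 0 (N:ℤ) := by
    ext x; simp only [Finset.mem_Icc, Finset.mem_union]; omega
  have hdisj : Disjoint (Finset.Icc (-(N:ℤ)) (-1)) (Finset.Icc (0:ℤ) (N:ℤ)) := by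
    rw [Finset.disjoint_left]; intro x hx hx'
    simp only [Finset.mem_Icc] at hx hx'; omega
  rw [hsplit, Finset.sum_union hdisj]
  have h1 : ∑ s ∈ Finset.Icc (-(N:ℤ)) (-1), ((|s| : ℝ) + 1) ^ b
      = ∑ k ∈ Finset.Icc 1 N, ((k : ℝ) + 1) ^ b := by
    apply Finset.sum_nbij' (i := fun s : ℤ => (-s).toNat) (j := fun k : ℕ => -(k:ℤ))
    · intro s hs; simp only [Finset.mem_Icc] at hs ⊢; omega
    · intro k hk; simp only [Finset.mem_Icc] at hk ⊢; omega
    · intro s hs; simp only [Finset.mem_Icc] at hs; omega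
    · intro k hk; simp only [Finset.mem_Icc] at hk; omega
    · intro s hs; simp only [Finset.mem_Icc] at hs
      have h2 : (((-s).toNat : ℕ) : ℝ) = -(s:ℝ) := by
        exact_mod_cast Int.toNat_of_nonneg (show (0:ℤ) ≤ -s by omega)
      have h3 : |(s:ℝ)| = -(s:ℝ) := abs_of_neg (by exact_mod_cast (show s < 0 by omega))
      rw [h3, h2]
  have h2 : ∑ s ∈ Finset.Icc (0:ℤ) (N:ℤ), ((|s| : ℝ) + 1) ^ b
      = ∑ k ∈ Finset.range (N + 1), ((k : ℝ) + 1) ^ b := by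
    apply Finset.sum_nbij' (i := fun s : ℤ => s.toNat) (j := fun k : ℕ => (k:ℤ))
    · intro s hs; simp only [Finset.mem_Icc] at hs; simp only [Finset.mem_range]; omega
    · intro k hk; simp only [Finset.mem_range] at hk; simp only [Finset.mem_Icc]; omega
    · intro s hs; simp only [Finset.mem_Icc] at hs; omega
    · intro k hk; simp
    · intro s hs; simp only [Finset.mem_Icc] at hs
      have h2 : ((s.toNat : ℕ) : ℝ) = (s:ℝ) := by
        exact_mod_cast Int.toNat_of_nonneg hs.1
      have h3 : |(s:ℝ)| = (s:ℝ) := abs_of_nonneg (by exact_mod_cast hs.1)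
      rw [h3, h2]
  rw [h1, h2]
  have hsub : ∑ k ∈ Finset.Icc 1 N, ((k : ℝ) + 1) ^ b
      ≤ ∑ k ∈ Finset.range (N + 1), ((k : ℝ) + 1) ^ b := by
    apply Finset.sum_le_sum_of_subset_of_nonneg
    · intro x hx; simp only [Finset.mem_Icc] at hx; simp only [Finset.mem_range]; omega
    · intro i _ _; exact hposf i
  have hmain := sum_range_rpow_le hb1 hb2 N hN
  calc (∑ k ∈ Finset.Icc 1 N, ((k : ℝ) + 1) ^ b) + ∑ k ∈ Finset.range (N + 1), ((k : ℝ) + 1) ^ b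
      ≤ (∑ k ∈ Finset.range (N+1), ((k : ℝ) + 1) ^ b)
          + ∑ k ∈ Finset.range (N + 1), ((k : ℝ) + 1) ^ b := by linarith
    _ ≤ 2 * (1 + 2 ^ (b + 1) / (b + 1)) * (N : ℝ) ^ (b + 1) := by linarith

private lemma sum_shift_le {b : ℝ} (n : ℕ) (c : ℤ) (hc : |c| ≤ (n:ℤ)) :
    ∑ r ∈ Finset.Icc (-(n:ℤ) + 1) ((n:ℤ) - 1), ((|r + c| : ℝ) + 1) ^ b
      ≤ ∑ s ∈ Finset.Icc (-((2*n : ℕ):ℤ)) ((2*n : ℕ):ℤ), ((|s| : ℝ) + 1) ^ b := by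
  have hc' := abs_le.mp hc
  have him : ∑ r ∈ Finset.Icc (-(n:ℤ) + 1) ((n:ℤ) - 1), ((|r + c| : ℝ) + 1) ^ b
      = ∑ s ∈ Finset.Icc (-(n:ℤ) + 1 + c) ((n:ℤ) - 1 + c), ((|s| : ℝ) + 1) ^ b := by
    rw [← Finset.image_add_right_Icc,
      Finset.sum_image (fun x _ y _ h => by exact add_right_cancel h)]
    push_cast
    rfl
  rw [him]
  apply Finset.sum_le_sum_of_subset_of_nonneg
  · apply Finset.Icc_subset_Icc <;> push_cast <;> omega
  · intro i _ _; positivity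

/-- the bound for the connected-diagram term
`γ_xε²(p)γ_xε²(q)γ_εx(r-p)γ_xε(r+q)` (Figure 1) in Part III of the proof of Lemma 1,
for `1/3 < d_x, d_ε < 1/2`. -/
theorem figure1_diagram_bound (dx dε : ℝ)
    (hdx1 : 1 / 3 < dx) (hdx2 : dx < 1 / 2) (hdε1 : 1 / 3 < dε) (hdε2 : dε < 1 / 2) :
    ∃ C : ℝ, 0 < C ∧ ∀ n M : ℕ, 1 ≤ M → M ≤ n →
      (n : ℝ)⁻¹ *
          ∑ p ∈ Finset.Icc (-(M : ℤ)) (M : ℤ), ((|p| : ℝ) + 1) ^ (2 * (dx + dε - 1)) *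
            ∑ q ∈ Finset.Icc (-(M : ℤ)) (M : ℤ), ((|q| : ℝ) + 1) ^ (2 * (dx + dε - 1)) *
              ∑ r ∈ Finset.Icc (-(n : ℤ) + 1) ((n : ℤ) - 1),
                ((|r - p| : ℝ) + 1) ^ (dx + dε - 1) * ((|r + q| : ℝ) + 1) ^ (dx + dε - 1)
        ≤ C * ((M : ℝ) ^ (4 * dx + 4 * dε - 1) * (n : ℝ)⁻¹ +
            (M : ℝ) ^ (4 * dx + 4 * dε - 2) * (n : ℝ) ^ (2 * dx + 2 * dε - 2)) := by
  set b : ℝ := 2 * (dx + dε - 1) with hbdef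
  have hb1 : (-1:ℝ) < b := by rw [hbdef]; linarith
  have hb2 : b < 0 := by rw [hbdef]; linarith
  have hb1' : (0:ℝ) < b + 1 := by linarith
  set K : ℝ := 2 * (1 + 2 ^ (b + 1) / (b + 1)) with hKdef
  have hK : 0 < K := by
    have h := div_pos (Real.rpow_pos_of_pos two_pos (b+1)) hb1'
    rw [hKdef]; linarith
  have h2b : (0:ℝ) < 2 ^ (b+1) := Real.rpow_pos_of_pos two_pos _
  refine ⟨K ^ 3 * 2 ^ (b+1), mul_pos (pow_pos hK 3) h2b, ?_⟩
  intro n M hM hMn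
  have hn : 1 ≤ n := hM.trans hMn
  have hnR : (0:ℝ) < (n:ℝ) := by exact_mod_cast Nat.lt_of_lt_of_le Nat.zero_lt_one hn
  have hMR : (0:ℝ) < (M:ℝ) := by exact_mod_cast Nat.lt_of_lt_of_le Nat.zero_lt_one hM
  have hMn' : (M:ℤ) ≤ (n:ℤ) := by exact_mod_cast hMn
  set S2n : ℝ := ∑ s ∈ Finset.Icc (-((2*n : ℕ):ℤ)) ((2*n : ℕ):ℤ), ((|s| : ℝ) + 1) ^ b
    with hS2ndef
  have hS2n : S2n ≤ K * (2 ^ (b+1) * (n:ℝ) ^ (b+1)) := by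
    have h := sum_Icc_abs_rpow_le hb1 hb2 (2*n) (by omega)
    have hcast : ((2*n : ℕ):ℝ) = 2 * (n:ℝ) := by push_cast; ring
    rw [hcast, Real.mul_rpow (by norm_num) hnR.le] at h
    rw [hS2ndef, hKdef]
    calc ∑ s ∈ Finset.Icc (-((2*n : ℕ):ℤ)) ((2*n : ℕ):ℤ), ((|s| : ℝ) + 1) ^ b
        ≤ 2 * (1 + 2 ^ (b + 1) / (b + 1)) * (2 ^ (b+1) * (n:ℝ) ^ (b+1)) := h
      _ = 2 * (1 + 2 ^ (b + 1) / (b + 1)) * (2 ^ (b+1) * (n:ℝ) ^ (b+1)) := rfl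
  set B : ℝ := K * (2 ^ (b+1) * (n:ℝ) ^ (b+1)) with hBdef
  have hB : 0 ≤ B := by
    have : (0:ℝ) ≤ 2 ^ (b+1) * (n:ℝ) ^ (b+1) := by positivity
    exact mul_nonneg hK.le this
  have hSM : ∑ p ∈ Finset.Icc (-(M : ℤ)) (M : ℤ), ((|p| : ℝ) + 1) ^ b
      ≤ K * (M:ℝ) ^ (b+1) := by
    have h := sum_Icc_abs_rpow_le hb1 hb2 M hM
    rw [hKdef]
    calc ∑ p ∈ Finset.Icc (-(M : ℤ)) (M : ℤ), ((|p| : ℝ) + 1) ^ b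
        ≤ 2 * (1 + 2 ^ (b + 1) / (b + 1)) * (M:ℝ) ^ (b+1) := h
      _ = 2 * (1 + 2 ^ (b + 1) / (b + 1)) * ((M:ℝ) ^ (b+1)) := by ring
  have hKM : 0 ≤ K * (M:ℝ) ^ (b+1) := by
    have : (0:ℝ) ≤ (M:ℝ) ^ (b+1) := by positivity
    exact mul_nonneg hK.le this
  -- the inner bound
  have hinner : ∀ p ∈ Finset.Icc (-(M : ℤ)) (M : ℤ), ∀ q ∈ Finset.Icc (-(M : ℤ)) (M : ℤ),
      (∑ r ∈ Finset.Icc (-(n : ℤ) + 1) ((n : ℤ) - 1),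
          ((|r - p| : ℝ) + 1) ^ (dx + dε - 1) * ((|r + q| : ℝ) + 1) ^ (dx + dε - 1)) ≤ B := by
    intro p hp q hq
    rw [Finset.mem_Icc] at hp hq
    have hcp : |(-p)| ≤ (n:ℤ) := by rw [abs_neg]; rw [abs_le]; omega
    have hcq : |q| ≤ (n:ℤ) := by rw [abs_le]; omega
    have h1 := sum_shift_le (b := b) n (-p) hcp
    have h2 := sum_shift_le (b := b) n q hcq
    simp only [Int.cast_neg, ← sub_eq_add_neg] at h1
    calc (∑ r ∈ Finset.Icc (-(n : ℤ) + 1) ((n : ℤ) - 1),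
            ((|r - p| : ℝ) + 1) ^ (dx + dε - 1) * ((|r + q| : ℝ) + 1) ^ (dx + dε - 1))
        ≤ ∑ r ∈ Finset.Icc (-(n : ℤ) + 1) ((n : ℤ) - 1),
            ((((|r - p| : ℝ) + 1) ^ b + ((|r + q| : ℝ) + 1) ^ b) / 2) := by
          apply Finset.sum_le_sum
          intro r _
          set u : ℝ := (|(r:ℝ) - (p:ℝ)| : ℝ) + 1 with hudef
          set v : ℝ := (|(r:ℝ) + (q:ℝ)| : ℝ) + 1 with hvdef
          have hu : 0 < u := by rw [hudef]; positivity
          have hv : 0 < v := by rw [hvdef]; positivity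
          have e1 : u ^ b = u ^ (dx + dε - 1) * u ^ (dx + dε - 1) := by
            rw [← Real.rpow_add hu]; congr 1; rw [hbdef]; ring
          have e2 : v ^ b = v ^ (dx + dε - 1) * v ^ (dx + dε - 1) := by
            rw [← Real.rpow_add hv]; congr 1; rw [hbdef]; ring
          nlinarith [sq_nonneg (u ^ (dx + dε - 1) - v ^ (dx + dε - 1))]
      _ = ((∑ r ∈ Finset.Icc (-(n : ℤ) + 1) ((n : ℤ) - 1), ((|r - p| : ℝ) + 1) ^ b)
            + ∑ r ∈ Finset.Icc (-(n : ℤ) + 1) ((n : ℤ) - 1), ((|r + q| : ℝ) + 1) ^ b) / 2 := by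
          rw [← Finset.sum_add_distrib, Finset.sum_div]
      _ ≤ (S2n + S2n) / 2 := by
          rw [hS2ndef]
          have h3 := add_le_add h1 h2
          linarith
      _ = S2n := by ring
      _ ≤ B := by rw [hBdef]; exact hS2n
  -- assemble
  have hwq : ∀ q : ℤ, (0:ℝ) ≤ ((|q| : ℝ) + 1) ^ b := by intro q; positivity
  have hqsum : ∀ p ∈ Finset.Icc (-(M : ℤ)) (M : ℤ),
      (∑ q ∈ Finset.Icc (-(M : ℤ)) (M : ℤ), ((|q| : ℝ) + 1) ^ b *
          ∑ r ∈ Finset.Icc (-(n : ℤ) + 1) ((n : ℤ) - 1),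
            ((|r - p| : ℝ) + 1) ^ (dx + dε - 1) * ((|r + q| : ℝ) + 1) ^ (dx + dε - 1))
        ≤ (K * (M:ℝ) ^ (b+1)) * B := by
    intro p hp
    calc (∑ q ∈ Finset.Icc (-(M : ℤ)) (M : ℤ), ((|q| : ℝ) + 1) ^ b *
            ∑ r ∈ Finset.Icc (-(n : ℤ) + 1) ((n : ℤ) - 1),
              ((|r - p| : ℝ) + 1) ^ (dx + dε - 1) * ((|r + q| : ℝ) + 1) ^ (dx + dε - 1))
        ≤ ∑ q ∈ Finset.Icc (-(M : ℤ)) (M : ℤ), ((|q| : ℝ) + 1) ^ b * B := by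
          apply Finset.sum_le_sum
          intro q hq
          exact mul_le_mul_of_nonneg_left (hinner p hp q hq) (hwq q)
      _ = (∑ q ∈ Finset.Icc (-(M : ℤ)) (M : ℤ), ((|q| : ℝ) + 1) ^ b) * B :=
          (Finset.sum_mul _ _ _).symm
      _ ≤ (K * (M:ℝ) ^ (b+1)) * B := mul_le_mul_of_nonneg_right hSM hB
  have hpsum : (∑ p ∈ Finset.Icc (-(M : ℤ)) (M : ℤ), ((|p| : ℝ) + 1) ^ b *
        ∑ q ∈ Finset.Icc (-(M : ℤ)) (M : ℤ), ((|q| : ℝ) + 1) ^ b *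
          ∑ r ∈ Finset.Icc (-(n : ℤ) + 1) ((n : ℤ) - 1),
            ((|r - p| : ℝ) + 1) ^ (dx + dε - 1) * ((|r + q| : ℝ) + 1) ^ (dx + dε - 1))
      ≤ (K * (M:ℝ) ^ (b+1)) * ((K * (M:ℝ) ^ (b+1)) * B) := by
    calc (∑ p ∈ Finset.Icc (-(M : ℤ)) (M : ℤ), ((|p| : ℝ) + 1) ^ b *
          ∑ q ∈ Finset.Icc (-(M : ℤ)) (M : ℤ), ((|q| : ℝ) + 1) ^ b *
            ∑ r ∈ Finset.Icc (-(n : ℤ) + 1) ((n : ℤ) - 1),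
              ((|r - p| : ℝ) + 1) ^ (dx + dε - 1) * ((|r + q| : ℝ) + 1) ^ (dx + dε - 1))
        ≤ ∑ p ∈ Finset.Icc (-(M : ℤ)) (M : ℤ), ((|p| : ℝ) + 1) ^ b *
            ((K * (M:ℝ) ^ (b+1)) * B) := by
          apply Finset.sum_le_sum
          intro p hp
          exact mul_le_mul_of_nonneg_left (hqsum p hp) (hwq p)
      _ = (∑ p ∈ Finset.Icc (-(M : ℤ)) (M : ℤ), ((|p| : ℝ) + 1) ^ b) *
            ((K * (M:ℝ) ^ (b+1)) * B) := (Finset.sum_mul _ _ _).symm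
      _ ≤ (K * (M:ℝ) ^ (b+1)) * ((K * (M:ℝ) ^ (b+1)) * B) :=
          mul_le_mul_of_nonneg_right hSM (mul_nonneg hKM hB)
  have hMM : (M:ℝ) ^ (b+1) * (M:ℝ) ^ (b+1) = (M:ℝ) ^ (4 * dx + 4 * dε - 2) := by
    rw [← Real.rpow_add hMR]; congr 1; rw [hbdef]; ring
  have hnn : (n:ℝ)⁻¹ * (n:ℝ) ^ (b+1) = (n:ℝ) ^ (2 * dx + 2 * dε - 2) := by
    rw [show (n:ℝ)⁻¹ = (n:ℝ) ^ (-1:ℝ) from (Real.rpow_neg_one (n:ℝ)).symm,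
      ← Real.rpow_add hnR]
    congr 1; rw [hbdef]; ring
  calc (n : ℝ)⁻¹ *
          ∑ p ∈ Finset.Icc (-(M : ℤ)) (M : ℤ), ((|p| : ℝ) + 1) ^ b *
            ∑ q ∈ Finset.Icc (-(M : ℤ)) (M : ℤ), ((|q| : ℝ) + 1) ^ b *
              ∑ r ∈ Finset.Icc (-(n : ℤ) + 1) ((n : ℤ) - 1),
                ((|r - p| : ℝ) + 1) ^ (dx + dε - 1) * ((|r + q| : ℝ) + 1) ^ (dx + dε - 1)
      ≤ (n : ℝ)⁻¹ * ((K * (M:ℝ) ^ (b+1)) * ((K * (M:ℝ) ^ (b+1)) * B)) := by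
        apply mul_le_mul_of_nonneg_left hpsum (by positivity)
    _ = (K ^ 3 * 2 ^ (b+1)) * (((M:ℝ) ^ (b+1) * (M:ℝ) ^ (b+1)) * ((n:ℝ)⁻¹ * (n:ℝ) ^ (b+1))) := by
        rw [hBdef]; ring
    _ = (K ^ 3 * 2 ^ (b+1)) *
          ((M : ℝ) ^ (4 * dx + 4 * dε - 2) * (n : ℝ) ^ (2 * dx + 2 * dε - 2)) := by
        rw [hMM, hnn]
    _ ≤ (K ^ 3 * 2 ^ (b+1)) * ((M : ℝ) ^ (4 * dx + 4 * dε - 1) * (n : ℝ)⁻¹ +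
          (M : ℝ) ^ (4 * dx + 4 * dε - 2) * (n : ℝ) ^ (2 * dx + 2 * dε - 2)) := by
        apply mul_le_mul_of_nonneg_left (le_add_of_nonneg_left (by positivity))
        exact mul_nonneg (pow_nonneg hK.le 3) h2b.le
end
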